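/- arXiv:2102.07974 — 11 statements merged into one kernel-verified Lean document; each statement's English description precedes it below -/
import Mathlib

section
/- There exists δ ∈ (0, 1/2) such that the interval I = [δ, 1−δ] is invariant under f_{a,b} (i.e., f_{a,b}(I) ⊆ I) and globally attracting on (0,1): for every x ∈ (0,1) there exists n ∈ ℕ with f_{a,b}ⁿ(x) ∈ I. -/
theorem stmt4
    (Ψ Ψinv : ℝ → ℝ)
    (hΨcont : ContinuousOn Ψ (Set.Ioo 0 1))
    (hΨanti : StrictAntiOn Ψ (Set.Ioo 0 1))
    (hΨbij : Set.BijOn Ψ (Set.Ioo 0 1) Set.univ)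
    (hΨsym : ∀ x ∈ Set.Ioo (0:ℝ) 1, Ψ (1 - x) = -Ψ x)
    (hinv1 : ∀ x ∈ Set.Ioo (0:ℝ) 1, Ψinv (Ψ x) = x)
    (hinv2 : ∀ y : ℝ, Ψinv y ∈ Set.Ioo (0:ℝ) 1 ∧ Ψ (Ψinv y) = y)
    (a b : ℝ) (ha : 0 < a) (hb : b ∈ Set.Ioo (0:ℝ) 1)
    (f : ℝ → ℝ) (hf0 : f 0 = 0) (hf1 : f 1 = 1)
    (hf : ∀ x ∈ Set.Ioo (0:ℝ) 1, f x = Ψinv (Ψ x + a * (x - b))) :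
    ∃ δ ∈ Set.Ioo (0:ℝ) (1/2),
      Set.MapsTo f (Set.Icc δ (1 - δ)) (Set.Icc δ (1 - δ)) ∧
      ∀ x ∈ Set.Ioo (0:ℝ) 1, ∃ n : ℕ, f^[n] x ∈ Set.Icc δ (1 - δ) := by
  classical
  obtain ⟨hb0, hb1⟩ := hb
  -- monotonicity helpers
  have hle : ∀ x ∈ Set.Ioo (0:ℝ) 1, ∀ y ∈ Set.Ioo (0:ℝ) 1, x ≤ y → Ψ y ≤ Ψ x := by
    intro x hx y hy hxy
    rcases eq_or_lt_of_le hxy with h | h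
    · rw [h]
    · exact (hΨanti hx hy h).le
  have hlt' : ∀ x ∈ Set.Ioo (0:ℝ) 1, ∀ y ∈ Set.Ioo (0:ℝ) 1, Ψ y < Ψ x → x < y := by
    intro x hx y hy h
    by_contra hc
    exact absurd (hle y hy x hx (not_lt.mp hc)) (not_le.mpr h)
  have hle' : ∀ x ∈ Set.Ioo (0:ℝ) 1, ∀ y ∈ Set.Ioo (0:ℝ) 1, Ψ y ≤ Ψ x → x ≤ y := by
    intro x hx y hy h
    by_contra hc
    exact absurd (hΨanti hy hx (not_le.mp hc)) (not_lt.mpr h)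
  have hhalfS : (1/2 : ℝ) ∈ Set.Ioo (0:ℝ) 1 := by norm_num
  have hhalf : Ψ (1/2) = 0 := by
    have h := hΨsym (1/2) hhalfS
    rw [show (1:ℝ) - 1/2 = 1/2 by norm_num] at h
    linarith
  have fmaps : ∀ x ∈ Set.Ioo (0:ℝ) 1, f x ∈ Set.Ioo (0:ℝ) 1 := fun x hx => by
    rw [hf x hx]; exact (hinv2 _).1
  have fΨ : ∀ x ∈ Set.Ioo (0:ℝ) 1, Ψ (f x) = Ψ x + a * (x - b) := fun x hx => by
    rw [hf x hx]; exact (hinv2 _).2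
  set δ1 := min b (1 - b) with hδ1def
  have hδ1pos : 0 < δ1 := lt_min hb0 (by linarith)
  have hδ1b : δ1 ≤ b := min_le_left _ _
  have hδ1b' : δ1 ≤ 1 - b := min_le_right _ _
  have hδ1half : δ1 ≤ 1/2 := by linarith [hδ1b, hδ1b']
  have hδ1S : δ1 ∈ Set.Ioo (0:ℝ) 1 := ⟨hδ1pos, by linarith⟩
  have hΨδ1 : 0 ≤ Ψ δ1 := by
    have := hle δ1 hδ1S (1/2) hhalfS hδ1half
    linarith
  set δ := Ψinv (Ψ δ1 + a + 1) with hδdef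
  have hδS : δ ∈ Set.Ioo (0:ℝ) 1 := (hinv2 _).1
  have hΨδ : Ψ δ = Ψ δ1 + a + 1 := (hinv2 _).2
  have hδlt : δ < δ1 := hlt' δ hδS δ1 hδ1S (by linarith)
  have hΨδa : a + 1 ≤ Ψ δ := by linarith
  have hδpos : 0 < δ := hδS.1
  have hδhalf : δ < 1/2 := lt_of_lt_of_le hδlt hδ1half
  have h1δS : 1 - δ ∈ Set.Ioo (0:ℝ) 1 := ⟨by linarith [hδS.2], by linarith⟩
  have hΨ1δ : Ψ (1 - δ) = -Ψ δ := hΨsym δ hδS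
  have hΨ1δ1 : Ψ (1 - δ1) = -Ψ δ1 := hΨsym δ1 hδ1S
  have h1δ1S : 1 - δ1 ∈ Set.Ioo (0:ℝ) 1 := ⟨by linarith, by linarith⟩
  have hsub : Set.Icc δ (1 - δ) ⊆ Set.Ioo (0:ℝ) 1 := fun y hy =>
    ⟨lt_of_lt_of_le hδpos hy.1, lt_of_le_of_lt hy.2 (by linarith)⟩
  have hcrit : ∀ y ∈ Set.Ioo (0:ℝ) 1, Ψ y ≤ Ψ δ → -Ψ δ ≤ Ψ y → y ∈ Set.Icc δ (1 - δ) := by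
    intro y hy h1 h2
    refine ⟨hle' δ hδS y hy h1, hle' y hy (1 - δ) h1δS ?_⟩
    rw [hΨ1δ]; exact h2
  -- invariance
  have hmapsΨ : ∀ x ∈ Set.Icc δ (1 - δ),
      -Ψ δ ≤ Ψ x + a * (x - b) ∧ Ψ x + a * (x - b) ≤ Ψ δ := by
    intro x hx
    have hxS := hsub hx
    constructor
    · by_cases hc : x ≤ 1 - δ1
      · have h1 : Ψ (1 - δ1) ≤ Ψ x := hle x hxS (1 - δ1) h1δ1S hc
        rw [hΨ1δ1] at h1
        have h2 : -a < a * (x - b) := by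
          nlinarith [mul_pos ha (show (0:ℝ) < x - b + 1 by linarith [hx.1])]
        linarith
      · push_neg at hc
        have h1 : Ψ (1 - δ) ≤ Ψ x := hle x hxS (1 - δ) h1δS hx.2
        rw [hΨ1δ] at h1
        have h2 : 0 ≤ a * (x - b) := mul_nonneg ha.le (by linarith)
        linarith
    · by_cases hc : x ≤ δ1
      · have h1 : Ψ x ≤ Ψ δ := hle δ hδS x hxS hx.1
        have h2 : a * (x - b) ≤ 0 := by
          nlinarith [mul_nonneg ha.le (show (0:ℝ) ≤ b - x by linarith)]
        linarith
      · push_neg at hc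
        have h1 : Ψ x ≤ Ψ δ1 := hle δ1 hδ1S x hxS hc.le
        have h2 : a * (x - b) ≤ a := by
          nlinarith [mul_nonneg ha.le (show (0:ℝ) ≤ 1 - (x - b) by linarith [hx.2])]
        linarith
  have hmaps : Set.MapsTo f (Set.Icc δ (1 - δ)) (Set.Icc δ (1 - δ)) := by
    intro x hx
    have hxS := hsub hx
    have hfx := fmaps x hxS
    have hΨfx := fΨ x hxS
    obtain ⟨h1, h2⟩ := hmapsΨ x hx
    exact hcrit _ hfx (by linarith) (by linarith)
  have horb : ∀ x ∈ Set.Ioo (0:ℝ) 1, ∀ n : ℕ, f^[n] x ∈ Set.Ioo (0:ℝ) 1 := by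
    intro x hx n
    induction n with
    | zero => simpa using hx
    | succ n ih => rw [Function.iterate_succ_apply']; exact fmaps _ ih
  refine ⟨δ, ⟨hδpos, hδhalf⟩, hmaps, ?_⟩
  intro x hxS
  rcases lt_or_ge x δ with hx1 | hx1
  · -- x < δ : orbit moves up
    have hε : 0 < a * (b - δ) := mul_pos ha (by linarith)
    have key : ∃ n, δ ≤ f^[n] x := by
      by_contra hcon
      push_neg at hcon
      have hdec : ∀ n : ℕ, Ψ (f^[n] x) ≤ Ψ x - n * (a * (b - δ)) := by
        intro n
        induction n with
        | zero => simp
        | succ n ih =>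
          have hnS := horb x hxS n
          rw [Function.iterate_succ_apply', fΨ _ hnS]
          have h1 : a * ((f^[n] x) - b) ≤ a * (δ - b) := by
            nlinarith [mul_nonneg ha.le (show (0:ℝ) ≤ δ - f^[n] x by linarith [hcon n])]
          have h2 : a * (δ - b) = -(a * (b - δ)) := by ring
          push_cast
          linarith
      obtain ⟨n, hn⟩ := exists_nat_gt ((Ψ x - Ψ δ) / (a * (b - δ)))
      have h2 : Ψ δ < Ψ (f^[n] x) := hΨanti (horb x hxS n) hδS (hcon n)
      have h3 := hdec n
      rw [div_lt_iff₀ hε] at hn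
      linarith
    obtain ⟨n, hn, hmin⟩ : ∃ n, δ ≤ f^[n] x ∧ ∀ m < n, ¬ δ ≤ f^[m] x :=
      ⟨Nat.find key, Nat.find_spec key, fun m hm => Nat.find_min key hm⟩
    have hn0 : n ≠ 0 := by
      intro h
      rw [h] at hn
      simp at hn
      linarith
    obtain ⟨m, hm⟩ := Nat.exists_eq_succ_of_ne_zero hn0
    have hmlt : f^[m] x < δ := not_le.mp (hmin m (by omega))
    have hmS := horb x hxS m
    have hΨm : Ψ δ < Ψ (f^[m] x) := hΨanti hmS hδS hmlt
    have hstep : Ψ (f^[n] x) = Ψ (f^[m] x) + a * ((f^[m] x) - b) := by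
      rw [hm, Function.iterate_succ_apply']
      exact fΨ _ hmS
    have h5 : -a < a * (f^[m] x - b) := by
      have h6 := mul_pos ha (show (0:ℝ) < f^[m] x - b + 1 by linarith [hmS.1])
      have h7 : a * (f^[m] x - b + 1) = a * (f^[m] x - b) + a := by ring
      linarith
    have hlow : Ψ (1 - δ) ≤ Ψ (f^[n] x) := by
      rw [hΨ1δ]; linarith
    have hup : f^[n] x ≤ 1 - δ := hle' _ (horb x hxS n) (1 - δ) h1δS hlow
    exact ⟨n, hn, hup⟩
  rcases le_or_gt x (1 - δ) with hx2 | hx2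
  · exact ⟨0, by simpa using Set.mem_Icc.mpr ⟨hx1, hx2⟩⟩
  · -- x > 1 - δ : orbit moves down
    have hε : 0 < a * (1 - δ - b) := mul_pos ha (by linarith)
    have key : ∃ n, f^[n] x ≤ 1 - δ := by
      by_contra hcon
      push_neg at hcon
      have hinc : ∀ n : ℕ, Ψ x + n * (a * (1 - δ - b)) ≤ Ψ (f^[n] x) := by
        intro n
        induction n with
        | zero => simp
        | succ n ih =>
          have hnS := horb x hxS n
          rw [Function.iterate_succ_apply', fΨ _ hnS]
          have h1 : a * (1 - δ - b) ≤ a * ((f^[n] x) - b) := by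
            nlinarith [mul_nonneg ha.le
              (show (0:ℝ) ≤ f^[n] x - (1 - δ) by linarith [hcon n])]
          push_cast
          linarith
      obtain ⟨n, hn⟩ := exists_nat_gt ((-Ψ δ - Ψ x) / (a * (1 - δ - b)))
      have h2 : Ψ (f^[n] x) < Ψ (1 - δ) := hΨanti h1δS (horb x hxS n) (hcon n)
      rw [hΨ1δ] at h2
      rw [div_lt_iff₀ hε] at hn
      linarith [hinc n]
    obtain ⟨n, hn, hmin⟩ : ∃ n, f^[n] x ≤ 1 - δ ∧ ∀ m < n, ¬ f^[m] x ≤ 1 - δ :=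
      ⟨Nat.find key, Nat.find_spec key, fun m hm => Nat.find_min key hm⟩
    have hn0 : n ≠ 0 := by
      intro h
      rw [h] at hn
      simp at hn
      linarith
    obtain ⟨m, hm⟩ := Nat.exists_eq_succ_of_ne_zero hn0
    have hmgt : 1 - δ < f^[m] x := not_le.mp (hmin m (by omega))
    have hmS := horb x hxS m
    have hΨm : Ψ (f^[m] x) < Ψ (1 - δ) := hΨanti h1δS hmS hmgt
    rw [hΨ1δ] at hΨm
    have hstep : Ψ (f^[n] x) = Ψ (f^[m] x) + a * ((f^[m] x) - b) := by
      rw [hm, Function.iterate_succ_apply']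
      exact fΨ _ hmS
    have h5 : a * (f^[m] x - b) < a := by
      have h6 := mul_pos ha (show (0:ℝ) < 1 - (f^[m] x - b) by linarith [hmS.2])
      have h7 : a * (1 - (f^[m] x - b)) = a - a * (f^[m] x - b) := by ring
      linarith
    have hhigh : Ψ (f^[n] x) ≤ Ψ δ := by linarith
    have hlo : δ ≤ f^[n] x := hle' δ hδS _ (horb x hxS n) hhigh
    exact ⟨n, hlo, hn⟩
end

section
/- (Nash equilibrium is Cesàro attracting.) For every a > 0, b ∈ (0,1) and every x₀ ∈ (0,1), the time averages converge to the Nash equilibrium: lim_{n→∞} (1/n) ∑_{k=0}^{n−1} f_{a,b}ᵏ(x₀) = b. -/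
theorem stmt5
    (Ψ Ψinv : ℝ → ℝ)
    (hΨcont : ContinuousOn Ψ (Set.Ioo 0 1))
    (hΨanti : StrictAntiOn Ψ (Set.Ioo 0 1))
    (hΨbij : Set.BijOn Ψ (Set.Ioo 0 1) Set.univ)
    (hΨsym : ∀ x ∈ Set.Ioo (0:ℝ) 1, Ψ (1 - x) = -Ψ x)
    (hinv1 : ∀ x ∈ Set.Ioo (0:ℝ) 1, Ψinv (Ψ x) = x)
    (hinv2 : ∀ y : ℝ, Ψinv y ∈ Set.Ioo (0:ℝ) 1 ∧ Ψ (Ψinv y) = y)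
    (a b : ℝ) (ha : 0 < a) (hb : b ∈ Set.Ioo (0:ℝ) 1)
    (f : ℝ → ℝ) (hf0 : f 0 = 0) (hf1 : f 1 = 1)
    (hf : ∀ x ∈ Set.Ioo (0:ℝ) 1, f x = Ψinv (Ψ x + a * (x - b))) :
    ∀ x₀ ∈ Set.Ioo (0:ℝ) 1,
      Filter.Tendsto (fun n : ℕ => (∑ k ∈ Finset.range n, f^[k] x₀) / (n : ℝ))
        Filter.atTop (nhds b) := by
  intro x₀ hx₀
  set xs : ℕ → ℝ := fun k => f^[k] x₀ with hxs
  have hxmem : ∀ k, xs k ∈ Set.Ioo (0:ℝ) 1 := by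
    intro k; induction k with
    | zero => simpa [xs] using hx₀
    | succ k ih =>
      have h1 : xs (k+1) = f (xs k) := by
        simp [xs, Function.iterate_succ_apply']
      rw [h1, hf _ ih]
      exact (hinv2 _).1
  have hstep : ∀ k, Ψ (xs (k+1)) = Ψ (xs k) + a * (xs k - b) := by
    intro k
    have h1 : xs (k+1) = f (xs k) := by
      simp [xs, Function.iterate_succ_apply']
    rw [h1, hf _ (hxmem k)]
    exact (hinv2 _).2
  have hsum : ∀ n : ℕ, ∑ k ∈ Finset.range n, xs k
      = (n : ℝ) * b + (Ψ (xs n) - Ψ (xs 0)) / a := by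
    intro n; induction n with
    | zero => simp
    | succ n ih =>
      rw [Finset.sum_range_succ, ih, hstep n]
      push_cast
      field_simp
      ring
  have hb2 : (b/2) ∈ Set.Ioo (0:ℝ) 1 := ⟨by linarith [hb.1], by linarith [hb.2]⟩
  have hb2' : ((1+b)/2) ∈ Set.Ioo (0:ℝ) 1 := ⟨by linarith [hb.1], by linarith [hb.2]⟩
  -- upper bound
  have hub : ∀ n, Ψ (xs n) ≤ max (Ψ (xs 0)) (Ψ (b/2) + a) := by
    intro n; induction n with
    | zero => exact le_max_left _ _
    | succ n ih =>
      by_cases h : Ψ (xs n) ≤ Ψ (b/2)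
      · have hlt : a * (xs n - b) ≤ a := by nlinarith [(hxmem n).2, hb.1]
        have : Ψ (xs (n+1)) ≤ Ψ (b/2) + a := by rw [hstep n]; linarith
        exact le_trans this (le_max_right _ _)
      · push_neg at h
        have hxlt : xs n < b/2 := by
          by_contra hge; push_neg at hge
          rcases eq_or_lt_of_le hge with heq | hlt'
          · rw [heq] at h; exact lt_irrefl _ h
          · exact absurd (hΨanti hb2 (hxmem n) hlt') (by linarith)
        have : a * (xs n - b) < 0 :=
          mul_neg_of_pos_of_neg ha (by linarith [hb.1])
        rw [hstep n]; linarith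
  -- lower bound
  have hlb : ∀ n, min (Ψ (xs 0)) (Ψ ((1+b)/2) - a) ≤ Ψ (xs n) := by
    intro n; induction n with
    | zero => exact min_le_left _ _
    | succ n ih =>
      by_cases h : Ψ ((1+b)/2) ≤ Ψ (xs n)
      · have hlt : -a ≤ a * (xs n - b) := by nlinarith [(hxmem n).1, hb.2]
        have : Ψ ((1+b)/2) - a ≤ Ψ (xs (n+1)) := by rw [hstep n]; linarith
        exact le_trans (min_le_right _ _) this
      · push_neg at h
        have hxgt : (1+b)/2 < xs n := by
          by_contra hge; push_neg at hge
          rcases eq_or_lt_of_le hge with heq | hlt'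
          · rw [← heq] at h; exact lt_irrefl _ h
          · exact absurd (hΨanti (hxmem n) hb2' hlt') (by linarith)
        have : 0 < a * (xs n - b) :=
          mul_pos ha (by linarith [hb.2])
        rw [hstep n]; linarith
  -- bound on the drift term
  obtain ⟨C, hC0, hC⟩ : ∃ C, 0 ≤ C ∧ ∀ n, |Ψ (xs n) - Ψ (xs 0)| ≤ C := by
    refine ⟨(max (Ψ (xs 0)) (Ψ (b/2) + a) - min (Ψ (xs 0)) (Ψ ((1+b)/2) - a)), ?_, ?_⟩
    · have := hub 0; have := hlb 0; linarith
    · intro n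
      rw [abs_le]
      constructor
      · have h1 := hlb n
        have h2 := hub 0
        linarith
      · have h1 := hub n
        have h2 := hlb 0
        linarith
  have hdrift : Filter.Tendsto (fun n : ℕ => (Ψ (xs n) - Ψ (xs 0)) / (a * n))
      Filter.atTop (nhds 0) := by
    refine squeeze_zero_norm (fun n => ?_) (tendsto_const_div_atTop_nhds_zero_nat (C / a))
    rcases Nat.eq_zero_or_pos n with hn | hn
    · subst hn
      simp [div_nonneg hC0 ha.le]
    · have hpos : (0:ℝ) < a * n := by positivity
      rw [Real.norm_eq_abs, abs_div, abs_of_pos hpos, div_div]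
      gcongr
      exact hC n
  have heq : ∀ᶠ n : ℕ in Filter.atTop,
      b + (Ψ (xs n) - Ψ (xs 0)) / (a * n)
        = (∑ k ∈ Finset.range n, f^[k] x₀) / (n : ℝ) := by
    filter_upwards [Filter.eventually_ge_atTop 1] with n hn
    have hn' : (0:ℝ) < n := by exact_mod_cast hn
    have : (∑ k ∈ Finset.range n, f^[k] x₀) = ∑ k ∈ Finset.range n, xs k := rfl
    rw [this, hsum n]
    field_simp
  have : Filter.Tendsto (fun n : ℕ => b + (Ψ (xs n) - Ψ (xs 0)) / (a * n))
      Filter.atTop (nhds b) := by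
    have := (tendsto_const_nhds (x := b) (f := Filter.atTop (α := ℕ))).add hdrift
    simpa using this
  exact this.congr' heq
end

section
/- The center of mass of any periodic orbit of f_{a,b} contained in (0,1) equals b: if x₀ ∈ (0,1) and n ≥ 1 satisfy f_{a,b}ⁿ(x₀) = x₀, then (1/n) ∑_{k=0}^{n−1} f_{a,b}ᵏ(x₀) = b. -/
theorem stmt6
    (Ψ Ψinv : ℝ → ℝ)
    (hΨcont : ContinuousOn Ψ (Set.Ioo 0 1))
    (hΨanti : StrictAntiOn Ψ (Set.Ioo 0 1))
    (hΨbij : Set.BijOn Ψ (Set.Ioo 0 1) Set.univ)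
    (hΨsym : ∀ x ∈ Set.Ioo (0:ℝ) 1, Ψ (1 - x) = -Ψ x)
    (hinv1 : ∀ x ∈ Set.Ioo (0:ℝ) 1, Ψinv (Ψ x) = x)
    (hinv2 : ∀ y : ℝ, Ψinv y ∈ Set.Ioo (0:ℝ) 1 ∧ Ψ (Ψinv y) = y)
    (a b : ℝ) (ha : 0 < a) (hb : b ∈ Set.Ioo (0:ℝ) 1)
    (f : ℝ → ℝ) (hf0 : f 0 = 0) (hf1 : f 1 = 1)
    (hf : ∀ x ∈ Set.Ioo (0:ℝ) 1, f x = Ψinv (Ψ x + a * (x - b))) :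
    ∀ x₀ ∈ Set.Ioo (0:ℝ) 1, ∀ n : ℕ, 1 ≤ n → f^[n] x₀ = x₀ →
      (∑ k ∈ Finset.range n, f^[k] x₀) / (n : ℝ) = b := by
  intro x₀ hx₀ n hn hper
  have hmem : ∀ k, f^[k] x₀ ∈ Set.Ioo (0:ℝ) 1 := by
    intro k
    induction k with
    | zero => simpa using hx₀
    | succ k ih =>
      rw [Function.iterate_succ_apply', hf _ ih]
      exact (hinv2 _).1
  have hkey : ∀ m, Ψ (f^[m] x₀) = Ψ x₀ + a * ∑ k ∈ Finset.range m, (f^[k] x₀ - b) := by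
    intro m
    induction m with
    | zero => simp
    | succ m ih =>
      rw [Function.iterate_succ_apply', hf _ (hmem m), (hinv2 _).2,
        Finset.sum_range_succ, ih]
      ring
  have h0 := hkey n
  rw [hper] at h0
  have hsum : ∑ k ∈ Finset.range n, (f^[k] x₀ - b) = 0 := by
    have := h0
    nlinarith [this]
  rw [Finset.sum_sub_distrib, Finset.sum_const, Finset.card_range, nsmul_eq_mul] at hsum
  have hn' : (n : ℝ) ≠ 0 := Nat.cast_ne_zero.mpr (by omega)
  field_simp
  nlinarith [hsum]
end

section
/- For every Borel probability measure μ on [0,1] that is invariant under f_{a,b} (i.e., μ(f_{a,b}⁻¹(A)) = μ(A) for every Borel set A ⊆ [0,1]) and satisfies μ({0,1}) = 0, one has ∫_{[0,1]} x dμ(x) = b. -/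
open MeasureTheory Set Filter Topology

theorem stmt7
    (Ψ Ψinv : ℝ → ℝ)
    (hΨcont : ContinuousOn Ψ (Set.Ioo 0 1))
    (hΨanti : StrictAntiOn Ψ (Set.Ioo 0 1))
    (hΨbij : Set.BijOn Ψ (Set.Ioo 0 1) Set.univ)
    (hΨsym : ∀ x ∈ Set.Ioo (0:ℝ) 1, Ψ (1 - x) = -Ψ x)
    (hinv1 : ∀ x ∈ Set.Ioo (0:ℝ) 1, Ψinv (Ψ x) = x)
    (hinv2 : ∀ y : ℝ, Ψinv y ∈ Set.Ioo (0:ℝ) 1 ∧ Ψ (Ψinv y) = y)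
    (a b : ℝ) (ha : 0 < a) (hb : b ∈ Set.Ioo (0:ℝ) 1)
    (f : ℝ → ℝ) (hf0 : f 0 = 0) (hf1 : f 1 = 1)
    (hf : ∀ x ∈ Set.Ioo (0:ℝ) 1, f x = Ψinv (Ψ x + a * (x - b)))
    (μ : MeasureTheory.Measure ℝ) [MeasureTheory.IsProbabilityMeasure μ]
    (hsupp : μ (Set.Icc (0:ℝ) 1) = 1)
    (hinvmeas : ∀ A : Set ℝ, A ⊆ Set.Icc (0:ℝ) 1 → MeasurableSet A →
      μ (f ⁻¹' A ∩ Set.Icc (0:ℝ) 1) = μ A)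
    (hends : μ ({0, 1} : Set ℝ) = 0) :
    ∫ x in Set.Icc (0:ℝ) 1, x ∂μ = b := by
  have measI : MeasurableSet (Set.Ioo (0:ℝ) 1) := measurableSet_Ioo
  set ν : Measure ℝ := μ.restrict (Set.Ioo 0 1) with hν
  have h01sub : ({0,1} : Set ℝ) ⊆ Set.Icc (0:ℝ) 1 := by
    intro x hx
    rcases hx with h | h
    · simp [h]
    · simp only [Set.mem_singleton_iff] at h
      simp [h]
  have h01meas : MeasurableSet ({0,1} : Set ℝ) := by measurability
  have hμIoo : μ (Set.Ioo (0:ℝ) 1) = 1 := by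
    have h := measure_diff h01sub h01meas.nullMeasurableSet
      (by rw [hends]; exact ENNReal.zero_ne_top)
    rw [Set.Icc_diff_both] at h
    rw [h, hsupp, hends]; simp
  have hνuniv : ν Set.univ = 1 := by
    rw [hν, Measure.restrict_apply' measI, Set.univ_inter, hμIoo]
  have hae : ∀ᵐ x ∂ν, x ∈ Set.Ioo (0:ℝ) 1 := ae_restrict_mem measI
  have hfI : ∀ x ∈ Set.Ioo (0:ℝ) 1, f x ∈ Set.Ioo (0:ℝ) 1 := fun x hx => by
    rw [hf x hx]; exact (hinv2 _).1
  have hΨf : ∀ x ∈ Set.Ioo (0:ℝ) 1, Ψ (f x) = Ψ x + a * (x - b) := fun x hx => by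
    rw [hf x hx]; exact (hinv2 _).2
  have hΨinvAnti : Antitone Ψinv := by
    have hs : StrictAnti Ψinv := by
      intro y1 y2 hlt
      rcases lt_trichotomy (Ψinv y1) (Ψinv y2) with h | h | h
      · have h2 := hΨanti (hinv2 y1).1 (hinv2 y2).1 h
        rw [(hinv2 y1).2, (hinv2 y2).2] at h2
        exact absurd h2 (not_lt.mpr hlt.le)
      · have : y1 = y2 := by rw [← (hinv2 y1).2, ← (hinv2 y2).2, h]
        exact absurd this hlt.ne
      · exact h
    exact hs.antitone
  have hΨinvMeas : Measurable Ψinv := hΨinvAnti.measurable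
  have hΨae : AEMeasurable Ψ ν := hΨcont.aemeasurable measI
  have hgae : AEMeasurable (fun x => Ψ x + a * (x - b)) ν :=
    hΨae.add ((measurable_const.mul (measurable_id.sub measurable_const)).aemeasurable)
  have hfae : AEMeasurable f ν := by
    refine (hΨinvMeas.comp_aemeasurable hgae).congr ?_
    filter_upwards [hae] with x hx
    exact (hf x hx).symm
  -- invariance of ν under f
  have hmap : Measure.map f ν = ν := by
    refine Measure.ext fun A hA => ?_
    rw [Measure.map_apply_of_aemeasurable hfae hA, hν, Measure.restrict_apply' measI,
      Measure.restrict_apply' measI]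
    have h1 : f ⁻¹' A ∩ Set.Ioo 0 1 = f ⁻¹' (A ∩ Set.Ioo 0 1) ∩ Set.Ioo 0 1 := by
      ext x
      constructor
      · rintro ⟨hxA, hxI⟩; exact ⟨⟨hxA, hfI x hxI⟩, hxI⟩
      · rintro ⟨⟨hxA, _⟩, hxI⟩; exact ⟨hxA, hxI⟩
    rw [h1]
    have h2 : μ (f ⁻¹' (A ∩ Set.Ioo 0 1) ∩ Set.Ioo 0 1)
        = μ (f ⁻¹' (A ∩ Set.Ioo 0 1) ∩ Set.Icc 0 1) := by
      apply le_antisymm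
      · exact measure_mono (Set.inter_subset_inter_right _ Set.Ioo_subset_Icc_self)
      · calc μ (f ⁻¹' (A ∩ Set.Ioo 0 1) ∩ Set.Icc 0 1)
            ≤ μ ((f ⁻¹' (A ∩ Set.Ioo 0 1) ∩ Set.Ioo 0 1) ∪ ({0,1} : Set ℝ)) := by
              apply measure_mono
              rintro x ⟨hx1, hx2⟩
              rcases eq_or_lt_of_le hx2.1 with h0 | h0
              · right; left; exact h0.symm
              rcases eq_or_lt_of_le hx2.2 with h1 | h1
              · right; right; exact h1
              · exact Or.inl ⟨hx1, h0, h1⟩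
          _ ≤ μ (f ⁻¹' (A ∩ Set.Ioo 0 1) ∩ Set.Ioo 0 1) + μ ({0,1} : Set ℝ) :=
              measure_union_le _ _
          _ = μ (f ⁻¹' (A ∩ Set.Ioo 0 1) ∩ Set.Ioo 0 1) := by rw [hends, add_zero]
    rw [h2, hinvmeas (A ∩ Set.Ioo 0 1)
      (Set.Subset.trans Set.inter_subset_right Set.Ioo_subset_Icc_self)
      (hA.inter measI)]
  -- truncations
  set T : ℕ → ℝ → ℝ := fun N y => max (min y (N:ℝ)) (-(N:ℝ)) with hT
  have hTlip : ∀ N, LipschitzWith 1 (T N) := fun N =>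
    (LipschitzWith.id.min_const (N:ℝ)).max_const (-(N:ℝ))
  have hTeq : ∀ (N : ℕ) (y : ℝ), |y| ≤ (N:ℝ) → T N y = y := by
    intro N y hy
    rw [abs_le] at hy
    rw [hT]
    simp only
    rw [min_eq_left hy.2, max_eq_left hy.1]
  have hTbd : ∀ (N : ℕ) (y : ℝ), |T N y| ≤ (N:ℝ) := by
    intro N y
    rw [abs_le]
    constructor
    · exact le_max_right _ _
    · exact max_le (min_le_right _ _) (neg_le_self (Nat.cast_nonneg N))
  have hTdist : ∀ (N : ℕ) (u v : ℝ), |T N u - T N v| ≤ |u - v| := by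
    intro N u v
    have := (hTlip N).dist_le_mul u v
    rwa [Real.dist_eq, Real.dist_eq, NNReal.coe_one, one_mul] at this
  set F : ℕ → ℝ → ℝ := fun N x => T N (Ψ x + a * (x - b)) - T N (Ψ x) with hF
  have hTcont : ∀ N, Continuous (T N) := fun N => (hTlip N).continuous
  have hmeas1 : ∀ N, AEMeasurable (fun x => T N (Ψ x + a * (x - b))) ν := fun N =>
    (hTcont N).measurable.comp_aemeasurable hgae
  have hmeas2 : ∀ N, AEMeasurable (fun x => T N (Ψ x)) ν := fun N =>
    (hTcont N).measurable.comp_aemeasurable hΨae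
  have hFmeas : ∀ N, AEStronglyMeasurable (F N) ν := fun N =>
    ((hmeas1 N).sub (hmeas2 N)).aestronglyMeasurable
  have hFbound : ∀ N, ∀ᵐ x ∂ν, ‖F N x‖ ≤ a := by
    intro N
    filter_upwards [hae] with x hx
    rw [hF]
    simp only [Real.norm_eq_abs]
    calc |T N (Ψ x + a * (x - b)) - T N (Ψ x)| ≤ |(Ψ x + a * (x - b)) - Ψ x| :=
          hTdist N _ _
      _ = a * |x - b| := by rw [add_sub_cancel_left, abs_mul, abs_of_pos ha]
      _ ≤ a * 1 := by
          apply mul_le_mul_of_nonneg_left _ ha.le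
          rw [abs_le]
          constructor
          · nlinarith [hx.1, hx.2, hb.1, hb.2]
          · nlinarith [hx.1, hx.2, hb.1, hb.2]
      _ = a := mul_one a
  have hFlim : ∀ᵐ x ∂ν, Tendsto (fun N => F N x) atTop (𝓝 (a * (x - b))) := by
    filter_upwards [hae] with x _
    apply tendsto_nhds_of_eventually_eq
    obtain ⟨N0, hN0⟩ := exists_nat_ge (max |Ψ x + a * (x - b)| |Ψ x|)
    filter_upwards [eventually_ge_atTop N0] with N hN
    have hNN : (N0 : ℝ) ≤ (N : ℝ) := Nat.cast_le.mpr hN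
    rw [hF]
    simp only
    rw [hTeq N _ (le_trans (le_trans (le_max_left _ _) hN0) hNN),
      hTeq N _ (le_trans (le_trans (le_max_right _ _) hN0) hNN)]
    ring
  have hint1 : ∀ N, Integrable (fun x => T N (Ψ x + a * (x - b))) ν := fun N =>
    (integrable_const ((N:ℝ))).mono' (hmeas1 N).aestronglyMeasurable
      (ae_of_all _ fun x => by rw [Real.norm_eq_abs]; exact hTbd N _)
  have hint2 : ∀ N, Integrable (fun x => T N (Ψ x)) ν := fun N =>
    (integrable_const ((N:ℝ))).mono' (hmeas2 N).aestronglyMeasurable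
      (ae_of_all _ fun x => by rw [Real.norm_eq_abs]; exact hTbd N _)
  have hFzero : ∀ N, ∫ x, F N x ∂ν = 0 := by
    intro N
    rw [hF]
    simp only
    rw [integral_sub (hint1 N) (hint2 N)]
    have hc : ∫ x, T N (Ψ x + a * (x - b)) ∂ν = ∫ x, T N (Ψ (f x)) ∂ν := by
      apply integral_congr_ae
      filter_upwards [hae] with x hx
      rw [hΨf x hx]
    have hm : AEStronglyMeasurable (fun y => T N (Ψ y)) (Measure.map f ν) := by
      rw [hmap]; exact (hmeas2 N).aestronglyMeasurable
    have hmapint : ∫ x, T N (Ψ (f x)) ∂ν = ∫ y, T N (Ψ y) ∂(Measure.map f ν) :=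
      (integral_map hfae hm).symm
    rw [hc, hmapint, hmap, sub_self]
  have hdct := MeasureTheory.tendsto_integral_of_dominated_convergence (fun _ => a)
    hFmeas (integrable_const a) hFbound hFlim
  simp only [hFzero] at hdct
  have hzero : ∫ x, a * (x - b) ∂ν = 0 :=
    tendsto_nhds_unique hdct tendsto_const_nhds
  have hxint : Integrable (fun x => x) ν := by
    refine (integrable_const (1:ℝ)).mono' aestronglyMeasurable_id ?_
    filter_upwards [hae] with x hx
    rw [Real.norm_eq_abs, abs_le]
    exact ⟨by linarith [hx.1], by linarith [hx.2]⟩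
  have hsplit : ∫ x, a * (x - b) ∂ν = a * ((∫ x, x ∂ν) - b) := by
    rw [integral_const_mul]
    congr 1
    rw [integral_sub hxint (integrable_const b), integral_const, measureReal_def, hνuniv]
    simp
  rw [hsplit] at hzero
  have hxb : ∫ x, x ∂ν = b := by
    have := mul_eq_zero.mp hzero
    rcases this with h | h
    · exact absurd h ha.ne'
    · linarith [sub_eq_zero.mp h]
  have hrestr : μ.restrict (Set.Icc (0:ℝ) 1) = ν := by
    rw [hν]
    apply Measure.restrict_congr_set
    have h1 : μ (Set.Icc (0:ℝ) 1 \ Set.Ioo 0 1) = 0 := by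
      rw [Set.Icc_diff_Ioo_same (by norm_num : (0:ℝ) ≤ 1)]; exact hends
    have h2 : μ (Set.Ioo (0:ℝ) 1 \ Set.Icc 0 1) = 0 := by
      rw [Set.diff_eq_empty.mpr Set.Ioo_subset_Icc_self]; simp
    exact MeasureTheory.ae_eq_set.mpr ⟨h1, h2⟩
  rw [show (∫ x in Set.Icc (0:ℝ) 1, x ∂μ) = ∫ x, x ∂ν by rw [hrestr]]
  exact hxb
end

section
/- The map f_{a,b} is differentiable at its interior fixed point b with f′_{a,b}(b) = (Ψ′(b) + a)/Ψ′(b). Consequently, |f′_{a,b}(b)| < 1 if and only if 0 < a < −2Ψ′(b); i.e., the Nash equilibrium b is a (locally) attracting fixed point precisely when a ∈ (0, −2Ψ′(b)), and |f′_{a,b}(b)| > 1 when a > −2Ψ′(b). -/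
theorem stmt9
    (Ψ Ψinv : ℝ → ℝ)
    (hΨcont : ContinuousOn Ψ (Set.Ioo 0 1))
    (hΨanti : StrictAntiOn Ψ (Set.Ioo 0 1))
    (hΨbij : Set.BijOn Ψ (Set.Ioo 0 1) Set.univ)
    (hΨsym : ∀ x ∈ Set.Ioo (0:ℝ) 1, Ψ (1 - x) = -Ψ x)
    (hinv1 : ∀ x ∈ Set.Ioo (0:ℝ) 1, Ψinv (Ψ x) = x)
    (hinv2 : ∀ y : ℝ, Ψinv y ∈ Set.Ioo (0:ℝ) 1 ∧ Ψ (Ψinv y) = y)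
    (hΨdiff : ∀ x ∈ Set.Ioo (0:ℝ) 1, DifferentiableAt ℝ Ψ x)
    (hΨderivCont : ContinuousOn (deriv Ψ) (Set.Ioo (0:ℝ) 1))
    (hΨderivNeg : ∀ x ∈ Set.Ioo (0:ℝ) 1, deriv Ψ x < 0)
    (a b : ℝ) (ha : 0 < a) (hb : b ∈ Set.Ioo (0:ℝ) 1)
    (f : ℝ → ℝ) (hf0 : f 0 = 0) (hf1 : f 1 = 1)
    (hf : ∀ x ∈ Set.Ioo (0:ℝ) 1, f x = Ψinv (Ψ x + a * (x - b))) :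
    HasDerivAt f ((deriv Ψ b + a) / deriv Ψ b) b ∧
    (|(deriv Ψ b + a) / deriv Ψ b| < 1 ↔ (0 < a ∧ a < -2 * deriv Ψ b)) ∧
    (-2 * deriv Ψ b < a → 1 < |(deriv Ψ b + a) / deriv Ψ b|) := by
  set d := deriv Ψ b with hd
  have hdneg : d < 0 := hΨderivNeg b hb
  have hdne : d ≠ 0 := ne_of_lt hdneg
  -- Ψinv is strictly antitone
  have hanti : StrictAnti Ψinv := by
    intro y1 y2 hy
    rcases lt_trichotomy (Ψinv y2) (Ψinv y1) with h | h | h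
    · exact h
    · exfalso
      have : y2 = y1 := by rw [← (hinv2 y2).2, h, (hinv2 y1).2]
      exact absurd this (ne_of_gt hy)
    · exfalso
      have := hΨanti (hinv2 y1).1 (hinv2 y2).1 h
      rw [(hinv2 y1).2, (hinv2 y2).2] at this
      exact absurd hy (not_lt.2 this.le)
  -- range of Ψinv is Ioo 0 1
  have hrange : Set.range Ψinv = Set.Ioo (0:ℝ) 1 := by
    apply Set.Subset.antisymm
    · rintro _ ⟨y, rfl⟩; exact (hinv2 y).1
    · intro x hx; exact ⟨Ψ x, hinv1 x hx⟩
  -- continuity of Ψinv everywhere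
  have hcont : ∀ y : ℝ, ContinuousAt Ψinv y := by
    intro y
    set g : ℝ → ℝ := fun t => Ψinv (-t) with hg
    have hgmono : StrictMonoOn g Set.univ := by
      intro t1 _ t2 _ h
      exact hanti (neg_lt_neg h)
    have hgy : ContinuousAt g (-y) := by
      apply hgmono.continuousAt_of_image_mem_nhds (Filter.univ_mem)
      rw [Set.image_univ]
      have : Set.range g = Set.Ioo (0:ℝ) 1 := by
        rw [← hrange]
        exact Set.Subset.antisymm (Set.range_comp_subset_range _ _)
          (by rintro _ ⟨t, rfl⟩; exact ⟨-t, by simp [hg]⟩)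
      rw [this]
      exact isOpen_Ioo.mem_nhds (hinv2 (-(-y))).1
    have : Ψinv = g ∘ (fun t => -t) := by funext t; simp [hg]
    rw [this]
    exact hgy.comp (by simpa using (continuous_neg.continuousAt (x := y)))
  -- derivative of Ψinv at Ψ b
  have hΨb : HasDerivAt Ψ d b := (hΨdiff b hb).hasDerivAt
  have hΨb' : HasDerivAt Ψ d (Ψinv (Ψ b)) := by rwa [hinv1 b hb]
  have hinvderiv : HasDerivAt Ψinv d⁻¹ (Ψ b) :=
    HasDerivAt.of_local_left_inverse (hcont (Ψ b)) hΨb' hdne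
      (Filter.Eventually.of_forall fun y => (hinv2 y).2)
  -- the inner affine function
  have hgaff : HasDerivAt (fun x => Ψ x + a * (x - b)) (d + a) b := by
    have h1 : HasDerivAt (fun x : ℝ => a * (x - b)) a b := by
      simpa using ((hasDerivAt_id b).sub_const b).const_mul a
    exact hΨb.add h1
  have hgb : (fun x => Ψ x + a * (x - b)) b = Ψ b := by simp
  have hcomp : HasDerivAt (fun x => Ψinv (Ψ x + a * (x - b))) (d⁻¹ * (d + a)) b := by
    have := (hgb ▸ hinvderiv).comp b hgaff
    exact this
  have heq : f =ᶠ[nhds b] fun x => Ψinv (Ψ x + a * (x - b)) := by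
    filter_upwards [isOpen_Ioo.mem_nhds hb] with x hx
    exact hf x hx
  have hderiv : HasDerivAt f ((d + a) / d) b := by
    have : d⁻¹ * (d + a) = (d + a) / d := by field_simp
    exact (this ▸ hcomp).congr_of_eventuallyEq heq
  refine ⟨hderiv, ?_, ?_⟩
  · rw [abs_lt]
    constructor
    · rintro ⟨h1, h2⟩
      rw [lt_div_iff_of_neg hdneg] at h1
      rw [div_lt_iff_of_neg hdneg] at h2
      constructor <;> linarith
    · rintro ⟨h1, h2⟩
      constructor
      · rw [lt_div_iff_of_neg hdneg]; linarith
      · rw [div_lt_iff_of_neg hdneg]; linarith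
  · intro h
    have : (d + a) / d < -1 := by
      rw [div_lt_iff_of_neg hdneg]; linarith
    rw [abs_of_neg (by linarith : (d+a)/d < 0)]
    linarith
end

section
/- Assume Ψ‴ < 0 on (0,1) and 0 < a < −2Ψ′(b). Then f_{a,b} has no periodic orbit of period 2 in (0,1): every x ∈ (0,1) with f_{a,b}(f_{a,b}(x)) = x satisfies f_{a,b}(x) = x. -/
theorem stmt10
    (Ψ Ψinv : ℝ → ℝ)
    (hΨcont : ContinuousOn Ψ (Set.Ioo 0 1))
    (hΨanti : StrictAntiOn Ψ (Set.Ioo 0 1))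
    (hΨbij : Set.BijOn Ψ (Set.Ioo 0 1) Set.univ)
    (hΨsym : ∀ x ∈ Set.Ioo (0:ℝ) 1, Ψ (1 - x) = -Ψ x)
    (hinv1 : ∀ x ∈ Set.Ioo (0:ℝ) 1, Ψinv (Ψ x) = x)
    (hinv2 : ∀ y : ℝ, Ψinv y ∈ Set.Ioo (0:ℝ) 1 ∧ Ψ (Ψinv y) = y)
    (hΨd1 : ∀ x ∈ Set.Ioo (0:ℝ) 1, DifferentiableAt ℝ Ψ x)
    (hΨd2 : ∀ x ∈ Set.Ioo (0:ℝ) 1, DifferentiableAt ℝ (deriv Ψ) x)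
    (hΨd3 : ∀ x ∈ Set.Ioo (0:ℝ) 1, DifferentiableAt ℝ (deriv (deriv Ψ)) x)
    (hΨderivNeg : ∀ x ∈ Set.Ioo (0:ℝ) 1, deriv Ψ x < 0)
    (hΨd3neg : ∀ x ∈ Set.Ioo (0:ℝ) 1, deriv (deriv (deriv Ψ)) x < 0)
    (a b : ℝ) (ha : 0 < a) (hb : b ∈ Set.Ioo (0:ℝ) 1)
    (hattr : a < -2 * deriv Ψ b)
    (f : ℝ → ℝ) (hf0 : f 0 = 0) (hf1 : f 1 = 1)
    (hf : ∀ x ∈ Set.Ioo (0:ℝ) 1, f x = Ψinv (Ψ x + a * (x - b))) :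
    ∀ x ∈ Set.Ioo (0:ℝ) 1, f (f x) = x → f x = x := by
  obtain ⟨hb0, hb1⟩ := hb
  set L : ℝ := max 0 (2*b - 1) with hLdef
  set U : ℝ := min 1 (2*b) with hUdef
  have hLb : L < b := by apply max_lt <;> linarith
  have hbU : b < U := by apply lt_min <;> linarith
  have hbI : b ∈ Set.Ioo L U := ⟨hLb, hbU⟩
  have hIsub : Set.Ioo L U ⊆ Set.Ioo (0:ℝ) 1 := by
    intro z hz
    exact ⟨lt_of_le_of_lt (le_max_left 0 _) hz.1, lt_of_lt_of_le hz.2 (min_le_left 1 _)⟩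
  have hrefl : ∀ z ∈ Set.Ioo L U, (2*b - z) ∈ Set.Ioo L U := by
    intro z hz
    obtain ⟨hz1, hz2⟩ := hz
    constructor
    · apply max_lt
      · linarith [min_le_right 1 (2*b)]
      · linarith [min_le_left 1 (2*b)]
    · apply lt_min
      · linarith [le_max_right 0 (2*b-1)]
      · linarith [le_max_left 0 (2*b-1)]
  -- generic derivative of reflected composition
  have key : ∀ (F : ℝ → ℝ), (∀ z ∈ Set.Ioo (0:ℝ) 1, DifferentiableAt ℝ F z) →
      ∀ z ∈ Set.Ioo L U, HasDerivAt (fun y => F (2*b - y)) (-(deriv F (2*b - z))) z := by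
    intro F hF z hz
    have h1 : HasDerivAt (fun y : ℝ => 2*b - y) (-1) z := by
      simpa using (hasDerivAt_id z).const_sub (2*b)
    have h2 := (hF _ (hIsub (hrefl z hz))).hasDerivAt
    have h3 := HasDerivAt.comp z h2 h1
    rw [mul_neg_one] at h3; exact h3
  set g : ℝ → ℝ := fun z => Ψ (2*b - z) - Ψ z - a*(z - b) with hgdef
  set h : ℝ → ℝ := fun z => -(deriv Ψ (2*b - z)) - deriv Ψ z with hhdef
  set p : ℝ → ℝ := fun z => deriv (deriv Ψ) (2*b - z) - deriv (deriv Ψ) z with hpdef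
  have hg' : ∀ z ∈ Set.Ioo L U, HasDerivAt g (h z - a) z := by
    intro z hz
    have h1 := (key Ψ hΨd1 z hz).sub (hΨd1 z (hIsub hz)).hasDerivAt
    have h2 : HasDerivAt (fun y : ℝ => a * (y - b)) a z := by
      simpa using ((hasDerivAt_id z).sub_const b).const_mul a
    exact h1.sub h2
  have hh' : ∀ z ∈ Set.Ioo L U, HasDerivAt h (p z) z := by
    intro z hz
    have h1 := ((key (deriv Ψ) hΨd2 z hz).neg).sub (hΨd2 z (hIsub hz)).hasDerivAt
    have : p z = -(-(deriv (deriv Ψ) (2*b - z))) - deriv (deriv Ψ) z := by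
      simp [hpdef]
    rw [this]
    exact h1
  have hp' : ∀ z ∈ Set.Ioo L U,
      HasDerivAt p (-(deriv (deriv (deriv Ψ)) (2*b - z)) - deriv (deriv (deriv Ψ)) z) z := by
    intro z hz
    exact (key (deriv (deriv Ψ)) hΨd3 z hz).sub (hΨd3 z (hIsub hz)).hasDerivAt
  have hpb : p b = 0 := by
    have : 2*b - b = b := by ring
    simp [hpdef, this]
  have hpmono : StrictMonoOn p (Set.Ioo L U) := by
    apply strictMonoOn_of_deriv_pos (convex_Ioo L U)
    · intro z hz
      exact ((hp' z hz).differentiableAt).continuousAt.continuousWithinAt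
    · intro z hz
      rw [interior_Ioo] at hz
      rw [(hp' z hz).deriv]
      have h1 := hΨd3neg _ (hIsub (hrefl z hz))
      have h2 := hΨd3neg _ (hIsub hz)
      linarith
  -- h attains its minimum over Ioo L U at b
  have hmin : ∀ z ∈ Set.Ioo L U, h b ≤ h z := by
    intro z hz
    rcases lt_trichotomy z b with hzb | hzb | hzb
    · have hanti : StrictAntiOn h (Set.Ioc L b) := by
        apply strictAntiOn_of_deriv_neg (convex_Ioc L b)
        · intro w hw
          have hwI : w ∈ Set.Ioo L U := ⟨hw.1, lt_of_le_of_lt hw.2 hbU⟩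
          exact ((hh' w hwI).differentiableAt).continuousAt.continuousWithinAt
        · intro w hw
          rw [interior_Ioc] at hw
          have hwI : w ∈ Set.Ioo L U := ⟨hw.1, lt_trans hw.2 hbU⟩
          rw [(hh' w hwI).deriv]
          have := hpmono hwI hbI hw.2
          linarith
      have := hanti ⟨hz.1, hzb.le⟩ ⟨hLb, le_refl b⟩ hzb
      linarith
    · rw [hzb]
    · have hmono : StrictMonoOn h (Set.Ico b U) := by
        apply strictMonoOn_of_deriv_pos (convex_Ico b U)
        · intro w hw
          have hwI : w ∈ Set.Ioo L U := ⟨lt_of_lt_of_le hLb hw.1, hw.2⟩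
          exact ((hh' w hwI).differentiableAt).continuousAt.continuousWithinAt
        · intro w hw
          rw [interior_Ico] at hw
          have hwI : w ∈ Set.Ioo L U := ⟨lt_trans hLb hw.1, hw.2⟩
          rw [(hh' w hwI).deriv]
          have := hpmono hbI hwI hw.1
          linarith
      have := hmono ⟨le_refl b, hbU⟩ ⟨hzb.le, hz.2⟩ hzb
      linarith
  have hhb : h b = -2 * deriv Ψ b := by
    have : 2*b - b = b := by ring
    simp [hhdef, this]; ring
  have hgmono : StrictMonoOn g (Set.Ioo L U) := by
    apply strictMonoOn_of_deriv_pos (convex_Ioo L U)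
    · intro z hz
      exact ((hg' z hz).differentiableAt).continuousAt.continuousWithinAt
    · intro z hz
      rw [interior_Ioo] at hz
      rw [(hg' z hz).deriv]
      have := hmin z hz
      rw [hhb] at this
      linarith
  have hgb : g b = 0 := by
    have : 2*b - b = b := by ring
    simp [hgdef, this]
  -- main argument
  intro x hx hfx
  have hyx : f x ∈ Set.Ioo (0:ℝ) 1 := by rw [hf x hx]; exact (hinv2 _).1
  set y := f x with hy
  have hΨy : Ψ y = Ψ x + a*(x-b) := by rw [hy, hf x hx]; exact (hinv2 _).2
  have hΨx : Ψ x = Ψ y + a*(y-b) := by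
    have hfy := hf y hyx
    rw [hfy] at hfx
    calc Ψ x = Ψ (Ψinv (Ψ y + a*(y-b))) := by rw [hfx]
    _ = Ψ y + a*(y-b) := (hinv2 _).2
  have hsum : y = 2*b - x := by
    have hz : a * (x + y - 2*b) = 0 := by linarith
    rcases mul_eq_zero.mp hz with h' | h'
    · linarith
    · linarith
  have hxI : x ∈ Set.Ioo L U := by
    constructor
    · apply max_lt
      · exact hx.1
      · have := hyx.2; rw [hsum] at this; linarith
    · apply lt_min
      · exact hx.2
      · have := hyx.1; rw [hsum] at this; linarith
  have hgx : g x = 0 := by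
    show Ψ (2*b - x) - Ψ x - a*(x - b) = 0
    rw [← hsum]
    linarith
  have hxb : x = b := hgmono.injOn hxI hbI (hgx.trans hgb.symm)
  rw [hsum, hxb]; ring
end

section
/- Assume Ψ‴ < 0 on (0,1) and that b is an attracting fixed point of f_{a,b}, i.e., 0 < a < −2Ψ′(b). Then the trajectories of all points of (0,1) converge to the Nash equilibrium: for every x ∈ (0,1), lim_{n→∞} f_{a,b}ⁿ(x) = b. -/
theorem stmt11
    (Ψ Ψinv : ℝ → ℝ)
    (hΨcont : ContinuousOn Ψ (Set.Ioo 0 1))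
    (hΨanti : StrictAntiOn Ψ (Set.Ioo 0 1))
    (hΨbij : Set.BijOn Ψ (Set.Ioo 0 1) Set.univ)
    (hΨsym : ∀ x ∈ Set.Ioo (0:ℝ) 1, Ψ (1 - x) = -Ψ x)
    (hinv1 : ∀ x ∈ Set.Ioo (0:ℝ) 1, Ψinv (Ψ x) = x)
    (hinv2 : ∀ y : ℝ, Ψinv y ∈ Set.Ioo (0:ℝ) 1 ∧ Ψ (Ψinv y) = y)
    (hΨd1 : ∀ x ∈ Set.Ioo (0:ℝ) 1, DifferentiableAt ℝ Ψ x)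
    (hΨd2 : ∀ x ∈ Set.Ioo (0:ℝ) 1, DifferentiableAt ℝ (deriv Ψ) x)
    (hΨd3 : ∀ x ∈ Set.Ioo (0:ℝ) 1, DifferentiableAt ℝ (deriv (deriv Ψ)) x)
    (hΨderivNeg : ∀ x ∈ Set.Ioo (0:ℝ) 1, deriv Ψ x < 0)
    (hΨd3neg : ∀ x ∈ Set.Ioo (0:ℝ) 1, deriv (deriv (deriv Ψ)) x < 0)
    (a b : ℝ) (ha : 0 < a) (hb : b ∈ Set.Ioo (0:ℝ) 1)
    (hattr : a < -2 * deriv Ψ b)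
    (f : ℝ → ℝ) (hf0 : f 0 = 0) (hf1 : f 1 = 1)
    (hf : ∀ x ∈ Set.Ioo (0:ℝ) 1, f x = Ψinv (Ψ x + a * (x - b))) :
    ∀ x ∈ Set.Ioo (0:ℝ) 1,
      Filter.Tendsto (fun n : ℕ => f^[n] x) Filter.atTop (nhds b) := by
  obtain ⟨hb0, hb1⟩ := hb
  -- basic facts about f
  have hfΨ : ∀ z ∈ Set.Ioo (0:ℝ) 1, Ψ (f z) = Ψ z + a * (z - b) := by
    intro z hz; rw [hf z hz, (hinv2 _).2]
  have hfmem : ∀ z ∈ Set.Ioo (0:ℝ) 1, f z ∈ Set.Ioo (0:ℝ) 1 := by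
    intro z hz; rw [hf z hz]; exact (hinv2 _).1
  have hcmp : ∀ u ∈ Set.Ioo (0:ℝ) 1, ∀ v ∈ Set.Ioo (0:ℝ) 1, Ψ u < Ψ v → v < u := by
    intro u hu v hv h
    rcases lt_trichotomy v u with h' | h' | h'
    · exact h'
    · exact absurd h (by rw [h']; exact lt_irrefl _)
    · exact absurd (hΨanti hu hv h') (not_lt.2 h.le)
  have hinvanti : ∀ y z : ℝ, y < z → Ψinv z < Ψinv y := by
    intro y z h
    rcases lt_trichotomy (Ψinv z) (Ψinv y) with h' | h' | h'
    · exact h'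
    · exfalso
      have hzy : z = y := by
        have h1 := (hinv2 z).2; have h2 := (hinv2 y).2
        rw [← h1, ← h2, h']
      exact absurd hzy h.ne'
    · exfalso
      have := hΨanti (hinv2 y).1 (hinv2 z).1 h'
      rw [(hinv2 y).2, (hinv2 z).2] at this
      exact absurd this (not_lt.2 h.le)
  -- strict concavity of deriv Ψ
  have hconc : StrictConcaveOn ℝ (Set.Ioo (0:ℝ) 1) (deriv Ψ) := by
    apply strictConcaveOn_of_deriv2_neg (convex_Ioo 0 1)
    · exact fun z hz => ((hΨd2 z hz).continuousAt).continuousWithinAt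
    · intro z hz
      rw [interior_Ioo] at hz
      show deriv (deriv (deriv Ψ)) z < 0
      exact hΨd3neg z hz
  have hmid : ∀ s : ℝ, 0 < s → 0 < b - s → b + s < 1 →
      deriv Ψ (b - s) + deriv Ψ (b + s) < 2 * deriv Ψ b := by
    intro s hs hs1 hs2
    have hm1 : b - s ∈ Set.Ioo (0:ℝ) 1 := ⟨hs1, by linarith⟩
    have hm2 : b + s ∈ Set.Ioo (0:ℝ) 1 := ⟨by linarith, hs2⟩
    have hne : b - s ≠ b + s := by linarith
    have := hconc.2 hm1 hm2 hne (by norm_num : (0:ℝ) < 1/2) (by norm_num : (0:ℝ) < 1/2)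
      (by norm_num)
    have harg : (1/2 : ℝ) • (b - s) + (1/2 : ℝ) • (b + s) = b := by
      simp only [smul_eq_mul]; ring
    rw [harg] at this
    simp only [smul_eq_mul] at this
    linarith
  -- key inequality
  have hkey : ∀ t : ℝ, 0 < t → 0 < b - t → b + t < 1 →
      a * t < Ψ (b - t) - Ψ (b + t) := by
    intro t ht ht1 ht2
    set h : ℝ → ℝ := fun s => 2 * deriv Ψ b * s + Ψ (b - s) - Ψ (b + s) with hhdef
    have hmaps1 : ∀ s ∈ Set.Icc 0 t, b - s ∈ Set.Ioo (0:ℝ) 1 := by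
      intro s hs
      exact ⟨by linarith [hs.2], by linarith [hs.1]⟩
    have hmaps2 : ∀ s ∈ Set.Icc 0 t, b + s ∈ Set.Ioo (0:ℝ) 1 := by
      intro s hs
      exact ⟨by linarith [hs.1], by linarith [hs.2]⟩
    have hhc : ContinuousOn h (Set.Icc 0 t) := by
      apply ContinuousOn.sub
      apply ContinuousOn.add
      · exact (continuous_const.mul continuous_id).continuousOn
      · exact hΨcont.comp ((continuous_const.sub continuous_id).continuousOn) hmaps1
      · exact hΨcont.comp ((continuous_const.add continuous_id).continuousOn) hmaps2
    have hderiv : ∀ s ∈ Set.Ioo 0 t, HasDerivAt h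
        (2 * deriv Ψ b + (deriv Ψ (b - s) * (-1) - deriv Ψ (b + s) * 1)) s := by
      intro s hs
      have hm1 := hmaps1 s (Set.mem_Icc.2 ⟨hs.1.le, hs.2.le⟩)
      have hm2 := hmaps2 s (Set.mem_Icc.2 ⟨hs.1.le, hs.2.le⟩)
      have d1 : HasDerivAt (fun s : ℝ => b - s) (-1) s := by
        simpa using (hasDerivAt_id s).const_sub b
      have d2 : HasDerivAt (fun s : ℝ => b + s) 1 s := by
        simpa using (hasDerivAt_id s).const_add b
      have D1 : HasDerivAt (fun s : ℝ => Ψ (b - s)) (deriv Ψ (b - s) * (-1)) s :=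
        ((hΨd1 _ hm1).hasDerivAt).comp s d1
      have D2 : HasDerivAt (fun s : ℝ => Ψ (b + s)) (deriv Ψ (b + s) * 1) s :=
        ((hΨd1 _ hm2).hasDerivAt).comp s d2
      have D0 : HasDerivAt (fun s : ℝ => 2 * deriv Ψ b * s) (2 * deriv Ψ b) s := by
        simpa using (hasDerivAt_id s).const_mul (2 * deriv Ψ b)
      have := (D0.add D1).sub D2
      exact this.congr_deriv (by ring)
    have hmono : StrictMonoOn h (Set.Icc 0 t) := by
      apply strictMonoOn_of_deriv_pos (convex_Icc 0 t) hhc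
      intro s hs
      rw [interior_Icc] at hs
      rw [(hderiv s hs).deriv]
      have := hmid s hs.1 (by linarith [hs.2]) (by linarith [hs.2])
      linarith
    have h0 : h 0 = 0 := by simp [hhdef]
    have hht : 0 < h t := by
      have := hmono (Set.left_mem_Icc.2 ht.le) (Set.right_mem_Icc.2 ht.le) ht
      rw [h0] at this; exact this
    have hat : a * t < (-2 * deriv Ψ b) * t := by
      exact mul_lt_mul_of_pos_right hattr ht
    simp only [hhdef] at hht
    nlinarith
  -- fixed point
  have hfixb : f b = b := by
    have := hf b ⟨hb0, hb1⟩
    simp only [sub_self, mul_zero, add_zero] at this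
    rw [this, hinv1 b ⟨hb0, hb1⟩]
  -- contraction
  have hcontr : ∀ z ∈ Set.Ioo (0:ℝ) 1, z ≠ b → |f z - b| < |z - b| := by
    intro z hz hzb
    have hfz := hfmem z hz
    have hΨfz := hfΨ z hz
    rcases lt_or_gt_of_ne hzb with hlt | hgt
    · -- z < b
      have h1 : z < f z := by
        apply hcmp _ hfz _ hz
        rw [hΨfz]
        nlinarith
      have h2 : f z < 2 * b - z := by
        by_cases hcase : 2 * b - z < 1
        · have hk := hkey (b - z) (by linarith) (by linarith [hz.1]) (by linarith)
          apply hcmp _ ⟨by linarith [hz.1], hcase⟩ _ hfz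
          rw [hΨfz]
          have harg1 : b - (b - z) = z := by ring
          have harg2 : b + (b - z) = 2 * b - z := by ring
          rw [harg1, harg2] at hk
          nlinarith
        · linarith [hfz.2]
      rw [abs_of_neg (by linarith : z - b < 0), abs_lt]
      constructor <;> linarith
    · -- b < z
      have h1 : f z < z := by
        apply hcmp _ hz _ hfz
        rw [hΨfz]
        nlinarith
      have h2 : 2 * b - z < f z := by
        by_cases hcase : 0 < 2 * b - z
        · have hk := hkey (z - b) (by linarith) (by linarith) (by linarith [hz.2])
          apply hcmp _ hfz _ ⟨hcase, by linarith⟩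
          rw [hΨfz]
          have harg1 : b - (z - b) = 2 * b - z := by ring
          have harg2 : b + (z - b) = z := by ring
          rw [harg1, harg2] at hk
          nlinarith
        · linarith [hfz.1]
      rw [abs_of_pos (by linarith : 0 < z - b), abs_lt]
      constructor <;> linarith
  -- continuity of the inverse
  have hcinv : ∀ w : ℝ, ContinuousAt Ψinv w := by
    intro w
    have hx0 := (hinv2 w).1
    have hw : Ψ (Ψinv w) = w := (hinv2 w).2
    rw [ContinuousAt]
    apply tendsto_order.2
    constructor
    · intro c hc
      set x0 := Ψinv w with hx0def
      set p := max ((c + x0) / 2) (x0 / 2) with hpdef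
      have hp2 : p < x0 := max_lt (by linarith) (by linarith [hx0.1])
      have hpIoo : p ∈ Set.Ioo (0:ℝ) 1 :=
        ⟨lt_of_lt_of_le (by linarith [hx0.1]) (le_max_right _ _), lt_trans hp2 hx0.2⟩
      have hΨp : w < Ψ p := by
        have := hΨanti hpIoo hx0 hp2
        rw [hw] at this; exact this
      filter_upwards [Iio_mem_nhds hΨp] with z hz
      have h1 : Ψinv (Ψ p) < Ψinv z := hinvanti z (Ψ p) hz
      rw [hinv1 p hpIoo] at h1
      calc c < (c + x0) / 2 := by linarith
        _ ≤ p := le_max_left _ _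
        _ < Ψinv z := h1
    · intro c hc
      set x0 := Ψinv w with hx0def
      set q := min ((c + x0) / 2) ((x0 + 1) / 2) with hqdef
      have hq2 : x0 < q := lt_min (by linarith) (by linarith [hx0.2])
      have hqIoo : q ∈ Set.Ioo (0:ℝ) 1 :=
        ⟨lt_trans hx0.1 hq2, lt_of_le_of_lt (min_le_right _ _) (by linarith [hx0.2])⟩
      have hΨq : Ψ q < w := by
        have := hΨanti hx0 hqIoo hq2
        rw [hw] at this; exact this
      filter_upwards [Ioi_mem_nhds hΨq] with z hz
      have h1 : Ψinv z < Ψinv (Ψ q) := hinvanti (Ψ q) z hz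
      rw [hinv1 q hqIoo] at h1
      calc Ψinv z < q := h1
        _ ≤ (c + x0) / 2 := min_le_left _ _
        _ < c := by linarith
  -- continuity of f on the open interval
  have hfc : ∀ y ∈ Set.Ioo (0:ℝ) 1, ContinuousAt f y := by
    intro y hy
    have hyo : Set.Ioo (0:ℝ) 1 ∈ nhds y := isOpen_Ioo.mem_nhds hy
    have heq : (fun z => Ψinv (Ψ z + a * (z - b))) =ᶠ[nhds y] f := by
      filter_upwards [hyo] with z hz
      exact (hf z hz).symm
    apply ContinuousAt.congr _ heq
    apply (hcinv _).comp
    exact (hΨcont.continuousAt hyo).add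
      (continuousAt_const.mul ((continuousAt_id).sub continuousAt_const))
  -- main argument
  intro x hx
  set u : ℕ → ℝ := fun n => f^[n] x with hudef
  have husucc : ∀ n, u (n + 1) = f (u n) := fun n => Function.iterate_succ_apply' f n x
  have hmem : ∀ n, u n ∈ Set.Ioo (0:ℝ) 1 := by
    intro n
    induction n with
    | zero => simpa [hudef] using hx
    | succ n ih => rw [husucc]; exact hfmem _ ih
  set d : ℕ → ℝ := fun n => |u n - b| with hddef
  have hdsucc : ∀ n, d (n + 1) ≤ d n := by
    intro n
    by_cases hnb : u n = b
    · have hnb1 : u (n + 1) = b := by rw [husucc, hnb, hfixb]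
      simp [hddef, hnb1, hnb]
    · have : |u (n + 1) - b| < |u n - b| := by
        rw [husucc]; exact hcontr _ (hmem n) hnb
      exact le_of_lt this
  have hAnti : Antitone d := antitone_nat_of_succ_le hdsucc
  have hbdd : BddBelow (Set.range d) := ⟨0, by rintro _ ⟨n, rfl⟩; exact abs_nonneg _⟩
  set D := ⨅ n, d n with hDdef
  have htend : Filter.Tendsto d Filter.atTop (nhds D) := tendsto_atTop_ciInf hAnti hbdd
  have hDle : ∀ n, D ≤ d n := fun n => ciInf_le hbdd n
  have hD0 : 0 ≤ D := le_ciInf fun n => abs_nonneg _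
  rcases eq_or_lt_of_le hD0 with hDeq | hDpos
  · -- D = 0 : convergence
    rw [tendsto_iff_dist_tendsto_zero]
    show Filter.Tendsto (fun n => dist (u n) b) Filter.atTop (nhds 0)
    simp only [Real.dist_eq]
    rw [hDeq]
    exact htend
  · exfalso
    have hdgt : ∀ n, D < d n := by
      intro n
      rcases lt_or_eq_of_le (hDle n) with h | h
      · exact h
      · exfalso
        have hnb : u n ≠ b := by
          intro hcon
          have : d n = 0 := by simp [hddef, hcon]
          rw [← h] at this
          linarith
        have hlt : d (n + 1) < d n := by
          have : |u (n + 1) - b| < |u n - b| := by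
            rw [husucc]; exact hcontr _ (hmem n) hnb
          exact this
        have := hDle (n + 1)
        rw [← h] at hlt
        linarith
    have hne : ∀ n, u n ≠ b := by
      intro n hcon
      have h1 := hdgt n
      have : d n = 0 := by simp [hddef, hcon]
      linarith
    have hubdd : ∀ n, u n ∈ Set.Icc (0:ℝ) 1 := fun n => ⟨(hmem n).1.le, (hmem n).2.le⟩
    obtain ⟨y, hyc, φ, hφ, hconv⟩ :=
      tendsto_subseq_of_bounded (Metric.isBounded_Icc (0:ℝ) 1) hubdd
    rw [isClosed_Icc.closure_eq] at hyc
    have hconv' : Filter.Tendsto (fun k => u (φ k)) Filter.atTop (nhds y) := hconv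
    have habs : Filter.Tendsto (fun k => d (φ k)) Filter.atTop (nhds |y - b|) :=
      (hconv'.sub_const b).abs
    have hDsub : Filter.Tendsto (fun k => d (φ k)) Filter.atTop (nhds D) :=
      htend.comp hφ.tendsto_atTop
    have hyD : |y - b| = D := tendsto_nhds_unique habs hDsub
    have hy0 : y ≠ 0 := by
      intro h0
      have hDb : D = b := by
        rw [← hyD, h0]
        rw [abs_of_neg (by linarith : (0:ℝ) - b < 0)]
        ring
      have hugt : ∀ n, 2 * b < u n := by
        intro n
        have h1 := hdgt n
        rw [hDb] at h1
        rcases lt_abs.1 h1 with h | h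
        · linarith
        · linarith [(hmem n).1]
      have h2 : 2 * b ≤ y :=
        ge_of_tendsto hconv' (Filter.Eventually.of_forall fun k => (hugt (φ k)).le)
      rw [h0] at h2
      linarith
    have hy1 : y ≠ 1 := by
      intro h1
      have hDb : D = 1 - b := by
        rw [← hyD, h1, abs_of_pos (by linarith : (0:ℝ) < 1 - b)]
      have hult : ∀ n, u n < 2 * b - 1 := by
        intro n
        have hgt := hdgt n
        rw [hDb] at hgt
        rcases lt_abs.1 hgt with h | h
        · linarith [(hmem n).2]
        · linarith
      have h2 : y ≤ 2 * b - 1 :=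
        le_of_tendsto hconv' (Filter.Eventually.of_forall fun k => (hult (φ k)).le)
      rw [h1] at h2
      linarith
    have hyIoo : y ∈ Set.Ioo (0:ℝ) 1 :=
      ⟨lt_of_le_of_ne hyc.1 (Ne.symm hy0), lt_of_le_of_ne hyc.2 hy1⟩
    have hyb : y ≠ b := by
      intro h
      rw [h, sub_self, abs_zero] at hyD
      linarith
    have hconv2 : Filter.Tendsto (fun k => u (φ k + 1)) Filter.atTop (nhds (f y)) := by
      have h1 : Filter.Tendsto (fun k => f (u (φ k))) Filter.atTop (nhds (f y)) :=
        ((hfc y hyIoo).tendsto).comp hconv'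
      simpa only [husucc] using h1
    have habs2 : Filter.Tendsto (fun k => d (φ k + 1)) Filter.atTop (nhds |f y - b|) :=
      (hconv2.sub_const b).abs
    have hDsub2 : Filter.Tendsto (fun k => d (φ k + 1)) Filter.atTop (nhds D) :=
      htend.comp (Filter.tendsto_atTop_mono (fun k => Nat.le_succ (φ k)) hφ.tendsto_atTop)
    have hfyD : |f y - b| = D := tendsto_nhds_unique habs2 hDsub2
    have hc := hcontr y hyIoo hyb
    rw [hfyD, hyD] at hc
    exact lt_irrefl _ hc
end

section
/- If b ∈ (0,1) and b ≠ 1/2, then there exists A > 0 such that for every a > A the map f_{a,b} has a periodic point of least period 3: there exists x ∈ (0,1) with f_{a,b}³(x) = x and f_{a,b}(x) ≠ x. -/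
open Set Filter Topology

set_option maxHeartbeats 1000000

private lemma key13
    (Ψ Ψinv : ℝ → ℝ)
    (hΨcont : ContinuousOn Ψ (Set.Ioo 0 1))
    (hΨanti : StrictAntiOn Ψ (Set.Ioo 0 1))
    (hinv1 : ∀ x ∈ Set.Ioo (0:ℝ) 1, Ψinv (Ψ x) = x)
    (hinv2 : ∀ y : ℝ, Ψinv y ∈ Set.Ioo (0:ℝ) 1 ∧ Ψ (Ψinv y) = y)
    (b : ℝ) (hb : b ∈ Set.Ioo (0:ℝ) 1) (hbh : b < 1/2) :
    ∃ A > (0:ℝ), ∀ a > A, ∀ f : ℝ → ℝ,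
      (∀ x ∈ Set.Ioo (0:ℝ) 1, f x = Ψinv (Ψ x + a * (x - b))) →
      ∃ x ∈ Set.Ioo (0:ℝ) 1, f^[3] x = x ∧ f x ≠ x := by
  obtain ⟨hb0, hb1⟩ := hb
  set m : ℝ := b + 1/2 with hmdef
  have hmI : m ∈ Ioo (0:ℝ) 1 := ⟨by simp [hmdef]; linarith, by simp [hmdef]; linarith⟩
  have hb2I : b/2 ∈ Ioo (0:ℝ) 1 := ⟨by linarith, by linarith⟩
  have hbI : b ∈ Ioo (0:ℝ) 1 := ⟨hb0, hb1⟩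
  -- comparison helper
  have hlt : ∀ x ∈ Ioo (0:ℝ) 1, ∀ y ∈ Ioo (0:ℝ) 1, Ψ y < Ψ x → x < y := by
    intro x hx y hy h
    by_contra hxy
    push_neg at hxy
    rcases eq_or_lt_of_le hxy with rfl | hyx
    · exact lt_irrefl _ h
    · have := hΨanti hy hx hyx
      linarith
  refine ⟨max 1 (max (2*(Ψ (b/2) - Ψ m)/b) (max (2*(Ψ b - Ψ m)) ((Ψ (b/2) - Ψ m)/(1/2 - b)))),
    lt_of_lt_of_le zero_lt_one (le_max_left _ _), ?_⟩
  intro a ha f hf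
  have ha1 : (1:ℝ) < a := lt_of_le_of_lt (le_max_left _ _) ha
  have ha0 : (0:ℝ) < a := by linarith
  have hA1 : Ψ (b/2) - Ψ m < a * (b/2) := by
    have h1 : 2*(Ψ (b/2) - Ψ m)/b < a :=
      lt_of_le_of_lt (le_trans (le_max_left _ _) (le_max_right _ _)) ha
    have h2 : 2*(Ψ (b/2) - Ψ m) < a * b := (div_lt_iff₀ hb0).mp h1
    linarith
  have hA3 : Ψ b - Ψ m < a/2 := by
    have h1 : 2*(Ψ b - Ψ m) < a :=
      lt_of_le_of_lt (le_trans (le_trans (le_max_left _ _) (le_max_right _ _)) (le_max_right _ _)) ha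
    linarith
  have hA5 : Ψ (b/2) - Ψ m < a * (1/2 - b) := by
    have h1 : (Ψ (b/2) - Ψ m)/(1/2 - b) < a :=
      lt_of_le_of_lt (le_trans (le_trans (le_max_right _ _) (le_max_right _ _)) (le_max_right _ _)) ha
    have h2 : (0:ℝ) < 1/2 - b := by linarith
    have := (div_lt_iff₀ h2).mp h1
    linarith
  -- basic facts about f
  have hfmem : ∀ x ∈ Ioo (0:ℝ) 1, f x ∈ Ioo (0:ℝ) 1 := by
    intro x hx; rw [hf x hx]; exact (hinv2 _).1
  have hfΨ : ∀ x ∈ Ioo (0:ℝ) 1, Ψ (f x) = Ψ x + a * (x - b) := by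
    intro x hx; rw [hf x hx]; exact (hinv2 _).2
  -- continuity of Ψinv
  have hrange : Set.range Ψinv = Ioo (0:ℝ) 1 := by
    ext y; constructor
    · rintro ⟨z, rfl⟩; exact (hinv2 z).1
    · intro hy; exact ⟨Ψ y, hinv1 y hy⟩
  have hinvanti : StrictAnti Ψinv := by
    intro y1 y2 h12
    apply hlt _ (hinv2 y2).1 _ (hinv2 y1).1
    rw [(hinv2 y1).2, (hinv2 y2).2]; exact h12
  have hinvcont : Continuous Ψinv := by
    have hmono : StrictMono (fun y => Ψinv (-y)) := fun y1 y2 h => hinvanti (neg_lt_neg h)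
    have hrange2 : Set.range (fun y => Ψinv (-y)) = Ioo (0:ℝ) 1 := by
      rw [← hrange]
      ext t; constructor
      · rintro ⟨z, rfl⟩; exact ⟨-z, rfl⟩
      · rintro ⟨z, rfl⟩; exact ⟨-z, by simp⟩
    have hc : Continuous (fun y => Ψinv (-y)) := by
      apply continuous_iff_continuousAt.mpr
      intro y
      apply (hmono.strictMonoOn univ).continuousAt_of_image_mem_nhds univ_mem
      rw [image_univ, hrange2]
      exact isOpen_Ioo.mem_nhds (hinv2 _).1
    have heq : Ψinv = (fun y => Ψinv (-y)) ∘ (fun y : ℝ => -y) := by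
      funext y; simp
    rw [heq]; exact hc.comp continuous_neg
  have hfc : ContinuousOn f (Ioo (0:ℝ) 1) := by
    have h1 : ContinuousOn (fun x => Ψinv (Ψ x + a * (x - b))) (Ioo (0:ℝ) 1) := by
      apply hinvcont.comp_continuousOn
      exact hΨcont.add (Continuous.continuousOn (by continuity))
    exact h1.congr hf
  -- key points
  have hX1 := hinv2 (Ψ m + a*b)
  set X1 : ℝ := Ψinv (Ψ m + a*b) with hX1def
  have hX1I : X1 ∈ Ioo (0:ℝ) 1 := hX1.1
  have hX1lt : X1 < b/2 := by
    apply hlt X1 hX1I (b/2) hb2I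
    rw [hX1.2]
    have h1 : a*b = a*(b/2) + a*(b/2) := by ring
    have h2 : 0 < a*(b/2) := mul_pos ha0 (half_pos hb0)
    linarith
  have hfX1 : f X1 < m := by
    apply hlt (f X1) (hfmem X1 hX1I) m hmI
    rw [hfΨ X1 hX1I, hX1.2]
    have h1 : a*(X1 - b) = a*X1 - a*b := by ring
    have h2 : 0 < a*X1 := mul_pos ha0 hX1I.1
    linarith
  have hX2 := hinv2 (Ψ (b/2) + a*b)
  set X2 : ℝ := Ψinv (Ψ (b/2) + a*b) with hX2def
  have hX2I : X2 ∈ Ioo (0:ℝ) 1 := hX2.1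
  have hX2lt : X2 < b/2 := by
    apply hlt X2 hX2I (b/2) hb2I
    rw [hX2.2]
    linarith [mul_pos ha0 hb0]
  have hfX2 : f X2 < b/2 := by
    apply hlt (f X2) (hfmem X2 hX2I) (b/2) hb2I
    rw [hfΨ X2 hX2I, hX2.2]
    have h1 : a*(X2 - b) = a*X2 - a*b := by ring
    have h2 : 0 < a*X2 := mul_pos ha0 hX2I.1
    linarith
  have hfb2 : m < f (b/2) := by
    apply hlt m hmI (f (b/2)) (hfmem _ hb2I)
    rw [hfΨ _ hb2I]
    have h2 : a * (b/2 - b) = -(a*(b/2)) := by ring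
    linarith
  -- facts about f m
  have hmb : m - b = 1/2 := by rw [hmdef]; ring
  have hfmΨ : Ψ (f m) = Ψ m + a * (1/2) := by
    rw [hfΨ m hmI, hmb]
  have hfmI : f m ∈ Ioo (0:ℝ) 1 := hfmem m hmI
  have hfmb : f m < b := by
    apply hlt (f m) hfmI b hbI
    rw [hfmΨ]; linarith
  have hfmX1 : f m < X1 := by
    apply hlt (f m) hfmI X1 hX1I
    rw [hfmΨ, hX1.2]
    have h2 : a*b < a*(1/2) := by
      apply mul_lt_mul_of_pos_left hbh ha0
    linarith
  have hfmX2 : f m < X2 := by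
    apply hlt (f m) hfmI X2 hX2I
    rw [hfmΨ, hX2.2]
    have h2 : a * (1/2 - b) = a * (1/2) - a*b := by ring
    linarith
  -- IVT: find q with f q = m
  have hsub1 : Icc X1 (b/2) ⊆ Ioo (0:ℝ) 1 := fun t ht =>
    ⟨lt_of_lt_of_le hX1I.1 ht.1, lt_of_le_of_lt ht.2 hb2I.2⟩
  obtain ⟨q, hqmem, hfq⟩ := intermediate_value_Icc (le_of_lt hX1lt) (hfc.mono hsub1)
    (show m ∈ Icc (f X1) (f (b/2)) from ⟨hfX1.le, hfb2.le⟩)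
  -- IVT: find q1 with f q1 = b/2
  have hsub2 : Icc X2 (b/2) ⊆ Ioo (0:ℝ) 1 := fun t ht =>
    ⟨lt_of_lt_of_le hX2I.1 ht.1, lt_of_le_of_lt ht.2 hb2I.2⟩
  obtain ⟨q1, hq1mem, hfq1⟩ := intermediate_value_Icc (le_of_lt hX2lt) (hfc.mono hsub2)
    (show b/2 ∈ Icc (f X2) (f (b/2)) from ⟨hfX2.le, by
      have : b/2 < m := by rw [hmdef]; linarith
      linarith⟩)
  -- find j1 ∈ (b, m) with f j1 > b/2
  have hfb : f b = b := by
    rw [hf b hbI]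
    have h2 : Ψ b + a * (b - b) = Ψ b := by ring
    rw [h2, hinv1 b hbI]
  have hbm : b < m := by rw [hmdef]; linarith
  have hcw : ContinuousWithinAt f (Ioo (0:ℝ) 1) b := hfc b hbI
  have hev : ∀ᶠ x in 𝓝[Ioo (0:ℝ) 1] b, b/2 < f x :=
    hcw.eventually (eventually_gt_nhds (by rw [hfb]; linarith))
  have hmono2 : 𝓝[Ioo b m] b ≤ 𝓝[Ioo (0:ℝ) 1] b :=
    nhdsWithin_mono b (fun t ht => ⟨lt_trans hb0 ht.1, lt_trans ht.2 hmI.2⟩)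
  have hne : (𝓝[Ioo b m] b).NeBot := by
    rw [← mem_closure_iff_nhdsWithin_neBot, closure_Ioo (ne_of_lt hbm)]
    exact ⟨le_refl b, le_of_lt hbm⟩
  obtain ⟨j1, hj1f, hj1m⟩ := ((hev.filter_mono hmono2).and eventually_mem_nhdsWithin).exists
  -- IVT: find u, v in [j1, m]
  have hsubJ : Icc j1 m ⊆ Ioo (0:ℝ) 1 := fun t ht =>
    ⟨lt_trans hb0 (lt_of_lt_of_le hj1m.1 ht.1), lt_of_le_of_lt ht.2 hmI.2⟩
  obtain ⟨u, humem, hfu⟩ := intermediate_value_Icc' (le_of_lt hj1m.2) (hfc.mono hsubJ)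
    (show q ∈ Icc (f m) (f j1) from ⟨le_trans hfmX1.le hqmem.1, le_trans hqmem.2 hj1f.le⟩)
  obtain ⟨v, hvmem, hfv⟩ := intermediate_value_Icc' (le_of_lt hj1m.2) (hfc.mono hsubJ)
    (show q1 ∈ Icc (f m) (f j1) from ⟨le_trans hfmX2.le hq1mem.1, le_trans hq1mem.2 hj1f.le⟩)
  -- third iterates
  have hit3 : ∀ y : ℝ, f^[3] y = f (f (f y)) := fun y => by
    simp [Function.iterate_succ_apply, Function.iterate_zero_apply]
  have h3u : f (f (f u)) = f m := by rw [hfu, hfq]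
  have h3v : f (f (f v)) = f (b/2) := by rw [hfv, hfq1]
  -- continuity of triple iterate
  have hmaps : MapsTo f (Ioo (0:ℝ) 1) (Ioo (0:ℝ) 1) := fun x hx => hfmem x hx
  have h3c : ContinuousOn (fun x => f (f (f x))) (Ioo (0:ℝ) 1) :=
    hfc.comp (hfc.comp hfc hmaps) (hmaps.comp hmaps)
  have hFc : ContinuousOn (fun x => f (f (f x)) - x) (Icc j1 m) :=
    (h3c.mono hsubJ).sub continuousOn_id
  -- final IVT
  have hFu : f (f (f u)) - u < 0 := by
    rw [h3u]
    exact sub_neg.mpr (lt_of_lt_of_le (lt_trans hfmb (lt_of_lt_of_le hj1m.1 humem.1)) le_rfl)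
  have hFv : 0 < f (f (f v)) - v := by
    rw [h3v]
    exact sub_pos.mpr (lt_of_le_of_lt hvmem.2 hfb2)
  have hfinal : ∃ x ∈ Icc j1 m, f (f (f x)) - x = 0 := by
    rcases le_total u v with huv | hvu
    · have hsub3 : Icc u v ⊆ Icc j1 m := fun t ht =>
        ⟨le_trans humem.1 ht.1, le_trans ht.2 hvmem.2⟩
      obtain ⟨x, hx, hx0⟩ := intermediate_value_Icc huv (hFc.mono hsub3)
        (show (0:ℝ) ∈ Icc (f (f (f u)) - u) (f (f (f v)) - v) from ⟨hFu.le, hFv.le⟩)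
      exact ⟨x, hsub3 hx, hx0⟩
    · have hsub3 : Icc v u ⊆ Icc j1 m := fun t ht =>
        ⟨le_trans hvmem.1 ht.1, le_trans ht.2 humem.2⟩
      obtain ⟨x, hx, hx0⟩ := intermediate_value_Icc' hvu (hFc.mono hsub3)
        (show (0:ℝ) ∈ Icc (f (f (f u)) - u) (f (f (f v)) - v) from ⟨hFu.le, hFv.le⟩)
      exact ⟨x, hsub3 hx, hx0⟩
  obtain ⟨x, hxmem, hx0⟩ := hfinal
  have hxI : x ∈ Ioo (0:ℝ) 1 := hsubJ hxmem
  have hxb : b < x := lt_of_lt_of_le hj1m.1 hxmem.1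
  have hfxlt : f x < x := by
    apply hlt (f x) (hfmem x hxI) x hxI
    rw [hfΨ x hxI]
    linarith [mul_pos ha0 (sub_pos.mpr hxb)]
  exact ⟨x, hxI, by rw [hit3]; linarith, ne_of_lt hfxlt⟩

theorem stmt13
    (Ψ Ψinv : ℝ → ℝ)
    (hΨcont : ContinuousOn Ψ (Set.Ioo 0 1))
    (hΨanti : StrictAntiOn Ψ (Set.Ioo 0 1))
    (hΨbij : Set.BijOn Ψ (Set.Ioo 0 1) Set.univ)
    (hΨsym : ∀ x ∈ Set.Ioo (0:ℝ) 1, Ψ (1 - x) = -Ψ x)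
    (hinv1 : ∀ x ∈ Set.Ioo (0:ℝ) 1, Ψinv (Ψ x) = x)
    (hinv2 : ∀ y : ℝ, Ψinv y ∈ Set.Ioo (0:ℝ) 1 ∧ Ψ (Ψinv y) = y)
    (b : ℝ) (hb : b ∈ Set.Ioo (0:ℝ) 1) (hbne : b ≠ 1/2) :
    ∃ A > (0:ℝ), ∀ a > A, ∀ f : ℝ → ℝ, f 0 = 0 → f 1 = 1 →
      (∀ x ∈ Set.Ioo (0:ℝ) 1, f x = Ψinv (Ψ x + a * (x - b))) →
      ∃ x ∈ Set.Ioo (0:ℝ) 1, f^[3] x = x ∧ f x ≠ x := by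
  rcases lt_or_gt_of_ne hbne with hbh | hbh
  · obtain ⟨A, hA0, hA⟩ := key13 Ψ Ψinv hΨcont hΨanti hinv1 hinv2 b hb hbh
    exact ⟨A, hA0, fun a ha f _ _ hf => hA a ha f hf⟩
  · -- use symmetry: b' = 1 - b < 1/2
    have hb' : (1 - b) ∈ Set.Ioo (0:ℝ) 1 := ⟨by linarith [hb.2], by linarith [hb.1]⟩
    have hbh' : 1 - b < 1/2 := by linarith
    obtain ⟨A, hA0, hA⟩ := key13 Ψ Ψinv hΨcont hΨanti hinv1 hinv2 (1-b) hb' hbh'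
    refine ⟨A, hA0, ?_⟩
    intro a ha f hf0 hf1 hf
    -- Ψinv (-y) = 1 - Ψinv y
    have hinvneg : ∀ y : ℝ, Ψinv (-y) = 1 - Ψinv y := by
      intro y
      have hz := (hinv2 y).1
      have h1z : (1 - Ψinv y) ∈ Set.Ioo (0:ℝ) 1 := ⟨by linarith [hz.2], by linarith [hz.1]⟩
      have : Ψ (1 - Ψinv y) = -y := by rw [hΨsym _ hz, (hinv2 y).2]
      rw [← this, hinv1 _ h1z]
    set g : ℝ → ℝ := fun x => 1 - f (1 - x) with hgdef
    have hg : ∀ x ∈ Set.Ioo (0:ℝ) 1, g x = Ψinv (Ψ x + a * (x - (1-b))) := by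
      intro x hx
      have hx' : (1 - x) ∈ Set.Ioo (0:ℝ) 1 := ⟨by linarith [hx.2], by linarith [hx.1]⟩
      have h1 : f (1 - x) = Ψinv (Ψ (1-x) + a * ((1-x) - b)) := hf _ hx'
      have h2 : Ψ (1-x) + a * ((1-x) - b) = -(Ψ x + a * (x - (1-b))) := by
        rw [hΨsym x hx]; ring
      rw [hgdef]
      simp only
      rw [h1, h2, hinvneg]
      ring
    obtain ⟨x', hx'I, hx'3, hx'ne⟩ := hA a ha g hg
    -- translate back
    have hiter : ∀ n : ℕ, ∀ y : ℝ, g^[n] y = 1 - f^[n] (1 - y) := by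
      intro n
      induction n with
      | zero => intro y; simp
      | succ k ih =>
        intro y
        rw [Function.iterate_succ_apply', Function.iterate_succ_apply', ih y, hgdef]
        simp only
        ring_nf
    refine ⟨1 - x', ⟨by linarith [hx'I.2], by linarith [hx'I.1]⟩, ?_, ?_⟩
    · have := hiter 3 x'
      rw [hx'3] at this
      linarith [this]
    · intro hcon
      apply hx'ne
      rw [hgdef]
      simp only
      rw [hcon]
      ring
end

section
/- If b ∈ (0,1) and b ≠ 1/2, then there exists A > 0 such that for every a > A the map f_{a,b} is Li–Yorke chaotic: there exists an uncountable set S ⊆ [0,1] such that for all x, y ∈ S with x ≠ y, liminf_{n→∞} |f_{a,b}ⁿ(x) − f_{a,b}ⁿ(y)| = 0 and limsup_{n→∞} |f_{a,b}ⁿ(x) − f_{a,b}ⁿ(y)| > 0. -/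
set_option maxHeartbeats 1000000

open Set Filter

namespace Stmt14Aux

/-- Exact-image ("carving") lemma: if a compact interval `[c,d]` is contained in the image of
`[u,v]` under a continuous map, then some subinterval maps *exactly onto* `[c,d]`. -/
lemma carve_exists (F : ℝ → ℝ) {u v c d : ℝ} (hcd : c ≤ d)
    (hF : ContinuousOn F (Set.Icc u v)) (hsub : Set.Icc c d ⊆ F '' Set.Icc u v) :
    ∃ w : ℝ × ℝ, u ≤ w.1 ∧ w.1 ≤ w.2 ∧ w.2 ≤ v ∧
      F '' Set.Icc w.1 w.2 = Set.Icc c d := by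
  obtain ⟨p, hp, hpc⟩ := hsub (Set.left_mem_Icc.2 hcd)
  obtain ⟨q, hq, hqd⟩ := hsub (Set.right_mem_Icc.2 hcd)
  rcases le_total p q with hpq | hqp
  · -- increasing orientation
    set K : Set ℝ := Set.Icc p q ∩ F ⁻¹' {c} with hKdef
    have hKcl : IsClosed K := by
      refine ContinuousOn.preimage_isClosed_of_isClosed
        (hF.mono (Set.Icc_subset_Icc hp.1 hq.2)) isClosed_Icc isClosed_singleton
    have hKcp : IsCompact K := IsCompact.of_isClosed_subset isCompact_Icc hKcl
      Set.inter_subset_left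
    have hKne : K.Nonempty := ⟨p, ⟨le_refl p, hpq⟩, by simpa using hpc⟩
    set u' : ℝ := sSup K with hu'def
    have hu'K : u' ∈ K := hKcp.sSup_mem hKne
    have hu'pq : u' ∈ Set.Icc p q := hu'K.1
    have hu'c : F u' = c := hu'K.2
    have hu'q : u' ≤ q := hu'pq.2
    have huu' : u ≤ u' := le_trans hp.1 hu'pq.1
    have hq'v : q ≤ v := hq.2
    have hFu'q : ContinuousOn F (Set.Icc u' q) :=
      hF.mono (Set.Icc_subset_Icc huu' hq'v)
    -- find d-point to the right of u'
    have hdmem : d ∈ Set.Icc (F u') (F q) := by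
      rw [hu'c, hqd]; exact ⟨hcd, le_refl d⟩
    obtain ⟨y₀, hy₀, hy₀d⟩ := intermediate_value_Icc hu'q hFu'q hdmem
    set Sd : Set ℝ := Set.Icc u' q ∩ F ⁻¹' {d} with hSddef
    have hSdcl : IsClosed Sd := by
      refine ContinuousOn.preimage_isClosed_of_isClosed hFu'q isClosed_Icc isClosed_singleton
    have hSdcp : IsCompact Sd := IsCompact.of_isClosed_subset isCompact_Icc hSdcl
      Set.inter_subset_left
    have hSdne : Sd.Nonempty := ⟨y₀, hy₀, by simpa using hy₀d⟩
    set v' : ℝ := sInf Sd with hv'def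
    have hv'Sd : v' ∈ Sd := hSdcp.sInf_mem hSdne
    have hv'd : F v' = d := hv'Sd.2
    have hu'v' : u' ≤ v' := hv'Sd.1.1
    have hv'q : v' ≤ q := hv'Sd.1.2
    refine ⟨(u', v'), huu', hu'v', le_trans hv'q hq'v, ?_⟩
    have hFu'v' : ContinuousOn F (Set.Icc u' v') :=
      hFu'q.mono (Set.Icc_subset_Icc (le_refl _) hv'q)
    apply Set.Subset.antisymm
    · rintro z ⟨x, hx, rfl⟩
      constructor
      · by_contra hlt
        push_neg at hlt
        have hcmem : c ∈ Set.Icc (F x) (F v') := ⟨le_of_lt hlt, by rw [hv'd]; exact hcd⟩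
        obtain ⟨y, hy, hyc⟩ := intermediate_value_Icc hx.2
          (hFu'v'.mono (Set.Icc_subset_Icc hx.1 (le_refl _))) hcmem
        have hyK : y ∈ K := by
          refine ⟨⟨le_trans hu'pq.1 (le_trans hx.1 hy.1), le_trans hy.2 hv'q⟩, by simpa using hyc⟩
        have hyu' : y ≤ u' := le_csSup hKcp.bddAbove hyK
        have : x = u' := le_antisymm (by linarith [hx.1, hy.1]) hx.1
        rw [this, hu'c] at hlt; exact lt_irrefl c hlt
      · by_contra hlt
        push_neg at hlt
        have hdmem2 : d ∈ Set.Icc (F u') (F x) := ⟨by rw [hu'c]; exact hcd, le_of_lt hlt⟩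
        obtain ⟨y, hy, hyd⟩ := intermediate_value_Icc hx.1
          (hFu'v'.mono (Set.Icc_subset_Icc (le_refl _) hx.2)) hdmem2
        have hySd : y ∈ Sd := ⟨⟨hy.1, le_trans (le_trans hy.2 hx.2) hv'q⟩, by simpa using hyd⟩
        have hv'y : v' ≤ y := csInf_le hSdcp.bddBelow hySd
        have : x = v' := le_antisymm hx.2 (by linarith [hy.2, hx.2])
        rw [this, hv'd] at hlt; exact lt_irrefl d hlt
    · have := intermediate_value_Icc hu'v' hFu'v'
      rw [hu'c, hv'd] at this; exact this
  · -- decreasing orientation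
    set K : Set ℝ := Set.Icc q p ∩ F ⁻¹' {d} with hKdef
    have hKcl : IsClosed K := by
      refine ContinuousOn.preimage_isClosed_of_isClosed
        (hF.mono (Set.Icc_subset_Icc hq.1 hp.2)) isClosed_Icc isClosed_singleton
    have hKcp : IsCompact K := IsCompact.of_isClosed_subset isCompact_Icc hKcl
      Set.inter_subset_left
    have hKne : K.Nonempty := ⟨q, ⟨le_refl q, hqp⟩, by simpa using hqd⟩
    set u' : ℝ := sSup K with hu'def
    have hu'K : u' ∈ K := hKcp.sSup_mem hKne
    have hu'pq : u' ∈ Set.Icc q p := hu'K.1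
    have hu'd : F u' = d := hu'K.2
    have hu'p : u' ≤ p := hu'pq.2
    have huu' : u ≤ u' := le_trans hq.1 hu'pq.1
    have hp'v : p ≤ v := hp.2
    have hFu'p : ContinuousOn F (Set.Icc u' p) :=
      hF.mono (Set.Icc_subset_Icc huu' hp'v)
    have hcmem : c ∈ Set.Icc (F p) (F u') := by
      rw [hu'd, hpc]; exact ⟨le_refl c, hcd⟩
    obtain ⟨y₀, hy₀, hy₀c⟩ := intermediate_value_Icc' hu'p hFu'p hcmem
    set Sc : Set ℝ := Set.Icc u' p ∩ F ⁻¹' {c} with hScdef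
    have hSccl : IsClosed Sc := by
      refine ContinuousOn.preimage_isClosed_of_isClosed hFu'p isClosed_Icc isClosed_singleton
    have hSccp : IsCompact Sc := IsCompact.of_isClosed_subset isCompact_Icc hSccl
      Set.inter_subset_left
    have hScne : Sc.Nonempty := ⟨y₀, hy₀, by simpa using hy₀c⟩
    set v' : ℝ := sInf Sc with hv'def
    have hv'Sc : v' ∈ Sc := hSccp.sInf_mem hScne
    have hv'c : F v' = c := hv'Sc.2
    have hu'v' : u' ≤ v' := hv'Sc.1.1
    have hv'p : v' ≤ p := hv'Sc.1.2
    refine ⟨(u', v'), huu', hu'v', le_trans hv'p hp'v, ?_⟩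
    have hFu'v' : ContinuousOn F (Set.Icc u' v') :=
      hFu'p.mono (Set.Icc_subset_Icc (le_refl _) hv'p)
    apply Set.Subset.antisymm
    · rintro z ⟨x, hx, rfl⟩
      constructor
      · by_contra hlt
        push_neg at hlt
        have hcmem2 : c ∈ Set.Icc (F x) (F u') := ⟨le_of_lt hlt, by rw [hu'd]; exact hcd⟩
        obtain ⟨y, hy, hyc⟩ := intermediate_value_Icc' hx.1
          (hFu'v'.mono (Set.Icc_subset_Icc (le_refl _) hx.2)) hcmem2
        have hySc : y ∈ Sc := ⟨⟨hy.1, le_trans (le_trans hy.2 hx.2) hv'p⟩, by simpa using hyc⟩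
        have hv'y : v' ≤ y := csInf_le hSccp.bddBelow hySc
        have : x = v' := le_antisymm hx.2 (by linarith [hy.2, hx.2])
        rw [this, hv'c] at hlt; exact lt_irrefl c hlt
      · by_contra hlt
        push_neg at hlt
        have hdmem2 : d ∈ Set.Icc (F v') (F x) := ⟨by rw [hv'c]; exact hcd, le_of_lt hlt⟩
        obtain ⟨y, hy, hyd⟩ := intermediate_value_Icc' hx.2
          (hFu'v'.mono (Set.Icc_subset_Icc hx.1 (le_refl _))) hdmem2
        have hyK : y ∈ K := by
          refine ⟨⟨le_trans hu'pq.1 (le_trans hx.1 hy.1), le_trans hy.2 hv'p⟩, by simpa using hyd⟩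
        have hyu' : y ≤ u' := le_csSup hKcp.bddAbove hyK
        have : x = u' := le_antisymm (by linarith [hx.1, hy.1]) hx.1
        rw [this, hu'd] at hlt; exact lt_irrefl d hlt
    · have := intermediate_value_Icc' hu'v' hFu'v'
      rw [hu'd, hv'c] at this; exact this





/-- Conditions under which we can carve. -/
def GoodPair (F : ℝ → ℝ) (D T : ℝ × ℝ) : Prop :=
  D.1 ≤ D.2 ∧ T.1 ≤ T.2 ∧ ContinuousOn F (Set.Icc D.1 D.2) ∧
    Set.Icc T.1 T.2 ⊆ F '' Set.Icc D.1 D.2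

lemma carve_choice (F : ℝ → ℝ) (D T : ℝ × ℝ) :
    ∃ w : ℝ × ℝ, GoodPair F D T →
      (D.1 ≤ w.1 ∧ w.1 ≤ w.2 ∧ w.2 ≤ D.2 ∧ F '' Set.Icc w.1 w.2 = Set.Icc T.1 T.2) := by
  by_cases h : GoodPair F D T
  · obtain ⟨w, hw⟩ := carve_exists F h.2.1 h.2.2.1 h.2.2.2
    exact ⟨w, fun _ => hw⟩
  · exact ⟨D, fun hh => absurd hh h⟩

noncomputable def carveFn (F : ℝ → ℝ) (D T : ℝ × ℝ) : ℝ × ℝ :=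
  (carve_choice F D T).choose

lemma carveFn_spec {F : ℝ → ℝ} {D T : ℝ × ℝ} (h : GoodPair F D T) :
    D.1 ≤ (carveFn F D T).1 ∧ (carveFn F D T).1 ≤ (carveFn F D T).2 ∧
      (carveFn F D T).2 ≤ D.2 ∧
      F '' Set.Icc (carveFn F D T).1 (carveFn F D T).2 = Set.Icc T.1 T.2 :=
  (carve_choice F D T).choose_spec h

/-- shift of a symbol sequence -/
def shf (σ : ℕ → Bool) : ℕ → Bool := fun i => σ (i + 1)

/-- The nested interval scheme indexed by words (presented as length + sequence). -/
noncomputable def W (F : ℝ → ℝ) (B : Bool → ℝ × ℝ) : ℕ → (ℕ → Bool) → ℝ × ℝ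
  | 0, σ => B (σ 0)
  | n+1, σ => carveFn F (W F B n σ) (W F B n (shf σ))

section Scheme

variable {F : ℝ → ℝ} {B : Bool → ℝ × ℝ}
variable (hB : ∀ s : Bool, (B s).1 ≤ (B s).2)
variable (hFc : ∀ s : Bool, ContinuousOn F (Set.Icc (B s).1 (B s).2))
variable (hBcov : ∀ s t : Bool, Set.Icc (B t).1 (B t).2 ⊆ F '' Set.Icc (B s).1 (B s).2)

include hB hFc hBcov

lemma W_inv : ∀ n : ℕ, ∀ σ : ℕ → Bool,
    (W F B n σ).1 ≤ (W F B n σ).2 ∧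
    (B (σ 0)).1 ≤ (W F B n σ).1 ∧ (W F B n σ).2 ≤ (B (σ 0)).2 ∧
    (W F B n σ).1 ≤ (W F B (n+1) σ).1 ∧ (W F B (n+1) σ).2 ≤ (W F B n σ).2 ∧
    F '' Set.Icc (W F B (n+1) σ).1 (W F B (n+1) σ).2
      = Set.Icc (W F B n (shf σ)).1 (W F B n (shf σ)).2 ∧
    (W F B (n+1) σ).1 ≤ (W F B (n+1) σ).2 := by
  intro n
  induction n with
  | zero =>
    intro σ
    have h0 : W F B 0 σ = B (σ 0) := rfl
    have h0' : W F B 0 (shf σ) = B (σ 1) := rfl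
    have hgood : GoodPair F (W F B 0 σ) (W F B 0 (shf σ)) := by
      rw [h0, h0']
      exact ⟨hB _, hB _, hFc _, hBcov _ _⟩
    have hsp := carveFn_spec hgood
    have hW1 : W F B 1 σ = carveFn F (W F B 0 σ) (W F B 0 (shf σ)) := rfl
    refine ⟨by rw [h0]; exact hB _, by rw [h0], by rw [h0], ?_, ?_, ?_, ?_⟩
    · rw [hW1]; exact hsp.1
    · rw [hW1]; exact hsp.2.2.1
    · rw [hW1]; exact hsp.2.2.2
    · rw [hW1]; exact hsp.2.1
  | succ n ih =>
    intro σ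
    obtain ⟨h1, h2, h3, h4, h5, h6, h7⟩ := ih σ
    obtain ⟨h1', h2', h3', h4', h5', h6', h7'⟩ := ih (shf σ)
    have hgood : GoodPair F (W F B (n+1) σ) (W F B (n+1) (shf σ)) := by
      refine ⟨h7, h7', ?_, ?_⟩
      · exact (hFc (σ 0)).mono (Set.Icc_subset_Icc (le_trans h2 h4) (le_trans h5 h3))
      · rw [h6]; exact Set.Icc_subset_Icc h4' h5'
    have hsp := carveFn_spec hgood
    have hW2 : W F B (n+2) σ = carveFn F (W F B (n+1) σ) (W F B (n+1) (shf σ)) := rfl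
    refine ⟨h7, le_trans h2 h4, le_trans h5 h3, ?_, ?_, ?_, ?_⟩
    · rw [hW2]; exact hsp.1
    · rw [hW2]; exact hsp.2.2.1
    · rw [hW2]; exact hsp.2.2.2
    · rw [hW2]; exact hsp.2.1

lemma W_left_mono (σ : ℕ → Bool) : Monotone fun n => (W F B n σ).1 :=
  monotone_nat_of_le_succ fun n => (W_inv hB hFc hBcov n σ).2.2.2.1

lemma W_right_anti (σ : ℕ → Bool) : Antitone fun n => (W F B n σ).2 :=
  antitone_nat_of_succ_le fun n => (W_inv hB hFc hBcov n σ).2.2.2.2.1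

lemma W_cross (σ : ℕ → Bool) (n m : ℕ) : (W F B n σ).1 ≤ (W F B m σ).2 := by
  calc (W F B n σ).1 ≤ (W F B (max n m) σ).1 :=
        W_left_mono hB hFc hBcov σ (le_max_left n m)
    _ ≤ (W F B (max n m) σ).2 := (W_inv hB hFc hBcov (max n m) σ).1
    _ ≤ (W F B m σ).2 := W_right_anti hB hFc hBcov σ (le_max_right n m)

end Scheme

lemma W_prefix {F : ℝ → ℝ} {B : Bool → ℝ × ℝ} :
    ∀ n (σ σ' : ℕ → Bool), (∀ i ≤ n, σ i = σ' i) → W F B n σ = W F B n σ' := by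
  intro n
  induction n with
  | zero => intro σ σ' h; show B (σ 0) = B (σ' 0); rw [h 0 le_rfl]
  | succ n ih =>
    intro σ σ' h
    show carveFn F (W F B n σ) (W F B n (shf σ))
        = carveFn F (W F B n σ') (W F B n (shf σ'))
    rw [ih σ σ' (fun i hi => h i (le_trans hi (Nat.le_succ n))),
      ih (shf σ) (shf σ') (fun i hi => h (i+1) (by omega))]




/-- block index: the unique `k ≥ 1` with `k*k ≤ m + k` and `m < k*k + k`. -/
def kOf (m : ℕ) : ℕ :=
  if m < Nat.sqrt m * Nat.sqrt m + Nat.sqrt m then Nat.sqrt m else Nat.sqrt m + 1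

lemma kOf_pos (m : ℕ) : 1 ≤ kOf m := by
  unfold kOf
  split
  · rename_i h
    rcases Nat.eq_zero_or_pos (Nat.sqrt m) with h0 | h1
    · rw [h0] at h; omega
    · exact h1
  · omega

lemma kOf_window (m : ℕ) : kOf m * kOf m ≤ m + kOf m ∧ m < kOf m * kOf m + kOf m := by
  have hs1 : Nat.sqrt m * Nat.sqrt m ≤ m := Nat.sqrt_le m
  have hs2 : m < (Nat.sqrt m + 1) * (Nat.sqrt m + 1) := Nat.lt_succ_sqrt m
  unfold kOf
  split
  · rename_i h; omega
  · rename_i h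
    push_neg at h
    constructor
    · nlinarith
    · nlinarith

lemma kOf_eq {m k : ℕ} (hk : 1 ≤ k) (h1 : k * k ≤ m + k) (h2 : m < k * k + k) :
    kOf m = k := by
  have hl := kOf_window m
  have hlpos := kOf_pos m
  set l := kOf m with hldef
  rcases lt_trichotomy l k with hlt | heq | hgt
  · exfalso
    have hle : l + 1 ≤ k := hlt
    have hml : l * (l + 1) ≤ (k - 1) * k := Nat.mul_le_mul (by omega) hle
    have hexp : (k - 1) * k + k = k * k := by
      cases k with
      | zero => omega
      | succ n => simp [Nat.succ_sub_one]; ring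
    have hll : l * (l + 1) = l * l + l := by ring
    linarith [hl.1, hl.2]
  · exact heq
  · exfalso
    have hle : k + 1 ≤ l := hgt
    have hml : k * (k + 1) ≤ (l - 1) * l := Nat.mul_le_mul (by omega) hle
    have hexp : (l - 1) * l + l = l * l := by
      cases l with
      | zero => omega
      | succ n => simp [Nat.succ_sub_one]; ring
    have hkk : k * (k + 1) = k * k + k := by ring
    linarith [hl.1, hl.2]

/-- coded sequence: block `k` occupies positions `[k(k-1), k(k+1))`; on the first half it
copies `τ`, on the second half it copies `t`. -/
def code (τ t : ℕ → Bool) (m : ℕ) : Bool :=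
  if m + kOf m - kOf m * kOf m < kOf m then τ (m + kOf m - kOf m * kOf m)
  else t (m + kOf m - kOf m * kOf m - kOf m)

lemma mul_pred_add (k : ℕ) (hk : 1 ≤ k) : k * (k - 1) + k = k * k := by
  cases k with
  | zero => omega
  | succ n => simp [Nat.succ_sub_one]; ring

lemma code_align (τ t : ℕ → Bool) {k i : ℕ} (hik : i < k) :
    code τ t (k * (k - 1) + i) = τ i := by
  have hk : 1 ≤ k := by omega
  have hpred := mul_pred_add k hk
  have hkof : kOf (k * (k - 1) + i) = k := kOf_eq hk (by omega) (by omega)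
  unfold code
  rw [hkof]
  have hr : k * (k - 1) + i + k - k * k = i := by omega
  rw [hr, if_pos hik]

lemma code_digit (τ t : ℕ → Bool) {k j : ℕ} (hjk : j < k) :
    code τ t (k * (k - 1) + (k + j)) = t j := by
  have hk : 1 ≤ k := by omega
  have hpred := mul_pred_add k hk
  have hkof : kOf (k * (k - 1) + (k + j)) = k := kOf_eq hk (by omega) (by omega)
  unfold code
  rw [hkof]
  have hr : k * (k - 1) + (k + j) + k - k * k = k + j := by omega
  rw [hr, if_neg (by omega)]
  congr 1
  omega

/-- Cantor diagonal: no surjection from ℕ onto ℕ → Bool. -/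
lemma no_surj_bool (g : ℕ → (ℕ → Bool)) : ¬ Function.Surjective g := by
  intro hg
  obtain ⟨n, hn⟩ := hg (fun m => ! g m m)
  have := congrFun hn n
  cases h : g n n <;> rw [h] at this <;> simp at this

lemma uncountable_of_inj_from_seq {α : Type*} (f : (ℕ → Bool) → α) (hf : Function.Injective f)
    {S : Set α} (hrange : ∀ t, f t ∈ S) : ¬ S.Countable := by
  intro hS
  have hc : Countable S := hS.to_subtype
  have : Countable (ℕ → Bool) := by
    have hinj : Function.Injective (fun t => (⟨f t, hrange t⟩ : S)) := by
      intro a b hab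
      exact hf (congrArg Subtype.val hab)
    exact Function.Injective.countable hinj
  obtain ⟨g, hg⟩ := exists_surjective_nat (ℕ → Bool)
  exact no_surj_bool g hg

theorem abstract_scrambled (F : ℝ → ℝ) (p₁ p₂ q₁ q₂ : ℝ)
    (h12 : p₁ ≤ p₂) (h23 : p₂ < q₁) (h34 : q₁ ≤ q₂)
    (hFP : ContinuousOn F (Set.Icc p₁ p₂)) (hFQ : ContinuousOn F (Set.Icc q₁ q₂))
    (hcovP : Set.Icc p₁ q₂ ⊆ F '' Set.Icc p₁ p₂)
    (hcovQ : Set.Icc p₁ q₂ ⊆ F '' Set.Icc q₁ q₂) :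
    ∃ S : Set ℝ, S ⊆ Set.Icc p₁ q₂ ∧ ¬ S.Countable ∧
      ∀ x ∈ S, ∀ y ∈ S, x ≠ y →
        (∀ ε > 0, ∃ᶠ n in Filter.atTop, |F^[n] x - F^[n] y| < ε) ∧
        (∃ᶠ n in Filter.atTop, q₁ - p₂ ≤ |F^[n] x - F^[n] y|) := by
  classical
  set B : Bool → ℝ × ℝ := fun s => if s then (q₁, q₂) else (p₁, p₂) with hBdef
  have hBf : B false = (p₁, p₂) := by simp [hBdef]
  have hBt : B true = (q₁, q₂) := by simp [hBdef]
  have hB : ∀ s : Bool, (B s).1 ≤ (B s).2 := by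
    intro s; cases s
    · rw [hBf]; exact h12
    · rw [hBt]; exact h34
  have hBsub : ∀ s : Bool, Set.Icc (B s).1 (B s).2 ⊆ Set.Icc p₁ q₂ := by
    intro s; cases s
    · rw [hBf]; exact Set.Icc_subset_Icc (le_refl _) (by linarith)
    · rw [hBt]; exact Set.Icc_subset_Icc (by linarith) (le_refl _)
  have hFc : ∀ s : Bool, ContinuousOn F (Set.Icc (B s).1 (B s).2) := by
    intro s; cases s
    · rw [hBf]; exact hFP
    · rw [hBt]; exact hFQ
  have hBcov : ∀ s t : Bool, Set.Icc (B t).1 (B t).2 ⊆ F '' Set.Icc (B s).1 (B s).2 := by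
    intro s t
    refine Set.Subset.trans (hBsub t) ?_
    cases s
    · rw [hBf]; exact hcovP
    · rw [hBt]; exact hcovQ
  have hInv := W_inv (F := F) (B := B) hB hFc hBcov
  have hWmono := W_left_mono (F := F) (B := B) hB hFc hBcov
  have hWanti := W_right_anti (F := F) (B := B) hB hFc hBcov
  have hWcross := W_cross (F := F) (B := B) hB hFc hBcov
  -- disjointness of the two pieces
  have hdisj : ∀ s t : Bool, s ≠ t → ∀ v : ℝ,
      v ∈ Set.Icc (B s).1 (B s).2 → v ∈ Set.Icc (B t).1 (B t).2 → False := by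
    intro s t hst v hv hw
    cases s <;> cases t
    · exact hst rfl
    · rw [hBf] at hv; rw [hBt] at hw
      have := hv.2; have := hw.1; simp only [] at *; linarith [hv.2, hw.1]
    · rw [hBt] at hv; rw [hBf] at hw
      linarith [hv.1, hw.2]
    · exact hst rfl
  have habs : ∀ s t : Bool, s ≠ t → ∀ v w : ℝ,
      v ∈ Set.Icc (B s).1 (B s).2 → w ∈ Set.Icc (B t).1 (B t).2 →
      q₁ - p₂ ≤ |v - w| := by
    intro s t hst v w hv hw
    cases s <;> cases t
    · exact absurd rfl hst
    · rw [hBf] at hv; rw [hBt] at hw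
      have h1 : q₁ - p₂ ≤ w - v := by
        have := hv.2; have := hw.1; simp only [] at *; linarith
      calc q₁ - p₂ ≤ w - v := h1
        _ ≤ |w - v| := le_abs_self _
        _ = |v - w| := abs_sub_comm w v
    · rw [hBt] at hv; rw [hBf] at hw
      have h1 : q₁ - p₂ ≤ v - w := by
        have := hv.1; have := hw.2; simp only [] at *; linarith
      calc q₁ - p₂ ≤ v - w := h1
        _ ≤ |v - w| := le_abs_self _
    · exact absurd rfl hst
  -- nonemptiness of cylinder intersections
  have hCylne : ∀ σ : ℕ → Bool,
      (⋂ n, Set.Icc (W F B n σ).1 (W F B n σ).2).Nonempty := by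
    intro σ
    apply IsCompact.nonempty_iInter_of_sequence_nonempty_isCompact_isClosed
    · intro n; exact Set.Icc_subset_Icc (hInv n σ).2.2.2.1 (hInv n σ).2.2.2.2.1
    · intro n; exact Set.nonempty_Icc.2 (hInv n σ).1
    · exact isCompact_Icc
    · intro n; exact isClosed_Icc
  -- general iterate membership
  have hIterX : ∀ (n : ℕ) (σ : ℕ → Bool) (x : ℝ),
      (∀ j, x ∈ Set.Icc (W F B j σ).1 (W F B j σ).2) →
      ∀ m, F^[n] x ∈ Set.Icc (W F B m (fun i => σ (i + n))).1
        (W F B m (fun i => σ (i + n))).2 := by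
    intro n
    induction n with
    | zero =>
      intro σ x hx m
      have he : (fun i => σ (i + 0)) = σ := by funext i; rw [Nat.add_zero]
      rw [he]; exact hx m
    | succ n ih =>
      intro σ x hx m
      have h1 : F^[n+1] x = F (F^[n] x) := Function.iterate_succ_apply' F n x
      have h2 := ih σ x hx (m + 1)
      have h3 : F (F^[n] x) ∈ F '' Set.Icc (W F B (m+1) (fun i => σ (i + n))).1
          (W F B (m+1) (fun i => σ (i + n))).2 := ⟨_, h2, rfl⟩
      rw [(hInv m (fun i => σ (i + n))).2.2.2.2.2.1] at h3
      have h4 : shf (fun i => σ (i + n)) = fun i => σ (i + (n + 1)) := by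
        funext i
        show σ (i + 1 + n) = σ (i + (n + 1))
        congr 1; omega
      rw [h4] at h3
      rw [h1]; exact h3
  have hPieceX : ∀ (σ : ℕ → Bool) (x : ℝ),
      (∀ j, x ∈ Set.Icc (W F B j σ).1 (W F B j σ).2) →
      ∀ n, F^[n] x ∈ Set.Icc (B (σ n)).1 (B (σ n)).2 := by
    intro σ x hx n
    have h := hIterX n σ x hx 0
    have he : W F B 0 (fun i => σ (i + n)) = B (σ n) := by
      show B ((fun i => σ (i + n)) 0) = B (σ n)
      norm_num
    rw [he] at h; exact h
  -- existence of a "good" sequence with shrinking cylinder lengths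
  have hgood : ∃ τ : ℕ → Bool, ∀ ε > (0:ℝ), ∃ k,
      (W F B k τ).2 - (W F B k τ).1 < ε := by
    by_contra hcon
    push_neg at hcon
    choose eps hepspos heps using hcon
    -- for each σ, all cylinders have length ≥ eps σ
    set L : (ℕ → Bool) → ℝ := fun σ => ⨆ n, (W F B n σ).1 with hLdef
    have hbddA : ∀ σ, BddAbove (Set.range fun n => (W F B n σ).1) := by
      intro σ
      exact ⟨(W F B 0 σ).2, by rintro x ⟨n, rfl⟩; exact hWcross σ n 0⟩
    have hLub : ∀ σ n, (W F B n σ).1 ≤ L σ := by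
      intro σ n; exact le_ciSup (hbddA σ) n
    have hLle : ∀ σ n, L σ ≤ (W F B n σ).2 - eps σ := by
      intro σ n
      apply ciSup_le
      intro k
      have h1 : (W F B k σ).1 ≤ (W F B (max k n) σ).1 := hWmono σ (le_max_left k n)
      have h2 : eps σ ≤ (W F B (max k n) σ).2 - (W F B (max k n) σ).1 := heps σ (max k n)
      have h3 : (W F B (max k n) σ).2 ≤ (W F B n σ).2 := hWanti σ (le_max_right k n)
      linarith
    have hqex : ∀ σ, ∃ q : ℚ, L σ < (q:ℝ) ∧ (q:ℝ) < L σ + eps σ := by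
      intro σ; exact exists_rat_btwn (by linarith [hepspos σ])
    choose qf hq1 hq2 using hqex
    have hqmem : ∀ σ n, ((qf σ : ℝ)) ∈ Set.Icc (W F B n σ).1 (W F B n σ).2 := by
      intro σ n
      constructor
      · exact le_of_lt (lt_of_le_of_lt (hLub σ n) (hq1 σ))
      · have := hLle σ n; have := hq2 σ; linarith
    have hinj : Function.Injective qf := by
      intro σ σ' hqq
      by_contra hne
      obtain ⟨m, hm⟩ := Function.ne_iff.1 hne
      have hz1 := hPieceX σ (qf σ) (hqmem σ) m
      have hz2 := hPieceX σ' (qf σ') (hqmem σ') m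
      rw [← hqq] at hz2
      exact hdisj (σ m) (σ' m) hm _ hz1 hz2
    have hcnt : Countable (ℕ → Bool) := Function.Injective.countable hinj
    obtain ⟨g, hg⟩ := exists_surjective_nat (ℕ → Bool)
    exact no_surj_bool g hg
  obtain ⟨τ, hτ⟩ := hgood
  have hdiammono : ∀ {k k' : ℕ}, k ≤ k' →
      (W F B k' τ).2 - (W F B k' τ).1 ≤ (W F B k τ).2 - (W F B k τ).1 := by
    intro k k' hkk
    have := hWmono τ hkk; have := hWanti τ hkk; linarith
  -- the scrambled family
  choose pt hpt using hCylne
  have hptmem : ∀ σ n, pt σ ∈ Set.Icc (W F B n σ).1 (W F B n σ).2 := by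
    intro σ n; exact Set.mem_iInter.1 (hpt σ) n
  set xt : (ℕ → Bool) → ℝ := fun t => pt (code τ t) with hxtdef
  have hxtinj : Function.Injective xt := by
    intro t t' htt
    by_contra hne
    obtain ⟨j, hj⟩ := Function.ne_iff.1 hne
    set k := j + 1 with hkdef
    have hjk : j < k := by omega
    have h1 := hPieceX (code τ t) (pt (code τ t)) (hptmem (code τ t)) (k * (k-1) + (k + j))
    have h2 := hPieceX (code τ t') (pt (code τ t')) (hptmem (code τ t')) (k * (k-1) + (k + j))
    rw [code_digit τ t hjk] at h1
    rw [code_digit τ t' hjk] at h2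
    have heq : pt (code τ t) = pt (code τ t') := htt
    rw [← heq] at h2
    exact hdisj (t j) (t' j) hj _ h1 h2
  refine ⟨Set.range xt, ?_, ?_, ?_⟩
  · rintro x ⟨t, rfl⟩
    have := hptmem (code τ t) 0
    have he : W F B 0 (code τ t) = B (code τ t 0) := rfl
    rw [he] at this
    exact hBsub _ this
  · exact uncountable_of_inj_from_seq xt hxtinj (fun t => Set.mem_range_self t)
  · rintro x ⟨t, rfl⟩ y ⟨t', rfl⟩ hxy
    have htt' : t ≠ t' := fun h => hxy (by rw [h])
    constructor
    · -- liminf part: frequent closeness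
      intro ε hε
      obtain ⟨k₀, hk₀⟩ := hτ ε hε
      rw [Filter.frequently_atTop]
      intro N
      set k := max (k₀ + 1) (N + 1) with hkdef
      have hk1 : 1 ≤ k := by omega
      have hkk₀ : k₀ ≤ k - 1 := by omega
      have hkN : N + 1 ≤ k := le_max_right _ _
      set n := k * (k - 1) with hndef
      have hnN : N ≤ n := by
        have h1 : k - 1 ≤ 1 * (k - 1) := by omega
        have h2 : 1 * (k - 1) ≤ k * (k - 1) := Nat.mul_le_mul_right _ hk1
        omega
      refine ⟨n, hnN, ?_⟩
      -- both iterates lie in the cylinder of τ of depth k-1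
      have hag : ∀ t'' : ℕ → Bool, ∀ i ≤ k - 1, code τ t'' (i + n) = τ i := by
        intro t'' i hi
        have : i + n = k * (k - 1) + i := by omega
        rw [this]
        exact code_align τ t'' (by omega)
      have hx1 := hIterX n (code τ t) (pt (code τ t)) (hptmem (code τ t)) (k - 1)
      have hx2 := hIterX n (code τ t') (pt (code τ t')) (hptmem (code τ t')) (k - 1)
      rw [W_prefix (k-1) _ τ (hag t)] at hx1
      rw [W_prefix (k-1) _ τ (hag t')] at hx2
      have hdiam : (W F B (k-1) τ).2 - (W F B (k-1) τ).1 < ε :=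
        lt_of_le_of_lt (hdiammono hkk₀) hk₀
      rw [abs_sub_lt_iff]
      constructor
      · have := hx1.2; have := hx2.1; linarith
      · have := hx2.2; have := hx1.1; linarith
    · -- limsup part: frequent separation
      obtain ⟨j, hj⟩ := Function.ne_iff.1 htt'
      rw [Filter.frequently_atTop]
      intro N
      set k := max (j + 1) (N + 1) with hkdef
      have hjk : j < k := by omega
      set m := k * (k - 1) + (k + j) with hmdef
      have hmN : N ≤ m := by
        have : k ≤ m := by omega
        omega
      refine ⟨m, hmN, ?_⟩
      have h1 := hPieceX (code τ t) (pt (code τ t)) (hptmem (code τ t)) m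
      have h2 := hPieceX (code τ t') (pt (code τ t')) (hptmem (code τ t')) m
      rw [hmdef, code_digit τ t hjk] at h1
      rw [hmdef, code_digit τ t' hjk] at h2
      exact habs (t j) (t' j) hj _ _ h1 h2

section PhiLemmas

variable {Ψ Ψinv : ℝ → ℝ}
variable (hΨanti : StrictAntiOn Ψ (Set.Ioo 0 1))
variable (hinv2 : ∀ y : ℝ, Ψinv y ∈ Set.Ioo (0:ℝ) 1 ∧ Ψ (Ψinv y) = y)

include hΨanti in
lemma psi_antitone {x x' : ℝ} (hx : x ∈ Set.Ioo (0:ℝ) 1) (hx' : x' ∈ Set.Ioo (0:ℝ) 1)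
    (h : x ≤ x') : Ψ x' ≤ Ψ x := by
  rcases h.eq_or_lt with rfl | hlt
  · exact le_rfl
  · exact (hΨanti hx hx' hlt).le

include hΨanti hinv2 in
lemma le_phi_iff {x y : ℝ} (hx : x ∈ Set.Ioo (0:ℝ) 1) : x ≤ Ψinv y ↔ y ≤ Ψ x := by
  constructor
  · intro h
    have h2 := psi_antitone hΨanti hx ((hinv2 y).1) h
    rwa [(hinv2 y).2] at h2
  · intro h
    by_contra hc
    push_neg at hc
    have h2 := hΨanti ((hinv2 y).1) hx hc
    rw [(hinv2 y).2] at h2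
    linarith

include hΨanti hinv2 in
lemma phi_le_iff {x y : ℝ} (hx : x ∈ Set.Ioo (0:ℝ) 1) : Ψinv y ≤ x ↔ Ψ x ≤ y := by
  constructor
  · intro h
    have h2 := psi_antitone hΨanti ((hinv2 y).1) hx h
    rwa [(hinv2 y).2] at h2
  · intro h
    by_contra hc
    push_neg at hc
    have h2 := hΨanti hx ((hinv2 y).1) hc
    rw [(hinv2 y).2] at h2
    linarith

include hΨanti hinv2 in
lemma phi_lt_iff {x y : ℝ} (hx : x ∈ Set.Ioo (0:ℝ) 1) : Ψinv y < x ↔ Ψ x < y := by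
  rw [lt_iff_not_ge, lt_iff_not_ge]
  exact not_congr (le_phi_iff hΨanti hinv2 hx)

include hΨanti hinv2 in
lemma lt_phi_iff {x y : ℝ} (hx : x ∈ Set.Ioo (0:ℝ) 1) : x < Ψinv y ↔ y < Ψ x := by
  rw [lt_iff_not_ge, lt_iff_not_ge]
  exact not_congr (phi_le_iff hΨanti hinv2 hx)

include hΨanti hinv2 in
lemma phi_antitone {y y' : ℝ} (h : y ≤ y') : Ψinv y' ≤ Ψinv y := by
  rw [phi_le_iff hΨanti hinv2 ((hinv2 y).1), (hinv2 y).2]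
  exact h

include hΨanti hinv2 in
lemma phi_cont : Continuous Ψinv := by
  rw [Metric.continuous_iff]
  intro y ε hε
  set x := Ψinv y with hxdef
  have hx : x ∈ Set.Ioo (0:ℝ) 1 := (hinv2 y).1
  set xl : ℝ := max (x - ε/2) (x/2) with hxldef
  set xu : ℝ := min (x + ε/2) ((x+1)/2) with hxudef
  have hxl : xl ∈ Set.Ioo (0:ℝ) 1 := by
    constructor
    · have h1 : (0:ℝ) < x/2 := by linarith [hx.1]
      exact lt_of_lt_of_le h1 (le_max_right _ _)
    · have h1 : x - ε/2 < 1 := by linarith [hx.2]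
      have h2 : x/2 < 1 := by linarith [hx.2]
      exact max_lt h1 h2
  have hxu : xu ∈ Set.Ioo (0:ℝ) 1 := by
    constructor
    · have h1 : (0:ℝ) < x + ε/2 := by linarith [hx.1]
      have h2 : (0:ℝ) < (x+1)/2 := by linarith [hx.1]
      exact lt_min h1 h2
    · have h1 : (x+1)/2 < 1 := by linarith [hx.2]
      exact lt_of_le_of_lt (min_le_right _ _) h1
  have hxlx : xl < x := by
    apply max_lt
    · linarith
    · linarith [hx.1]
  have hxxu : x < xu := by
    apply lt_min
    · linarith
    · linarith [hx.2]
  have hyl : y < Ψ xl := by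
    have h1 := hΨanti hxl hx hxlx
    rwa [hxdef, (hinv2 y).2] at h1
  have hyu : Ψ xu < y := by
    have h1 := hΨanti hx hxu hxxu
    rwa [hxdef, (hinv2 y).2] at h1
  refine ⟨min (Ψ xl - y) (y - Ψ xu), lt_min (by linarith) (by linarith), ?_⟩
  intro y' hy'
  rw [Real.dist_eq] at hy'
  have habs := abs_lt.1 hy'
  have h1 : y' < Ψ xl := by
    have h2 : min (Ψ xl - y) (y - Ψ xu) ≤ Ψ xl - y := min_le_left _ _
    linarith [habs.2]
  have h2 : Ψ xu < y' := by
    have h3 : min (Ψ xl - y) (y - Ψ xu) ≤ y - Ψ xu := min_le_right _ _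
    linarith [habs.1]
  have h3 : xl < Ψinv y' := (lt_phi_iff hΨanti hinv2 hxl).2 h1
  have h4 : Ψinv y' < xu := (phi_lt_iff hΨanti hinv2 hxu).2 h2
  rw [Real.dist_eq, abs_lt]
  constructor
  · have h5 : x - ε/2 ≤ xl := le_max_left _ _
    linarith
  · have h5 : xu ≤ x + ε/2 := min_le_left _ _
    linarith

end PhiLemmas

/-- The key construction, for `0 < b < 1/2`. -/
theorem key_half (Ψ Ψinv : ℝ → ℝ)
    (hΨcont : ContinuousOn Ψ (Set.Ioo 0 1))
    (hΨanti : StrictAntiOn Ψ (Set.Ioo 0 1))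
    (hinv1 : ∀ x ∈ Set.Ioo (0:ℝ) 1, Ψinv (Ψ x) = x)
    (hinv2 : ∀ y : ℝ, Ψinv y ∈ Set.Ioo (0:ℝ) 1 ∧ Ψ (Ψinv y) = y)
    (b : ℝ) (hb0 : 0 < b) (hb2 : b < 1/2) :
    ∃ A > (0:ℝ), ∀ a > A, ∀ f : ℝ → ℝ,
      (∀ x ∈ Set.Ioo (0:ℝ) 1, f x = Ψinv (Ψ x + a * (x - b))) →
      ∃ S : Set ℝ, S ⊆ Set.Icc (0:ℝ) 1 ∧ ¬ S.Countable ∧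
        ∀ x ∈ S, ∀ y ∈ S, x ≠ y →
          Filter.liminf (fun n : ℕ => |f^[n] x - f^[n] y|) Filter.atTop = 0 ∧
          0 < Filter.limsup (fun n : ℕ => |f^[n] x - f^[n] y|) Filter.atTop := by
  classical
  set ξ : ℝ := (1 - 2*b)/4 with hξdef
  have hξ : 0 < ξ := by rw [hξdef]; linarith
  have hb8 : b/8 ∈ Set.Ioo (0:ℝ) 1 := ⟨by linarith, by linarith⟩
  have hb2m : b/2 ∈ Set.Ioo (0:ℝ) 1 := ⟨by linarith, by linarith⟩
  have hbm : b ∈ Set.Ioo (0:ℝ) 1 := ⟨hb0, by linarith⟩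
  have h2bξ : 2*b + ξ ∈ Set.Ioo (0:ℝ) 1 := ⟨by linarith, by rw [hξdef]; linarith⟩
  set K₀ : ℝ := |Ψ (b/2)| + 1 with hK₀def
  have hK₀pos : 0 < K₀ := by positivity
  set A : ℝ := 1 + (2/b) * (|Ψ (b/8)| + |Ψ b| + |Ψ (b/2)| + |Ψ (2*b+ξ)|)
      + (1/ξ) * (K₀ + |Ψ (2*b+ξ)|) + (8/(3*b)) * |Ψ (2*b+ξ)| with hAdef
  have ht1nn : 0 ≤ (2/b) * (|Ψ (b/8)| + |Ψ b| + |Ψ (b/2)| + |Ψ (2*b+ξ)|) := by positivity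
  have ht2nn : 0 ≤ (1/ξ) * (K₀ + |Ψ (2*b+ξ)|) := by positivity
  have ht3nn : 0 ≤ (8/(3*b)) * |Ψ (2*b+ξ)| := by positivity
  have hA0 : 0 < A := by rw [hAdef]; linarith
  refine ⟨A, hA0, ?_⟩
  intro a ha f hf
  have ha0 : 0 < a := lt_trans hA0 ha
  have hterm1 : (2/b) * (|Ψ (b/8)| + |Ψ b| + |Ψ (b/2)| + |Ψ (2*b+ξ)|) < a := by
    rw [hAdef] at ha; linarith
  have hterm2 : (1/ξ) * (K₀ + |Ψ (2*b+ξ)|) < a := by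
    rw [hAdef] at ha; linarith
  have hterm3 : (8/(3*b)) * |Ψ (2*b+ξ)| < a := by
    rw [hAdef] at ha; linarith
  have hbne : b ≠ 0 := ne_of_gt hb0
  have habssum : |Ψ (b/8)| + |Ψ b| + |Ψ (b/2)| + |Ψ (2*b+ξ)| < a * (b/2) := by
    have h := mul_lt_mul_of_pos_right hterm1 (show (0:ℝ) < b/2 by linarith)
    have he : (2/b) * (|Ψ (b/8)| + |Ψ b| + |Ψ (b/2)| + |Ψ (2*b+ξ)|) * (b/2)
        = |Ψ (b/8)| + |Ψ b| + |Ψ (b/2)| + |Ψ (2*b+ξ)| := by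
      field_simp
    rw [he] at h
    exact h
  have hc3 : K₀ + |Ψ (2*b+ξ)| < a * ξ := by
    have h := mul_lt_mul_of_pos_right hterm2 hξ
    have he : (1/ξ) * (K₀ + |Ψ (2*b+ξ)|) * ξ = K₀ + |Ψ (2*b+ξ)| := by
      field_simp
    rw [he] at h
    exact h
  have hc5 : |Ψ (2*b+ξ)| < a * (3*b/8) := by
    have h := mul_lt_mul_of_pos_right hterm3 (show (0:ℝ) < 3*b/8 by linarith)
    have he : (8/(3*b)) * |Ψ (2*b+ξ)| * (3*b/8) = |Ψ (2*b+ξ)| := by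
      field_simp
    rw [he] at h
    exact h
  have habs1 : Ψ (b/8) < a * (b/2) := by
    have h1 := le_abs_self (Ψ (b/8))
    have h2 := abs_nonneg (Ψ b); have h3 := abs_nonneg (Ψ (b/2))
    have h4 := abs_nonneg (Ψ (2*b+ξ))
    linarith
  have habs2 : Ψ b < a * (b/2) := by
    have h1 := le_abs_self (Ψ b)
    have h2 := abs_nonneg (Ψ (b/8)); have h3 := abs_nonneg (Ψ (b/2))
    have h4 := abs_nonneg (Ψ (2*b+ξ))
    linarith
  have habs4 : Ψ (b/2) - Ψ (2*b+ξ) < a * (b/2) := by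
    have h1 := le_abs_self (Ψ (b/2))
    have h2 := neg_abs_le (Ψ (2*b+ξ))
    have h3 := abs_nonneg (Ψ (b/8)); have h4 := abs_nonneg (Ψ b)
    linarith
  -- levels and the auxiliary map g
  set α : ℝ := a * (b/2) with hαdef
  set β : ℝ := a * b + K₀ with hβdef
  have hαβ : α ≤ β := by
    have h1 : 0 < a * b := mul_pos ha0 hb0
    have h2 : α = a * b / 2 := by rw [hαdef]; ring
    linarith [hβdef.le]
  set g : ℝ → ℝ := fun x => Ψ x + a * (x - b) with hgdef
  have hgval : ∀ x : ℝ, g x = Ψ x + a * (x - b) := fun x => rfl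
  have hgIoo : ContinuousOn g (Set.Ioo 0 1) := by
    rw [hgdef]
    exact hΨcont.add (Continuous.continuousOn (by continuity))
  have hgc : ∀ u v : ℝ, Set.Icc u v ⊆ Set.Ioo 0 1 → ContinuousOn g (Set.Icc u v) :=
    fun u v hsub => hgIoo.mono hsub
  -- anchor points
  set xα : ℝ := Ψinv α with hxαdef
  set xβ : ℝ := Ψinv β with hxβdef
  have hxαm : xα ∈ Set.Ioo (0:ℝ) 1 := (hinv2 α).1
  have hxβm : xβ ∈ Set.Ioo (0:ℝ) 1 := (hinv2 β).1
  have hxα8 : xα ≤ b/8 := by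
    rw [hxαdef]
    exact (phi_le_iff hΨanti hinv2 hb8).2 (le_of_lt habs1)
  have hxβα : xβ ≤ xα := by
    rw [hxαdef, hxβdef]
    exact phi_antitone hΨanti hinv2 hαβ
  have hgxα : g xα = α + a * xα - a * b := by
    rw [hgval, hxαdef, (hinv2 α).2]; ring
  have hgxβ : g xβ = K₀ + a * xβ := by
    rw [hgval, hxβdef, (hinv2 β).2, hβdef]; ring
  have hgb : g b = Ψ b := by rw [hgval]; ring
  have hg2bξ : g (2*b+ξ) = Ψ (2*b+ξ) + a*(b+ξ) := by rw [hgval]; ring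
  have hgb2 : g (b/2) = Ψ (b/2) - a*(b/2) := by rw [hgval]; ring
  -- anchor w
  have hsubw : Set.Icc (b/2) b ⊆ Set.Ioo (0:ℝ) 1 := by
    intro z hz
    exact ⟨by linarith [hz.1], by linarith [hz.2]⟩
  obtain ⟨w, hwm, hgw⟩ := intermediate_value_Icc (show b/2 ≤ b by linarith)
      (hgc _ _ hsubw)
      (show Ψ (2*b+ξ) ∈ Set.Icc (g (b/2)) (g b) by
        constructor
        · rw [hgb2]; linarith [habs4]
        · rw [hgb]
          exact psi_antitone hΨanti hbm h2bξ (by linarith))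
  -- anchors s₁ s₂
  have hsubs : Set.Icc b (2*b+ξ) ⊆ Set.Ioo (0:ℝ) 1 := by
    intro z hz
    exact ⟨by linarith [hz.1], by linarith [hz.2, h2bξ.2]⟩
  have hβle : β ≤ Ψ (2*b+ξ) + a*(b+ξ) := by
    rw [hβdef]
    have h1 := neg_abs_le (Ψ (2*b+ξ))
    have h2 : a*(b+ξ) = a*b + a*ξ := by ring
    linarith
  obtain ⟨s₁, hs₁m, hgs₁⟩ := intermediate_value_Icc (show b ≤ 2*b+ξ by linarith)
      (hgc _ _ hsubs)
      (show α ∈ Set.Icc (g b) (g (2*b+ξ)) by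
        constructor
        · rw [hgb]; rw [hαdef]; linarith [habs2]
        · rw [hg2bξ]; linarith [hβle, hαβ])
  have hsubs2 : Set.Icc s₁ (2*b+ξ) ⊆ Set.Ioo (0:ℝ) 1 := by
    intro z hz
    exact ⟨by linarith [hz.1, hs₁m.1], by linarith [hz.2, h2bξ.2]⟩
  obtain ⟨s₂, hs₂m, hgs₂⟩ := intermediate_value_Icc hs₁m.2
      (hgc _ _ hsubs2)
      (show β ∈ Set.Icc (g s₁) (g (2*b+ξ)) by
        constructor
        · rw [hgs₁]; exact hαβ
        · rw [hg2bξ]; exact hβle)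
  -- basic position facts
  have hwb2 : b/2 ≤ w := hwm.1
  have hwb : w ≤ b := hwm.2
  have hbs₁ : b ≤ s₁ := hs₁m.1
  have hs₁s₂ : s₁ ≤ s₂ := hs₂m.1
  have hs₂2bξ : s₂ ≤ 2*b+ξ := hs₂m.2
  have hws₂ : w ≤ s₂ := by linarith
  have hxαw : xα < w := by linarith [hxα8]
  have hxβw : xβ ≤ w := by linarith [hxβα]
  -- subset facts
  have hIccP : Set.Icc xβ xα ⊆ Set.Ioo (0:ℝ) 1 := by
    intro z hz
    exact ⟨lt_of_lt_of_le hxβm.1 hz.1, lt_of_le_of_lt hz.2 hxαm.2⟩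
  have hIccQ : Set.Icc s₁ s₂ ⊆ Set.Ioo (0:ℝ) 1 := by
    intro z hz
    exact ⟨by linarith [hz.1], by linarith [hz.2, h2bξ.2]⟩
  have hIccW : Set.Icc w s₂ ⊆ Set.Ioo (0:ℝ) 1 := by
    intro z hz
    exact ⟨by linarith [hz.1], by linarith [hz.2, h2bξ.2]⟩
  have hIccT : Set.Icc xβ s₂ ⊆ Set.Ioo (0:ℝ) 1 := by
    intro z hz
    exact ⟨lt_of_lt_of_le hxβm.1 hz.1, by linarith [hz.2, h2bξ.2]⟩
  -- f basics
  have hfmaps : Set.MapsTo f (Set.Ioo 0 1) (Set.Ioo 0 1) := by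
    intro x hx
    rw [hf x hx]
    exact (hinv2 _).1
  have hfeq : Set.EqOn f (fun x => Ψinv (g x)) (Set.Ioo 0 1) := by
    intro x hx
    rw [hf x hx]
  have hfc : ContinuousOn f (Set.Ioo 0 1) := by
    apply ContinuousOn.congr _ hfeq
    exact (phi_cont hΨanti hinv2).comp_continuousOn hgIoo
  have hfx : ∀ x ∈ Set.Ioo (0:ℝ) 1, ∀ t ∈ Set.Ioo (0:ℝ) 1, g x = Ψ t → f x = t := by
    intro x hx t ht hgx
    rw [hf x hx, ← hgval x, hgx, hinv1 t ht]
  -- the three covering relations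
  have cover1 : Set.Icc xβ xα ⊆ f '' Set.Icc s₁ s₂ := by
    intro t ht
    have htIoo : t ∈ Set.Ioo (0:ℝ) 1 := hIccP ht
    have hΨt1 : α ≤ Ψ t := by
      have := (le_phi_iff hΨanti hinv2 htIoo).1 (by rw [← hxαdef]; exact ht.2)
      exact this
    have hΨt2 : Ψ t ≤ β := by
      have := (phi_le_iff hΨanti hinv2 htIoo).1 (by rw [← hxβdef]; exact ht.1)
      exact this
    obtain ⟨x, hx, hgx⟩ := intermediate_value_Icc hs₁s₂ (hgc _ _ hIccQ)
      (show Ψ t ∈ Set.Icc (g s₁) (g s₂) by rw [hgs₁, hgs₂]; exact ⟨hΨt1, hΨt2⟩)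
    exact ⟨x, hx, hfx x (hIccQ hx) t htIoo hgx⟩
  have cover2 : Set.Icc w s₂ ⊆ f '' Set.Icc xβ xα := by
    intro t ht
    have htIoo : t ∈ Set.Ioo (0:ℝ) 1 := hIccW ht
    have hwIoo : w ∈ Set.Ioo (0:ℝ) 1 := hIccW ⟨le_refl w, hws₂⟩
    have hlow : g xα ≤ Ψ t := by
      have h1 : a * xα ≤ a * (b/8) := mul_le_mul_of_nonneg_left hxα8 (le_of_lt ha0)
      have h2 : g xα ≤ -(a * (3*b/8)) := by
        rw [hgxα, hαdef]
        have h3 : a * (b/2) + a * (b/8) - a * b = -(a * (3*b/8)) := by ring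
        linarith
      have h3 : -(a * (3*b/8)) ≤ Ψ (2*b+ξ) := by
        have := neg_abs_le (Ψ (2*b+ξ))
        linarith [hc5]
      have h4 : Ψ (2*b+ξ) ≤ Ψ t := psi_antitone hΨanti htIoo h2bξ (by linarith [ht.2])
      linarith
    have hhigh : Ψ t ≤ g xβ := by
      have h1 : Ψ t ≤ Ψ w := psi_antitone hΨanti hwIoo htIoo ht.1
      have h2 : Ψ w ≤ Ψ (b/2) := psi_antitone hΨanti hb2m hwIoo hwb2
      have h3 : Ψ (b/2) ≤ |Ψ (b/2)| := le_abs_self _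
      have h4 : 0 ≤ a * xβ := mul_nonneg (le_of_lt ha0) (le_of_lt hxβm.1)
      rw [hgxβ, hK₀def]
      linarith
    obtain ⟨x, hx, hgx⟩ := intermediate_value_Icc' hxβα (hgc _ _ hIccP)
      (show Ψ t ∈ Set.Icc (g xα) (g xβ) from ⟨hlow, hhigh⟩)
    exact ⟨x, hx, hfx x (hIccP hx) t htIoo hgx⟩
  have cover3 : Set.Icc xβ s₂ ⊆ f '' Set.Icc w s₂ := by
    intro t ht
    have htIoo : t ∈ Set.Ioo (0:ℝ) 1 := hIccT ht
    have hlow : g w ≤ Ψ t := by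
      rw [hgw]
      exact psi_antitone hΨanti htIoo h2bξ (by linarith [ht.2])
    have hhigh : Ψ t ≤ g s₂ := by
      rw [hgs₂]
      exact (phi_le_iff hΨanti hinv2 htIoo).1 (by rw [← hxβdef]; exact ht.1)
    obtain ⟨x, hx, hgx⟩ := intermediate_value_Icc hws₂ (hgc _ _ hIccW)
      (show Ψ t ∈ Set.Icc (g w) (g s₂) from ⟨hlow, hhigh⟩)
    exact ⟨x, hx, hfx x (hIccW hx) t htIoo hgx⟩
  -- three-fold iterate
  have hit3 : f^[3] = f ∘ (f ∘ f) := by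
    funext x
    simp [Function.iterate_succ_apply', Function.comp]
  have himg3 : ∀ X : Set ℝ, f^[3] '' X = f '' (f '' (f '' X)) := by
    intro X
    rw [hit3]
    rw [Set.image_comp f (f ∘ f), Set.image_comp f f]
  have hsubWT : Set.Icc w s₂ ⊆ Set.Icc xβ s₂ := Set.Icc_subset_Icc hxβw (le_refl _)
  have selfcov : Set.Icc xβ s₂ ⊆ f '' Set.Icc xβ s₂ :=
    Set.Subset.trans cover3 (Set.image_mono (f := f) hsubWT)
  have covP : Set.Icc xβ s₂ ⊆ f^[3] '' Set.Icc xβ xα := by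
    rw [himg3]
    have step2 : Set.Icc xβ s₂ ⊆ f '' (f '' Set.Icc xβ xα) :=
      Set.Subset.trans cover3 (Set.image_mono (f := f) cover2)
    exact Set.Subset.trans selfcov (Set.image_mono (f := f) step2)
  have covQ : Set.Icc xβ s₂ ⊆ f^[3] '' Set.Icc s₁ s₂ := by
    rw [himg3]
    have step2 : Set.Icc w s₂ ⊆ f '' (f '' Set.Icc s₁ s₂) :=
      Set.Subset.trans cover2 (Set.image_mono (f := f) cover1)
    exact Set.Subset.trans cover3 (Set.image_mono (f := f) step2)
  -- continuity of the iterate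
  have hffc : ContinuousOn (f ∘ f) (Set.Ioo 0 1) := ContinuousOn.comp hfc hfc hfmaps
  have hF3c : ContinuousOn (f^[3]) (Set.Ioo 0 1) := by
    rw [hit3]
    exact ContinuousOn.comp hfc hffc (hfmaps.comp hfmaps)
  -- apply the abstract theorem
  obtain ⟨S, hSsub, hSunc, hSpair⟩ := abstract_scrambled (f^[3]) xβ xα s₁ s₂
    hxβα (by linarith [hxα8]) hs₁s₂ (hF3c.mono hIccP) (hF3c.mono hIccQ) covP covQ
  refine ⟨S, ?_, hSunc, ?_⟩
  · intro z hz
    have := hSsub hz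
    exact ⟨le_trans (le_of_lt hxβm.1) this.1, le_trans this.2 (by linarith [h2bξ.2])⟩
  · intro x hx y hy hxy
    obtain ⟨hfreq1, hfreq2⟩ := hSpair x hx y hy hxy
    have hxIoo : x ∈ Set.Ioo (0:ℝ) 1 := hIccT (hSsub hx)
    have hyIoo : y ∈ Set.Ioo (0:ℝ) 1 := hIccT (hSsub hy)
    have hbound : ∀ n : ℕ, |f^[n] x - f^[n] y| ≤ 1 := by
      intro n
      have h1 : f^[n] x ∈ Set.Ioo (0:ℝ) 1 := (Set.MapsTo.iterate hfmaps n) hxIoo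
      have h2 : f^[n] y ∈ Set.Ioo (0:ℝ) 1 := (Set.MapsTo.iterate hfmaps n) hyIoo
      rw [abs_le]
      constructor
      · linarith [h1.1, h2.2]
      · linarith [h1.2, h2.1]
    have hbnd0 : Filter.IsBoundedUnder (· ≥ ·) Filter.atTop
        (fun n : ℕ => |f^[n] x - f^[n] y|) :=
      Filter.isBoundedUnder_of ⟨0, fun n => abs_nonneg _⟩
    have hbnd1 : Filter.IsBoundedUnder (· ≤ ·) Filter.atTop
        (fun n : ℕ => |f^[n] x - f^[n] y|) :=
      Filter.isBoundedUnder_of ⟨1, fun n => hbound n⟩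
    have htrans : ∀ P : ℝ → Prop,
        (∃ᶠ n in Filter.atTop, P (|(f^[3])^[n] x - (f^[3])^[n] y|)) →
        ∃ᶠ n in Filter.atTop, P (|f^[n] x - f^[n] y|) := by
      intro P hP
      rw [Filter.frequently_atTop] at hP ⊢
      intro N
      obtain ⟨n, hn, hPn⟩ := hP N
      refine ⟨3*n, by omega, ?_⟩
      rw [Function.iterate_mul]
      exact hPn
    constructor
    · apply le_antisymm
      · have hle : ∀ ε : ℝ, 0 < ε →
            Filter.liminf (fun n : ℕ => |f^[n] x - f^[n] y|) Filter.atTop ≤ ε := by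
          intro ε hε
          apply Filter.liminf_le_of_frequently_le
          · exact htrans (fun v => v ≤ ε)
              ((hfreq1 ε hε).mono (fun n hn => le_of_lt hn))
          · exact hbnd0
        by_contra hpos
        push_neg at hpos
        have := hle (Filter.liminf (fun n : ℕ => |f^[n] x - f^[n] y|) Filter.atTop / 2)
          (by linarith)
        linarith
      · apply Filter.le_liminf_of_le
        · exact hbnd1.isCoboundedUnder_ge
        · exact Filter.Eventually.of_forall (fun n => abs_nonneg _)
    · have h1 : s₁ - xα ≤ Filter.limsup (fun n : ℕ => |f^[n] x - f^[n] y|) Filter.atTop :=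
        Filter.le_limsup_of_frequently_le (htrans (fun v => s₁ - xα ≤ v) hfreq2) hbnd1
      have h2 : 0 < s₁ - xα := by linarith [hxα8]
      linarith

end Stmt14Aux

theorem stmt14
    (Ψ Ψinv : ℝ → ℝ)
    (hΨcont : ContinuousOn Ψ (Set.Ioo 0 1))
    (hΨanti : StrictAntiOn Ψ (Set.Ioo 0 1))
    (hΨbij : Set.BijOn Ψ (Set.Ioo 0 1) Set.univ)
    (hΨsym : ∀ x ∈ Set.Ioo (0:ℝ) 1, Ψ (1 - x) = -Ψ x)
    (hinv1 : ∀ x ∈ Set.Ioo (0:ℝ) 1, Ψinv (Ψ x) = x)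
    (hinv2 : ∀ y : ℝ, Ψinv y ∈ Set.Ioo (0:ℝ) 1 ∧ Ψ (Ψinv y) = y)
    (b : ℝ) (hb : b ∈ Set.Ioo (0:ℝ) 1) (hbne : b ≠ 1/2) :
    ∃ A > (0:ℝ), ∀ a > A, ∀ f : ℝ → ℝ, f 0 = 0 → f 1 = 1 →
      (∀ x ∈ Set.Ioo (0:ℝ) 1, f x = Ψinv (Ψ x + a * (x - b))) →
      ∃ S : Set ℝ, S ⊆ Set.Icc (0:ℝ) 1 ∧ ¬ S.Countable ∧
        ∀ x ∈ S, ∀ y ∈ S, x ≠ y →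
          Filter.liminf (fun n : ℕ => |f^[n] x - f^[n] y|) Filter.atTop = 0 ∧
          0 < Filter.limsup (fun n : ℕ => |f^[n] x - f^[n] y|) Filter.atTop := by
  rcases lt_or_gt_of_ne hbne with hlt | hgt
  · obtain ⟨A, hA0, hkey⟩ :=
      Stmt14Aux.key_half Ψ Ψinv hΨcont hΨanti hinv1 hinv2 b hb.1 hlt
    exact ⟨A, hA0, fun a ha f _ _ hfx => hkey a ha f hfx⟩
  · have hb0' : 0 < 1 - b := by linarith [hb.2]
    have hb2' : 1 - b < 1/2 := by linarith
    obtain ⟨A, hA0, hkey⟩ :=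
      Stmt14Aux.key_half Ψ Ψinv hΨcont hΨanti hinv1 hinv2 (1-b) hb0' hb2'
    refine ⟨A, hA0, ?_⟩
    intro a ha f _ _ hfx
    set f' : ℝ → ℝ := fun x => 1 - f (1 - x) with hf'def
    have hmir : ∀ y : ℝ, Ψinv (-y) = 1 - Ψinv y := by
      intro y
      have hz : Ψinv y ∈ Set.Ioo (0:ℝ) 1 := (hinv2 y).1
      have h1z : 1 - Ψinv y ∈ Set.Ioo (0:ℝ) 1 := ⟨by linarith [hz.2], by linarith [hz.1]⟩
      have h2 : Ψ (1 - Ψinv y) = -y := by rw [hΨsym _ hz, (hinv2 y).2]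
      calc Ψinv (-y) = Ψinv (Ψ (1 - Ψinv y)) := by rw [h2]
        _ = 1 - Ψinv y := hinv1 _ h1z
    have hf'val : ∀ x ∈ Set.Ioo (0:ℝ) 1, f' x = Ψinv (Ψ x + a * (x - (1-b))) := by
      intro x hx
      have h1x : 1 - x ∈ Set.Ioo (0:ℝ) 1 := ⟨by linarith [hx.2], by linarith [hx.1]⟩
      have h1 : f' x = 1 - f (1 - x) := rfl
      rw [h1, hfx (1-x) h1x, hΨsym x hx]
      have he : -(Ψ x + a * (x - (1-b))) = -Ψ x + a * (1 - x - b) := by ring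
      rw [← he, hmir]
      ring
    obtain ⟨S', hS'sub, hS'unc, hS'pair⟩ := hkey a ha f' hf'val
    have hinvol : ∀ T : Set ℝ, (fun z : ℝ => 1 - z) '' ((fun z : ℝ => 1 - z) '' T) = T := by
      intro T
      ext u
      constructor
      · rintro ⟨v, ⟨w, hw, rfl⟩, rfl⟩
        simpa using hw
      · intro hu
        exact ⟨1 - u, ⟨u, hu, rfl⟩, by ring⟩
    refine ⟨(fun z : ℝ => 1 - z) '' S', ?_, ?_, ?_⟩
    · rintro z ⟨z', hz', rfl⟩
      have h := hS'sub hz'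
      constructor
      · show (0:ℝ) ≤ 1 - z'
        linarith [h.2]
      · show (1:ℝ) - z' ≤ 1
        linarith [h.1]
    · intro hc
      apply hS'unc
      rw [← hinvol S']
      exact hc.image _
    · rintro x ⟨x', hx', rfl⟩ y ⟨y', hy', rfl⟩ hxy
      simp only [] at hxy ⊢
      have hx'y' : x' ≠ y' := by
        intro h; exact hxy (by rw [h])
      have hiter : ∀ (n : ℕ) (z : ℝ), f^[n] (1 - z) = 1 - f'^[n] z := by
        intro n
        induction n with
        | zero => intro z; simp
        | succ n ih =>
          intro z
          have h1 : f (1 - z) = 1 - f' z := by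
            have h0 : f' z = 1 - f (1 - z) := rfl
            rw [h0]; ring
          rw [Function.iterate_succ_apply, Function.iterate_succ_apply, h1, ih (f' z)]
      have heqfun : (fun n : ℕ => |f^[n] (1 - x') - f^[n] (1 - y')|)
          = fun n : ℕ => |f'^[n] x' - f'^[n] y'| := by
        funext n
        rw [hiter n x', hiter n y',
          show (1 - f'^[n] x') - (1 - f'^[n] y') = -(f'^[n] x' - f'^[n] y') by ring, abs_neg]
      rw [heqfun]
      exact hS'pair x' hx' y' hy' hx'y'
end

section
/- If b ∈ (0,1) and b ≠ 1/2, then there exists A > 0 such that for every a > A the map f_{a,b} has periodic orbits of all periods: for every integer n ≥ 1 there exists x ∈ [0,1] with f_{a,b}ⁿ(x) = x whose least period under f_{a,b} equals n. -/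
/-- One-sided pullback lemma. -/
lemma pullback₁ (f : ℝ → ℝ) {α β c d : ℝ} (hab : α ≤ β) (hcd : c ≤ d)
    (hf : ContinuousOn f (Set.Icc α β)) (h1 : f α ≤ c) (h2 : d ≤ f β) :
    ∃ α' β', α ≤ α' ∧ α' ≤ β' ∧ β' ≤ β ∧
      Set.MapsTo f (Set.Icc α' β') (Set.Icc c d) ∧ f α' = c ∧ f β' = d := by
  have hScl : IsClosed (Set.Icc α β ∩ f ⁻¹' {d}) :=
    hf.preimage_isClosed_of_isClosed isClosed_Icc isClosed_singleton
  have hScomp : IsCompact (Set.Icc α β ∩ f ⁻¹' {d}) :=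
    isCompact_Icc.of_isClosed_subset hScl Set.inter_subset_left
  have hSne : (Set.Icc α β ∩ f ⁻¹' {d}).Nonempty := by
    obtain ⟨t, ht, hft⟩ :=
      intermediate_value_Icc hab hf (Set.mem_Icc.2 ⟨le_trans h1 hcd, h2⟩)
    exact ⟨t, ht, by simpa using hft⟩
  set β' := sInf (Set.Icc α β ∩ f ⁻¹' {d}) with hβ'def
  have hβ'mem : β' ∈ Set.Icc α β ∩ f ⁻¹' {d} := hScomp.sInf_mem hSne
  have hβ'Icc : β' ∈ Set.Icc α β := hβ'mem.1
  have hfβ' : f β' = d := hβ'mem.2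
  have hf' : ContinuousOn f (Set.Icc α β') := hf.mono (Set.Icc_subset_Icc le_rfl hβ'Icc.2)
  have hTcl : IsClosed (Set.Icc α β' ∩ f ⁻¹' {c}) :=
    hf'.preimage_isClosed_of_isClosed isClosed_Icc isClosed_singleton
  have hTcomp : IsCompact (Set.Icc α β' ∩ f ⁻¹' {c}) :=
    isCompact_Icc.of_isClosed_subset hTcl Set.inter_subset_left
  have hTne : (Set.Icc α β' ∩ f ⁻¹' {c}).Nonempty := by
    obtain ⟨t, ht, hft⟩ :=
      intermediate_value_Icc hβ'Icc.1 hf' (Set.mem_Icc.2 ⟨h1, by rw [hfβ']; exact hcd⟩)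
    exact ⟨t, ht, by simpa using hft⟩
  set α' := sSup (Set.Icc α β' ∩ f ⁻¹' {c}) with hα'def
  have hα'mem : α' ∈ Set.Icc α β' ∩ f ⁻¹' {c} := hTcomp.sSup_mem hTne
  have hα'Icc : α' ∈ Set.Icc α β' := hα'mem.1
  have hfα' : f α' = c := hα'mem.2
  refine ⟨α', β', hα'Icc.1, hα'Icc.2, hβ'Icc.2, ?_, hfα', hfβ'⟩
  intro t ht
  have htαβ : t ∈ Set.Icc α β := ⟨le_trans hα'Icc.1 ht.1, le_trans ht.2 hβ'Icc.2⟩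
  constructor
  · by_contra hlt
    push_neg at hlt
    have ht' : α' < t := by
      rcases eq_or_lt_of_le ht.1 with he | h
      · rw [← he, hfα'] at hlt; linarith
      · exact h
    have hsub : ContinuousOn f (Set.Icc t β') :=
      hf.mono (Set.Icc_subset_Icc htαβ.1 hβ'Icc.2)
    obtain ⟨s, hs, hfs⟩ := intermediate_value_Icc ht.2 hsub
      (Set.mem_Icc.2 ⟨le_of_lt hlt, by rw [hfβ']; exact hcd⟩)
    have hsle : s ≤ α' :=
      le_csSup hTcomp.bddAbove ⟨⟨le_trans htαβ.1 hs.1, hs.2⟩, by simpa using hfs⟩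
    linarith [hs.1]
  · by_contra hlt
    push_neg at hlt
    have ht' : t < β' := by
      rcases eq_or_lt_of_le ht.2 with he | h
      · rw [he, hfβ'] at hlt; linarith
      · exact h
    have hsub : ContinuousOn f (Set.Icc α' t) :=
      hf.mono (Set.Icc_subset_Icc hα'Icc.1 htαβ.2)
    obtain ⟨s, hs, hfs⟩ := intermediate_value_Icc ht.1 hsub
      (Set.mem_Icc.2 ⟨by rw [hfα']; exact hcd, le_of_lt hlt⟩)
    have hsle : β' ≤ s := csInf_le hScomp.bddBelow
      ⟨⟨le_trans hα'Icc.1 hs.1, le_trans hs.2 htαβ.2⟩, by simpa using hfs⟩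
    linarith [hs.2]

lemma pullback (f : ℝ → ℝ) {α β c d : ℝ} (hab : α ≤ β) (hcd : c ≤ d)
    (hf : ContinuousOn f (Set.Icc α β))
    (h : (f α ≤ c ∧ d ≤ f β) ∨ (f β ≤ c ∧ d ≤ f α)) :
    ∃ α' β', α ≤ α' ∧ α' ≤ β' ∧ β' ≤ β ∧
      Set.MapsTo f (Set.Icc α' β') (Set.Icc c d) ∧
      ((f α' = c ∧ f β' = d) ∨ (f α' = d ∧ f β' = c)) := by
  rcases h with ⟨h1, h2⟩ | ⟨h1, h2⟩
  · obtain ⟨α', β', ha, hb, hc, hm, he1, he2⟩ := pullback₁ f hab hcd hf h1 h2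
    exact ⟨α', β', ha, hb, hc, hm, Or.inl ⟨he1, he2⟩⟩
  · set g : ℝ → ℝ := fun t => f (α + β - t) with hg
    have hmapsto : Set.MapsTo (fun t => α + β - t) (Set.Icc α β) (Set.Icc α β) := by
      intro t ht; simp only [Set.mem_Icc] at ht ⊢; constructor <;> linarith [ht.1, ht.2]
    have hgc : ContinuousOn g (Set.Icc α β) :=
      hf.comp ((continuous_const.sub continuous_id).continuousOn) hmapsto
    have hgα : g α ≤ c := by simpa [hg] using h1
    have hgβ : d ≤ g β := by simpa [hg] using h2
    obtain ⟨α', β', ha, hb, hc, hm, he1, he2⟩ := pullback₁ g hab hcd hgc hgα hgβ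
    refine ⟨α + β - β', α + β - α', by linarith, by linarith, by linarith, ?_, Or.inr ?_⟩
    · intro t ht
      have : α + β - t ∈ Set.Icc α' β' := ⟨by simp at ht ⊢; linarith [ht.2], by simp at ht ⊢; linarith [ht.1]⟩
      have := hm this
      simpa [hg, show α + β - (α + β - t) = t by ring] using this
    · constructor
      · have := he2; simpa [hg] using this
      · have := he1; simpa [hg] using this

lemma horseshoe (f : ℝ → ℝ) {l m α β : ℝ}
    (h1 : l < m) (h2 : m < α) (h3 : α < β)
    (hf : ContinuousOn f (Set.Icc l β))
    (hfl : f l ≤ α) (hfm : β ≤ f m) (hfα : β ≤ f α) (hfβ : f β ≤ l)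
    (n : ℕ) (hn : 2 ≤ n) :
    ∃ x ∈ Set.Icc l β, f^[n] x = x ∧ ∀ k, 1 ≤ k → k < n → f^[k] x ≠ x := by
  -- itinerary: position j is in B = [l,m] iff j = n-1, else in A = [α,β]
  set lo : ℕ → ℝ := fun j => if j = n - 1 then l else α with hlo
  set hi : ℕ → ℝ := fun j => if j = n - 1 then m else β with hhi
  have hlohi : ∀ j, lo j ≤ hi j := by
    intro j; by_cases h : j = n - 1 <;> simp [hlo, hhi, h, le_of_lt h1, le_of_lt h3]
  have hsubl : ∀ j, l ≤ lo j := by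
    intro j; by_cases h : j = n - 1 <;> simp [hlo, h] <;> linarith
  have hsubr : ∀ j, hi j ≤ β := by
    intro j; by_cases h : j = n - 1 <;> simp [hhi, h] <;> linarith
  -- main chain construction
  have main : ∀ t, t ≤ n → ∃ u v, lo (n - t) ≤ u ∧ u ≤ v ∧ v ≤ hi (n - t) ∧
      (∀ j, j ≤ t → Set.MapsTo f^[j] (Set.Icc u v) (Set.Icc (lo (n - t + j)) (hi (n - t + j)))) ∧
      ((f^[t] u = α ∧ f^[t] v = β) ∨ (f^[t] u = β ∧ f^[t] v = α)) := by
    intro t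
    induction t with
    | zero =>
      intro _
      have hnn : ¬ (n = n - 1) := by omega
      have e1 : lo (n - 0) = α := by simp [hlo, hnn]
      have e2 : hi (n - 0) = β := by simp [hhi, hnn]
      refine ⟨α, β, le_of_eq e1, le_of_lt h3, e2.ge, ?_, Or.inl ⟨rfl, rfl⟩⟩
      intro j hj
      interval_cases j
      simp only [Function.iterate_zero, Nat.add_zero]
      rw [e1, e2]
      exact fun x hx => hx
    | succ t ih =>
      intro ht
      obtain ⟨u, v, hu, huv, hv, hmaps, hends⟩ := ih (by omega)
      -- source interval index k' = n - (t+1); target index k = n - t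
      by_cases hcase : n - (t + 1) = n - 1
      ·
        have ht0 : t = 0 := by omega
        subst ht0
        have hk : ¬ (n = n - 1) := by omega
        have hu' : α ≤ u := by simpa [hlo, hk] using hu
        have hv' : v ≤ β := by simpa [hhi, hk] using hv
        obtain ⟨u', v', ha', hb', hc', hm', he'⟩ :=
          pullback f (le_of_lt h1) huv (hf.mono (Set.Icc_subset_Icc le_rfl (by linarith)))
          (Or.inl ⟨le_trans hfl hu', le_trans hv' hfm⟩)
        refine ⟨u', v', ?_, hb', ?_, ?_, ?_⟩
        · simpa [hlo, hcase] using ha'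
        · simpa [hhi, hcase] using hc'
        · intro j hj
          rcases Nat.eq_zero_or_pos j with rfl | hjpos
          · simp only [Function.iterate_zero, Nat.add_zero]
            intro x hx
            have h1' : lo (n - 1) = l := by simp [hlo]
            have h2' : hi (n - 1) = m := by simp [hhi]
            rw [hcase, h1', h2']
            exact ⟨le_trans ha' hx.1, le_trans hx.2 hc'⟩
          · obtain ⟨j', rfl⟩ : ∃ j', j = j' + 1 := ⟨j - 1, by omega⟩
            intro x hx
            rw [Function.iterate_succ_apply]
            have : n - (0 + 1) + (j' + 1) = n - 0 + j' := by omega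
            rw [this]
            exact hmaps j' (by omega) (hm' hx)
        · rcases hends with ⟨e1, e2⟩ | ⟨e1, e2⟩ <;> rcases he' with ⟨g1, g2⟩ | ⟨g1, g2⟩
          · exact Or.inl ⟨by rw [Function.iterate_succ_apply, g1, e1],
              by rw [Function.iterate_succ_apply, g2, e2]⟩
          · exact Or.inr ⟨by rw [Function.iterate_succ_apply, g1, e2],
              by rw [Function.iterate_succ_apply, g2, e1]⟩
          · exact Or.inr ⟨by rw [Function.iterate_succ_apply, g1, e1],
              by rw [Function.iterate_succ_apply, g2, e2]⟩
          · exact Or.inl ⟨by rw [Function.iterate_succ_apply, g1, e2],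
              by rw [Function.iterate_succ_apply, g2, e1]⟩
      · -- source is A = [α, β]
        have hu' : l ≤ u := le_trans (hsubl _) hu
        have hv' : v ≤ β := le_trans hv (hsubr _)
        obtain ⟨u', v', ha', hb', hc', hm', he'⟩ :=
          pullback f (le_of_lt h3) huv (hf.mono (Set.Icc_subset_Icc (by linarith) le_rfl))
          (Or.inr ⟨le_trans hfβ hu', le_trans hv' hfα⟩)
        refine ⟨u', v', ?_, hb', ?_, ?_, ?_⟩
        · simpa [hlo, hcase] using ha'
        · simpa [hhi, hcase] using hc'
        · intro j hj
          rcases Nat.eq_zero_or_pos j with rfl | hjpos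
          · simp only [Function.iterate_zero, Nat.add_zero]
            intro x hx
            have h1' : lo (n - (t+1)) = α := by simp [hlo, hcase]
            have h2' : hi (n - (t+1)) = β := by simp [hhi, hcase]
            rw [h1', h2']
            exact ⟨le_trans ha' hx.1, le_trans hx.2 hc'⟩
          · obtain ⟨j', rfl⟩ : ∃ j', j = j' + 1 := ⟨j - 1, by omega⟩
            intro x hx
            rw [Function.iterate_succ_apply]
            have : n - (t + 1) + (j' + 1) = n - t + j' := by omega
            rw [this]
            exact hmaps j' (by omega) (hm' hx)
        · rcases hends with ⟨e1, e2⟩ | ⟨e1, e2⟩ <;> rcases he' with ⟨g1, g2⟩ | ⟨g1, g2⟩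
          · exact Or.inl ⟨by rw [Function.iterate_succ_apply, g1, e1],
              by rw [Function.iterate_succ_apply, g2, e2]⟩
          · exact Or.inr ⟨by rw [Function.iterate_succ_apply, g1, e2],
              by rw [Function.iterate_succ_apply, g2, e1]⟩
          · exact Or.inr ⟨by rw [Function.iterate_succ_apply, g1, e1],
              by rw [Function.iterate_succ_apply, g2, e2]⟩
          · exact Or.inl ⟨by rw [Function.iterate_succ_apply, g1, e2],
              by rw [Function.iterate_succ_apply, g2, e1]⟩
  obtain ⟨u, v, hu, huv, hv, hmaps, hends⟩ := main n le_rfl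
  have hn0 : n - n = 0 := by omega
  rw [hn0] at hu hv hmaps
  have h0n : ¬ (0 = n - 1) := by omega
  have huA : α ≤ u := by simpa [hlo, h0n] using hu
  have hvA : v ≤ β := by simpa [hhi, h0n] using hv
  -- continuity of iterates on [u,v]
  have hcontIter : ∀ j, j ≤ n → ContinuousOn f^[j] (Set.Icc u v) := by
    intro j
    induction j with
    | zero => intro _; simpa using continuousOn_id
    | succ j ih =>
      intro hj
      rw [Function.iterate_succ']
      refine ContinuousOn.comp hf (ih (by omega)) ?_
      intro x hx
      have := hmaps j (by omega) hx
      simp only [Nat.zero_add] at this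
      exact ⟨le_trans (hsubl j) this.1, le_trans this.2 (hsubr j)⟩
  -- fixed point of f^[n] on [u,v] via IVT
  have hgc : ContinuousOn (fun x => f^[n] x - x) (Set.Icc u v) :=
    (hcontIter n le_rfl).sub continuousOn_id
  have hx : ∃ x ∈ Set.Icc u v, f^[n] x = x := by
    rcases hends with ⟨e1, e2⟩ | ⟨e1, e2⟩
    · have hgu : f^[n] u - u ≤ 0 := by rw [e1]; linarith
      have hgv : 0 ≤ f^[n] v - v := by rw [e2]; linarith
      obtain ⟨x, hx, hfx⟩ := intermediate_value_Icc huv hgc (Set.mem_Icc.2 ⟨hgu, hgv⟩)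
      exact ⟨x, hx, by have h' : f^[n] x - x = 0 := hfx; linarith⟩
    · have hgu : 0 ≤ f^[n] u - u := by rw [e1]; linarith
      have hgv : f^[n] v - v ≤ 0 := by rw [e2]; linarith
      obtain ⟨x, hx, hfx⟩ := intermediate_value_Icc' huv hgc (Set.mem_Icc.2 ⟨hgv, hgu⟩)
      exact ⟨x, hx, by have h' : f^[n] x - x = 0 := hfx; linarith⟩
  obtain ⟨x, hxuv, hxfix⟩ := hx
  have hxIcc : x ∈ Set.Icc l β :=
    ⟨le_trans (by linarith : l ≤ u) hxuv.1, le_trans hxuv.2 hvA⟩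
  refine ⟨x, hxIcc, hxfix, ?_⟩
  intro k hk1 hkn hkfix
  -- f^[n-1] x ∈ B but also = f^[(n-1) % k] x ∈ A : contradiction
  have hper : ∀ q r, f^[q * k + r] x = f^[r] x := by
    intro q
    induction q with
    | zero => intro r; simp
    | succ q ih =>
      intro r
      have : (q + 1) * k + r = (q * k + r) + k := by ring
      rw [this, Function.iterate_add_apply, hkfix, ih]
  have hrew : f^[n-1] x = f^[(n-1) % k] x := by
    conv_lhs => rw [show n - 1 = ((n-1)/k) * k + (n-1) % k from by
      rw [Nat.mul_comm]; exact (Nat.div_add_mod _ _).symm]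
    exact hper _ _
  have hmem1 : f^[n-1] x ∈ Set.Icc (lo (n-1)) (hi (n-1)) := by
    have := hmaps (n-1) (by omega) hxuv
    simpa using this
  have hmlt : (n-1) % k < k := Nat.mod_lt _ (by omega)
  have hmem2 : f^[(n-1) % k] x ∈ Set.Icc (lo ((n-1) % k)) (hi ((n-1) % k)) := by
    have := hmaps ((n-1) % k) (by omega) hxuv
    simpa using this
  have hne : ¬ ((n-1) % k = n - 1) := by omega
  rw [hrew] at hmem1
  have hB : f^[(n-1) % k] x ≤ m := by simpa [hhi] using hmem1.2
  have hA : α ≤ f^[(n-1) % k] x := by simpa [hlo, hne] using hmem2.1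
  linarith


lemma psinv_cont (Ψ Ψinv : ℝ → ℝ)
    (hΨanti : StrictAntiOn Ψ (Set.Ioo 0 1))
    (hinv1 : ∀ x ∈ Set.Ioo (0:ℝ) 1, Ψinv (Ψ x) = x)
    (hinv2 : ∀ y : ℝ, Ψinv y ∈ Set.Ioo (0:ℝ) 1 ∧ Ψ (Ψinv y) = y) :
    Continuous Ψinv := by
  have hanti : StrictAnti Ψinv := by
    intro s t hst
    rcases lt_trichotomy (Ψinv t) (Ψinv s) with h | h | h
    · exact h
    · exfalso
      have := congrArg Ψ h
      rw [(hinv2 s).2, (hinv2 t).2] at this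
      linarith
    · exfalso
      have := hΨanti (hinv2 s).1 (hinv2 t).1 h
      rw [(hinv2 s).2, (hinv2 t).2] at this
      linarith
  set g : ℝ → ℝ := fun y => Ψinv (-y) with hg
  have hmono : StrictMono g := fun s t hst => hanti (by linarith)
  have hrange : ∀ y : ℝ, Set.Ioo (0:ℝ) 1 ⊆ g '' Set.univ := by
    intro y x hx
    exact ⟨-(Ψ x), Set.mem_univ _, by simp [hg, hinv1 x hx]⟩
  have hgc : Continuous g := by
    rw [continuous_iff_continuousAt]
    intro y
    apply (hmono.strictMonoOn Set.univ).continuousAt_of_image_mem_nhds Filter.univ_mem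
    have : g y ∈ Set.Ioo (0:ℝ) 1 := (hinv2 (-y)).1
    exact Filter.mem_of_superset (isOpen_Ioo.mem_nhds this) (hrange y)
  have : Ψinv = fun y => g (-y) := by
    funext y; simp [hg]
  rw [this]
  exact hgc.comp continuous_neg


lemma key (Ψ Ψinv : ℝ → ℝ)
    (hΨcont : ContinuousOn Ψ (Set.Ioo 0 1))
    (hΨanti : StrictAntiOn Ψ (Set.Ioo 0 1))
    (hinv1 : ∀ x ∈ Set.Ioo (0:ℝ) 1, Ψinv (Ψ x) = x)
    (hinv2 : ∀ y : ℝ, Ψinv y ∈ Set.Ioo (0:ℝ) 1 ∧ Ψ (Ψinv y) = y)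
    (b : ℝ) (hb : b ∈ Set.Ioo (0:ℝ) 1) (hbhalf : b < 1/2) :
    ∃ A > (0:ℝ), ∀ a > A, ∀ f : ℝ → ℝ, f 0 = 0 → f 1 = 1 →
      (∀ x ∈ Set.Ioo (0:ℝ) 1, f x = Ψinv (Ψ x + a * (x - b))) →
      ∀ n : ℕ, 1 ≤ n → ∃ x ∈ Set.Icc (0:ℝ) 1,
        f^[n] x = x ∧ ∀ m : ℕ, 1 ≤ m → m < n → f^[m] x ≠ x := by
  obtain ⟨hb0, hb1⟩ := hb
  -- comparison helpers
  have Hle : ∀ t x, x ∈ Set.Ioo (0:ℝ) 1 → Ψ x ≤ t → Ψinv t ≤ x := by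
    intro t x hx hxt
    by_contra h
    push_neg at h
    have := hΨanti hx (hinv2 t).1 h
    rw [(hinv2 t).2] at this
    linarith
  have Hge : ∀ t x, x ∈ Set.Ioo (0:ℝ) 1 → t ≤ Ψ x → x ≤ Ψinv t := by
    intro t x hx hxt
    by_contra h
    push_neg at h
    have := hΨanti (hinv2 t).1 hx h
    rw [(hinv2 t).2] at this
    linarith
  have Hlt : ∀ t x, x ∈ Set.Ioo (0:ℝ) 1 → Ψ x < t → Ψinv t < x := by
    intro t x hx hxt
    rcases lt_or_ge (Ψinv t) x with h | h
    · exact h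
    · exfalso
      rcases eq_or_lt_of_le h with he | h
      · rw [he, (hinv2 t).2] at hxt
        linarith
      · have := hΨanti hx (hinv2 t).1 h
        rw [(hinv2 t).2] at this; linarith
  set δ : ℝ := min b (1 - 2*b) / 2 with hδdef
  have hδpos : 0 < δ := by
    have : 0 < min b (1 - 2*b) := lt_min hb0 (by linarith)
    simp only [hδdef]; linarith
  have hδb : δ < b := by
    have h1 : min b (1 - 2*b) ≤ b := min_le_left _ _
    simp only [hδdef]; linarith
  have hδ2b : δ < 1 - 2*b := by
    have h1 : min b (1 - 2*b) ≤ 1 - 2*b := min_le_right _ _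
    simp only [hδdef]; linarith
  have hδhalf : δ < 1/2 := by linarith
  have hδIoo : δ ∈ Set.Ioo (0:ℝ) 1 := ⟨hδpos, by linarith⟩
  have hδ2Ioo : δ/2 ∈ Set.Ioo (0:ℝ) 1 := ⟨by linarith, by linarith⟩
  have h1δIoo : 1 - δ ∈ Set.Ioo (0:ℝ) 1 := ⟨by linarith, by linarith⟩
  set C1 : ℝ := Ψ δ with hC1
  set C2 : ℝ := Ψ (δ/2) with hC2
  set C3 : ℝ := Ψ (1 - δ) with hC3
  have hC12 : C1 < C2 := hΨanti hδ2Ioo hδIoo (by linarith)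
  have hC31 : C3 < C1 := hΨanti hδIoo h1δIoo (by linarith)
  set M : ℝ := max (max ((C2-C1)/b) ((C1-C3)/(b-δ)))
      (max ((C1-C3)/(1-δ-2*b)) ((C2-C3)/(b-δ/2))) with hM
  have hM1 : (C2-C1)/b ≤ M := le_trans (le_max_left _ _) (le_max_left _ _)
  have hM2 : (C1-C3)/(b-δ) ≤ M := le_trans (le_max_right _ _) (le_max_left _ _)
  have hM3 : (C1-C3)/(1-δ-2*b) ≤ M := le_trans (le_max_left _ _) (le_max_right _ _)
  have hM4 : (C2-C3)/(b-δ/2) ≤ M := le_trans (le_max_right _ _) (le_max_right _ _)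
  have hMpos : 0 < M := lt_of_lt_of_le (div_pos (by linarith) hb0) hM1
  refine ⟨1 + M, by linarith, ?_⟩
  intro a ha f hf0 hf1 hfx n hn
  have hapos : (0:ℝ) < a := by linarith
  have hMa : M < a := by linarith
  rcases eq_or_lt_of_le hn with h1n | h2n
  · refine ⟨0, ⟨le_rfl, zero_le_one⟩, ?_, ?_⟩
    · rw [← h1n]; simpa using hf0
    · intro m hm1 hmn; omega
  have h2n' : 2 ≤ n := h2n
  have ht1 : C2 - C1 < a * b := by
    have := (div_lt_iff₀ hb0).mp (lt_of_le_of_lt hM1 hMa); linarith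
  have ht2 : C1 - C3 < a * (b - δ) := by
    have := (div_lt_iff₀ (by linarith : (0:ℝ) < b - δ)).mp
      (lt_of_le_of_lt hM2 hMa); linarith
  have ht3 : C1 - C3 < a * (1 - δ - 2*b) := by
    have := (div_lt_iff₀ (by linarith : (0:ℝ) < 1 - δ - 2*b)).mp
      (lt_of_le_of_lt hM3 hMa); linarith
  have ht4 : C2 - C3 < a * (b - δ/2) := by
    have := (div_lt_iff₀ (by linarith : (0:ℝ) < b - δ/2)).mp
      (lt_of_le_of_lt hM4 hMa); linarith
  -- the left endpoint

  set l : ℝ := Ψinv (C1 + a * b) with hl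
  have hlIoo : l ∈ Set.Ioo (0:ℝ) 1 := (hinv2 _).1
  have hlm : l < δ/2 := Hlt _ _ hδ2Ioo (by rw [← hC2]; linarith)
  -- the four function inequalities
  have hfαval : f δ = Ψinv (C1 + a * (δ - b)) := hfx δ hδIoo
  have hfα : 1 - δ ≤ f δ := by
    rw [hfαval]
    refine Hge _ _ h1δIoo ?_
    rw [← hC3]
    have hring : a * (δ - b) = -(a * (b - δ)) := by ring
    linarith
  have hfβval : f (1-δ) = Ψinv (C3 + a * (1 - δ - b)) := hfx (1-δ) h1δIoo
  have hΨl : Ψ l = C1 + a * b := by rw [hl]; exact (hinv2 _).2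
  have hfβ : f (1-δ) ≤ l := by
    rw [hfβval]
    refine Hle _ _ hlIoo ?_
    rw [hΨl]
    have hring : a * (1 - δ - b) = a * (1 - δ - 2*b) + a * b := by ring
    linarith
  have hfmval : f (δ/2) = Ψinv (C2 + a * (δ/2 - b)) := hfx (δ/2) hδ2Ioo
  have hfm : 1 - δ ≤ f (δ/2) := by
    rw [hfmval]
    refine Hge _ _ h1δIoo ?_
    rw [← hC3]
    have hring : a * (δ/2 - b) = -(a * (b - δ/2)) := by ring
    linarith
  have hflval : f l = Ψinv (Ψ l + a * (l - b)) := hfx l hlIoo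
  have hfl : f l ≤ δ := by
    rw [hflval]
    refine Hle _ _ hδIoo ?_
    rw [← hC1, hΨl]
    have hring : a * (l - b) = a * l - a * b := by ring
    have hal : 0 < a * l := mul_pos hapos hlIoo.1
    linarith
  -- continuity of f on [l, 1-δ]
  have hsub : Set.Icc l (1-δ) ⊆ Set.Ioo (0:ℝ) 1 := fun x hx =>
    ⟨lt_of_lt_of_le hlIoo.1 hx.1, lt_of_le_of_lt hx.2 h1δIoo.2⟩
  have hinner : ContinuousOn (fun x => Ψ x + a * (x - b)) (Set.Icc l (1-δ)) :=
    (hΨcont.mono hsub).add ((continuous_const.mul (continuous_id.sub continuous_const)).continuousOn)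
  have hFc : ContinuousOn (fun x => Ψinv (Ψ x + a * (x - b))) (Set.Icc l (1-δ)) :=
    (psinv_cont Ψ Ψinv hΨanti hinv1 hinv2).comp_continuousOn hinner
  have hfc : ContinuousOn f (Set.Icc l (1-δ)) :=
    hFc.congr (fun x hx => hfx x (hsub hx))
  obtain ⟨x, hxmem, hxfix, hxleast⟩ :=
    horseshoe f hlm (by linarith : δ/2 < δ) (by linarith : δ < 1 - δ)
      hfc hfl hfm hfα hfβ n h2n'
  exact ⟨x, ⟨le_trans (le_of_lt hlIoo.1) hxmem.1, le_trans hxmem.2 (by linarith)⟩,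
    hxfix, hxleast⟩

theorem stmt15
    (Ψ Ψinv : ℝ → ℝ)
    (hΨcont : ContinuousOn Ψ (Set.Ioo 0 1))
    (hΨanti : StrictAntiOn Ψ (Set.Ioo 0 1))
    (hΨbij : Set.BijOn Ψ (Set.Ioo 0 1) Set.univ)
    (hΨsym : ∀ x ∈ Set.Ioo (0:ℝ) 1, Ψ (1 - x) = -Ψ x)
    (hinv1 : ∀ x ∈ Set.Ioo (0:ℝ) 1, Ψinv (Ψ x) = x)
    (hinv2 : ∀ y : ℝ, Ψinv y ∈ Set.Ioo (0:ℝ) 1 ∧ Ψ (Ψinv y) = y)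
    (b : ℝ) (hb : b ∈ Set.Ioo (0:ℝ) 1) (hbne : b ≠ 1/2) :
    ∃ A > (0:ℝ), ∀ a > A, ∀ f : ℝ → ℝ, f 0 = 0 → f 1 = 1 →
      (∀ x ∈ Set.Ioo (0:ℝ) 1, f x = Ψinv (Ψ x + a * (x - b))) →
      ∀ n : ℕ, 1 ≤ n → ∃ x ∈ Set.Icc (0:ℝ) 1,
        f^[n] x = x ∧ ∀ m : ℕ, 1 ≤ m → m < n → f^[m] x ≠ x := by
  rcases lt_or_gt_of_ne hbne with hlt | hgt
  · exact key Ψ Ψinv hΨcont hΨanti hinv1 hinv2 b hb hlt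
  · -- symmetry: conjugate by x ↦ 1 - x and use the result for 1 - b
    have hsym' : ∀ t : ℝ, Ψinv (-t) = 1 - Ψinv t := by
      intro t
      have hz : Ψinv t ∈ Set.Ioo (0:ℝ) 1 := (hinv2 t).1
      have h1z : 1 - Ψinv t ∈ Set.Ioo (0:ℝ) 1 := ⟨by linarith [hz.2], by linarith [hz.1]⟩
      have : Ψ (1 - Ψinv t) = -t := by rw [hΨsym _ hz, (hinv2 t).2]
      rw [← this, hinv1 _ h1z]
    obtain ⟨A, hApos, hmain⟩ := key Ψ Ψinv hΨcont hΨanti hinv1 hinv2 (1 - b)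
      ⟨by linarith [hb.2], by linarith [hb.1]⟩ (by linarith)
    refine ⟨A, hApos, ?_⟩
    intro a ha f hf0 hf1 hfx n hn
    set g : ℝ → ℝ := fun x => 1 - f (1 - x) with hg
    have hg0 : g 0 = 0 := by simp [hg, hf1]
    have hg1 : g 1 = 1 := by simp [hg, hf0]
    have hgx : ∀ x ∈ Set.Ioo (0:ℝ) 1, g x = Ψinv (Ψ x + a * (x - (1 - b))) := by
      intro x hx
      have h1x : 1 - x ∈ Set.Ioo (0:ℝ) 1 := ⟨by linarith [hx.2], by linarith [hx.1]⟩
      have : g x = 1 - Ψinv (Ψ (1 - x) + a * (1 - x - b)) := by rw [hg]; simp [hfx _ h1x]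
      rw [this, ← hsym', hΨsym x hx]
      ring_nf
    obtain ⟨y, hy, hyfix, hyleast⟩ := hmain a ha g hg0 hg1 hgx n hn
    have hsemi : Function.Semiconj (fun t : ℝ => 1 - t) g f := by
      intro t
      simp only [hg]
      ring
    have hiter : ∀ k : ℕ, f^[k] (1 - y) = 1 - g^[k] y := by
      intro k
      exact ((hsemi.iterate_right k) y).symm
    refine ⟨1 - y, ⟨by linarith [hy.2], by linarith [hy.1]⟩, ?_, ?_⟩
    · rw [hiter n, hyfix]
    · intro m hm1 hmn hcontra
      rw [hiter m] at hcontra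
      exact hyleast m hm1 hmn (by linarith)
end

section
/- If b ∈ (0,1) and b ≠ 1/2, then there exists A > 0 such that for every a > A the topological entropy of the continuous map f_{a,b} : [0,1] → [0,1] is strictly positive. -/
open Set Dynamics UniformSpace Filter Uniformity
open scoped ENNReal


/-- Itinerary lemma: realize any admissible symbolic word by an orbit. -/
lemma horseshoe_itinerary {f : ℝ → ℝ} {S : Bool → Set ℝ}
    (hne : ∀ v, (S v).Nonempty)
    (hTT : S true ⊆ f '' S true) (hFT : S false ⊆ f '' S true)
    (hTF : S true ⊆ f '' S false) :
    ∀ (n : ℕ) (c : ℕ → Bool), (∀ k, c k = false → c (k+1) = true) →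
      ∃ x, ∀ k ≤ n, f^[k] x ∈ S (c k) := by
  intro n
  induction n with
  | zero =>
    intro c _
    obtain ⟨x, hx⟩ := hne (c 0)
    exact ⟨x, fun k hk => by simp [Nat.le_zero.1 hk, hx]⟩
  | succ n ih =>
    intro c hc
    obtain ⟨y, hy⟩ := ih (fun k => c (k+1)) (fun k h => hc (k+1) h)
    have hy1 : y ∈ S (c 1) := by simpa using hy 0 (Nat.zero_le n)
    have : ∃ x ∈ S (c 0), f x = y := by
      cases h0 : c 0 with
      | false =>
        have h1 : c 1 = true := hc 0 h0
        rw [h1] at hy1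
        obtain ⟨x, hx, hfx⟩ := hTF hy1
        exact ⟨x, hx, hfx⟩
      | true =>
        have : y ∈ f '' S true := by
          cases h1 : c 1 with
          | false => rw [h1] at hy1; exact hFT hy1
          | true => rw [h1] at hy1; exact hTT hy1
        obtain ⟨x, hx, hfx⟩ := this
        exact ⟨x, hx, hfx⟩
    obtain ⟨x, hx, hfx⟩ := this
    refine ⟨x, fun k hk => ?_⟩
    cases k with
    | zero => simpa using hx
    | succ j =>
      rw [Function.iterate_succ_apply, hfx]
      exact hy j (Nat.succ_le_succ_iff.1 hk)

/-- A "golden-mean" horseshoe forces positive topological entropy. -/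
lemma horseshoe_entropy {f : ℝ → ℝ} {I J : Set ℝ} {γ : ℝ} (hγ : 0 < γ)
    (hIF : I ⊆ Icc 0 1) (hJF : J ⊆ Icc 0 1)
    (hInon : I.Nonempty) (hJnon : J.Nonempty)
    (hsep : ∀ x ∈ I, ∀ y ∈ J, γ ≤ |x - y|)
    (hII : I ⊆ f '' I) (hJI : J ⊆ f '' I) (hIJ : I ⊆ f '' J) :
    0 < Dynamics.coverEntropy f (Icc 0 1) := by
  classical
  set U : Set (ℝ × ℝ) := {p | dist p.1 p.2 < γ/2} with hUdef
  have hU : U ∈ 𝓤 ℝ := Metric.dist_mem_uniformity (by positivity)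
  set S : Bool → Set ℝ := fun v => cond v I J with hSdef
  have hne : ∀ v, (S v).Nonempty := by rintro (_|_) <;> assumption
  have hSF : ∀ v, S v ⊆ Icc 0 1 := by rintro (_|_) <;> assumption
  have hStrue : S true = I := by simp [hSdef]
  have hSfalse : S false = J := by simp [hSdef]
  -- main cardinality estimate
  have key : ∀ n : ℕ, ((2:ℕ∞)^n) ≤ netMaxcard f (Icc 0 1) U (2*n) := by
    intro n
    -- words
    set c : (Fin n → Bool) → ℕ → Bool := fun m k =>
      if h : k % 2 = 0 ∧ k / 2 < n then m ⟨k/2, h.2⟩ else true with hcdef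
    have hadm : ∀ m k, c m k = false → c m (k+1) = true := by
      intro m k hk
      have hk2 : k % 2 = 0 := by
        by_contra h
        simp only [c] at hk
        rw [dif_neg (fun hh => h hh.1)] at hk
        simp at hk
      have : (k+1) % 2 = 1 := by omega
      simp only [c]
      rw [dif_neg (by omega)]
    have hx : ∀ m : Fin n → Bool, ∃ x, ∀ k ≤ 2*n, f^[k] x ∈ S (c m k) := by
      intro m
      exact horseshoe_itinerary hne hII hJI hIJ (2*n) (c m) (hadm m)
    choose x hx using hx
    have hcm : ∀ (m : Fin n → Bool) (j : Fin n), c m (2*j) = m j := by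
      intro m j
      simp only [c]
      rw [dif_pos ⟨by omega, by omega⟩]
      congr 1
      apply Fin.ext
      simp only [Fin.val_mk]
      omega
    have hsep' : ∀ m m' : Fin n → Bool, m ≠ m' →
        ∃ k < 2*n, γ ≤ |f^[k] (x m) - f^[k] (x m')| := by
      intro m m' hmm
      obtain ⟨j, hj⟩ : ∃ j, m j ≠ m' j := Function.ne_iff.1 hmm
      refine ⟨2*j, by omega, ?_⟩
      have h1 := hx m (2*j) (by omega)
      have h2 := hx m' (2*j) (by omega)
      rw [hcm m j] at h1
      rw [hcm m' j] at h2
      rcases Bool.eq_false_or_eq_true (m j) with hmj | hmj <;>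
        rcases Bool.eq_false_or_eq_true (m' j) with hmj' | hmj'
      · rw [hmj] at hj; rw [hmj'] at hj; exact absurd rfl hj
      · rw [hmj, hStrue] at h1; rw [hmj', hSfalse] at h2
        exact hsep _ h1 _ h2
      · rw [hmj, hSfalse] at h1; rw [hmj', hStrue] at h2
        have := hsep _ h2 _ h1
        rwa [abs_sub_comm]
      · rw [hmj] at hj; rw [hmj'] at hj; exact absurd rfl hj
    have hinj : Function.Injective x := by
      intro m m' h
      by_contra hmm
      obtain ⟨k, _, hk⟩ := hsep' m m' hmm
      rw [h] at hk
      simp at hk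
      linarith
    set s : Finset ℝ := Finset.image x Finset.univ with hsdef
    have hcard : s.card = 2^n := by
      rw [hsdef, Finset.card_image_of_injective _ hinj, Finset.card_univ]
      simp
    have hnet : IsDynNetIn f (Icc 0 1) U (2*n) (s : Set ℝ) := by
      constructor
      · intro z hz
        simp only [hsdef, Finset.coe_image, Finset.coe_univ, image_univ, mem_range] at hz
        obtain ⟨m, rfl⟩ := hz
        exact hSF _ (by simpa using hx m 0 (by omega))
      · rintro z1 hz1 z2 hz2 hne12
        simp only [hsdef, Finset.coe_image, Finset.coe_univ, image_univ, mem_range] at hz1 hz2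
        obtain ⟨m, rfl⟩ := hz1
        obtain ⟨m', rfl⟩ := hz2
        have hmm : m ≠ m' := fun h => hne12 (by rw [h])
        rw [Function.onFun, Set.disjoint_left]
        intro z hz hz'
        rw [mem_ball_dynEntourage] at hz hz'
        obtain ⟨k, hk, hkγ⟩ := hsep' m m' hmm
        have h1 := hz k hk
        have h2 := hz' k hk
        simp only [ball, mem_preimage, hUdef, mem_setOf_eq] at h1 h2
        have : |f^[k] (x m) - f^[k] (x m')| < γ := by
          have := abs_sub_le (f^[k] (x m)) (f^[k] z) (f^[k] (x m'))
          rw [Real.dist_eq] at h1 h2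
          rw [abs_sub_comm] at h2
          linarith
        linarith
    have := hnet.card_le_netMaxcard
    rw [hcard] at this
    simpa using this
  -- from cardinality to entropy
  have hpos : (0:EReal) < ((Real.log 2 / 2 : ℝ) : EReal) := by
    have := Real.log_pos (by norm_num : (1:ℝ) < 2)
    exact_mod_cast by linarith
  have hfreq : ∃ᶠ k in atTop, ((Real.log 2 / 2 : ℝ) : EReal) ≤
      ENNReal.log (netMaxcard f (Icc 0 1) U k) / (k : EReal) := by
    rw [frequently_atTop]
    intro N
    refine ⟨2*(N+1), by omega, ?_⟩
    have hk : (0:EReal) < ((2*(N+1) : ℕ) : EReal) := by exact_mod_cast by omega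
    rw [EReal.le_div_iff_mul_le hk (EReal.natCast_ne_top _)]
    have hle : ((2:ℕ∞)^(N+1) : ℝ≥0∞) ≤ ((netMaxcard f (Icc 0 1) U (2*(N+1)) : ℕ∞) : ℝ≥0∞) := by
      exact_mod_cast key (N+1)
    have hlog := ENNReal.log_monotone hle
    refine le_trans ?_ hlog
    have : ((2:ℕ∞)^(N+1) : ℝ≥0∞) = (2:ℝ≥0∞)^(N+1) := by push_cast; ring
    rw [this, ENNReal.log_pow]
    have h2 : ENNReal.log 2 = ((Real.log 2 : ℝ) : EReal) := by
      rw [show (2:ℝ≥0∞) = ENNReal.ofReal 2 by simp, ENNReal.log_ofReal_of_pos (by norm_num)]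
    rw [h2]
    rw [show ((2*(N+1) : ℕ) : EReal) = (((2*(N+1) : ℕ) : ℝ) : EReal) by norm_cast]
    rw [show ((N+1 : ℕ) : EReal) = (((N+1 : ℕ) : ℝ) : EReal) by norm_cast]
    rw [← EReal.coe_mul, ← EReal.coe_mul]
    apply EReal.coe_le_coe_iff.2
    push_cast
    apply le_of_eq
    ring
  have h1 : ((Real.log 2 / 2 : ℝ) : EReal) ≤ netEntropyEntourage f (Icc 0 1) U := by
    rw [netEntropyEntourage]
    exact le_limsup_of_frequently_le' hfreq
  exact lt_of_lt_of_le hpos (h1.trans (netEntropyEntourage_le_coverEntropy f (Icc 0 1) hU))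


/-- Construction of the horseshoe intervals for b < 1/2 and large a. -/
lemma foReL_construction {Ψ Ψinv : ℝ → ℝ}
    (hΨcont : ContinuousOn Ψ (Set.Ioo 0 1))
    (hΨanti : StrictAntiOn Ψ (Set.Ioo 0 1))
    (hΨsym : ∀ x ∈ Set.Ioo (0:ℝ) 1, Ψ (1 - x) = -Ψ x)
    (hinv1 : ∀ x ∈ Set.Ioo (0:ℝ) 1, Ψinv (Ψ x) = x)
    (hinv2 : ∀ y : ℝ, Ψinv y ∈ Set.Ioo (0:ℝ) 1 ∧ Ψ (Ψinv y) = y)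
    (hinvcont : Continuous Ψinv)
    {b a ε : ℝ} (hb0 : 0 < b) (hb2 : b < 1/2)
    (hε0 : 0 < ε) (hεb : ε < b) (hε2b : ε < 1 - 2*b)
    (ha0 : 0 < a)
    (ha1 : 2 * Ψ ε < a * (b - ε)) (ha2 : 2 * Ψ ε < a * (1 - ε - 2*b))
    (f : ℝ → ℝ) (hf : ∀ x ∈ Set.Ioo (0:ℝ) 1, f x = Ψinv (Ψ x + a * (x - b))) :
    ∃ p q δ : ℝ, 0 < δ ∧ δ ≤ ε ∧ ε < p ∧ p ≤ q ∧ q < 1 ∧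
      Icc p q ⊆ f '' Icc p q ∧ Icc δ ε ⊆ f '' Icc p q ∧ Icc p q ⊆ f '' Icc δ ε := by
  -- basic facts
  have hεI : ε ∈ Ioo (0:ℝ) 1 := ⟨hε0, by linarith⟩
  have hbI : b ∈ Ioo (0:ℝ) 1 := ⟨hb0, by linarith⟩
  have h1εI : (1-ε) ∈ Ioo (0:ℝ) 1 := ⟨by linarith, by linarith⟩
  -- order comparison from Ψ values
  have hlt : ∀ x ∈ Ioo (0:ℝ) 1, ∀ y ∈ Ioo (0:ℝ) 1, Ψ y < Ψ x → x < y := by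
    intro x hx y hy h
    by_contra hxy
    push_neg at hxy
    rcases eq_or_lt_of_le hxy with h' | h'
    · rw [h'] at h; exact lt_irrefl _ h
    · exact absurd (hΨanti hy hx h') (by linarith)
  -- values of f
  have hfval : ∀ x ∈ Ioo (0:ℝ) 1, f x ∈ Ioo (0:ℝ) 1 ∧ Ψ (f x) = Ψ x + a * (x - b) := by
    intro x hx
    rw [hf x hx]
    exact ⟨(hinv2 _).1, (hinv2 _).2⟩
  have hfb : f b = b := by
    rw [hf b hbI]
    have : Ψ b + a * (b - b) = Ψ b := by ring
    rw [this, hinv1 b hbI]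
  -- f ε > 1 - ε
  have hfε : 1 - ε < f ε := by
    obtain ⟨hm, hv⟩ := hfval ε hεI
    apply hlt _ h1εI _ hm
    rw [hv, hΨsym ε hεI]
    nlinarith
  -- δ
  set δ : ℝ := Ψinv (Ψ ε + a * b) with hδdef
  have hδI : δ ∈ Ioo (0:ℝ) 1 := (hinv2 _).1
  have hδv : Ψ δ = Ψ ε + a * b := (hinv2 _).2
  have hδε : δ < ε := by
    apply hlt _ hδI _ hεI
    rw [hδv]; nlinarith
  -- f (1-ε) < δ
  have hf1ε : f (1-ε) < δ := by
    obtain ⟨hm, hv⟩ := hfval (1-ε) h1εI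
    apply hlt _ hm _ hδI
    rw [hv, hδv, hΨsym ε hεI]
    nlinarith
  -- f δ < ε
  have hfδ : f δ < ε := by
    obtain ⟨hm, hv⟩ := hfval δ hδI
    apply hlt _ hm _ hεI
    rw [hv, hδv]
    nlinarith [hδI.1]
  -- continuity of f on compact subintervals of (0,1)
  have hfc : ∀ s t : ℝ, 0 < s → t < 1 → ContinuousOn f (Icc s t) := by
    intro s t hs ht
    have hsub : Icc s t ⊆ Ioo (0:ℝ) 1 := fun z hz => ⟨lt_of_lt_of_le hs hz.1, lt_of_le_of_lt hz.2 ht⟩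
    have : ContinuousOn (fun x => Ψinv (Ψ x + a * (x - b))) (Icc s t) := by
      apply hinvcont.comp_continuousOn
      exact ((hΨcont.mono hsub).add (by fun_prop))
    exact this.congr (fun z hz => hf z (hsub hz))
  -- the point p : f p = 1 - ε, ε < p < b
  have hp : ∃ p ∈ Ioo ε b, f p = 1 - ε := by
    have hcont : ContinuousOn f (Icc ε b) := hfc ε b hε0 hbI.2
    have := intermediate_value_Ioo' (le_of_lt hεb) hcont
    have hmem : (1-ε) ∈ Ioo (f b) (f ε) := by rw [hfb]; exact ⟨by linarith, hfε⟩
    obtain ⟨p, hp1, hp2⟩ := this hmem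
    exact ⟨p, hp1, hp2⟩
  obtain ⟨p, hpI, hfp⟩ := hp
  -- the point q : f q = δ, b < q < 1 - ε
  have hq : ∃ q ∈ Ioo b (1-ε), f q = δ := by
    have hcont : ContinuousOn f (Icc b (1-ε)) := hfc b (1-ε) hb0 h1εI.2
    have := intermediate_value_Ioo' (by linarith : b ≤ 1-ε) hcont
    have hmem : δ ∈ Ioo (f (1-ε)) (f b) := by rw [hfb]; exact ⟨hf1ε, by linarith⟩
    obtain ⟨q, hq1, hq2⟩ := this hmem
    exact ⟨q, hq1, hq2⟩
  obtain ⟨q, hqI, hfq⟩ := hq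
  refine ⟨p, q, δ, hδI.1, le_of_lt hδε, hpI.1, by linarith [hpI.2, hqI.1], by linarith [hqI.2], ?_, ?_, ?_⟩
  · -- Icc p q ⊆ f '' Icc p q
    have hcont : ContinuousOn f (Icc p q) := hfc p q (by linarith [hpI.1]) (by linarith [hqI.2])
    have := intermediate_value_Icc' (by linarith [hpI.2, hqI.1] : p ≤ q) hcont
    rw [hfq, hfp] at this
    exact fun z hz => this ⟨by linarith [hz.1, hpI.1, hδε], by linarith [hz.2, hqI.2]⟩
  · -- Icc δ ε ⊆ f '' Icc p q
    have hcont : ContinuousOn f (Icc p q) := hfc p q (by linarith [hpI.1]) (by linarith [hqI.2])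
    have := intermediate_value_Icc' (by linarith [hpI.2, hqI.1] : p ≤ q) hcont
    rw [hfq, hfp] at this
    exact fun z hz => this ⟨hz.1, by linarith [hz.2]⟩
  · -- Icc p q ⊆ f '' Icc δ ε
    have hcont : ContinuousOn f (Icc δ ε) := hfc δ ε hδI.1 hεI.2
    have := intermediate_value_Icc (le_of_lt hδε) hcont
    exact fun z hz => this ⟨by linarith [hz.1, hpI.1], by linarith [hz.2, hqI.2]⟩


theorem stmt16
    (Ψ Ψinv : ℝ → ℝ)
    (hΨcont : ContinuousOn Ψ (Set.Ioo 0 1))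
    (hΨanti : StrictAntiOn Ψ (Set.Ioo 0 1))
    (hΨbij : Set.BijOn Ψ (Set.Ioo 0 1) Set.univ)
    (hΨsym : ∀ x ∈ Set.Ioo (0:ℝ) 1, Ψ (1 - x) = -Ψ x)
    (hinv1 : ∀ x ∈ Set.Ioo (0:ℝ) 1, Ψinv (Ψ x) = x)
    (hinv2 : ∀ y : ℝ, Ψinv y ∈ Set.Ioo (0:ℝ) 1 ∧ Ψ (Ψinv y) = y)
    (b : ℝ) (hb : b ∈ Set.Ioo (0:ℝ) 1) (hbne : b ≠ 1/2) :
    ∃ A > (0:ℝ), ∀ a > A, ∀ f : ℝ → ℝ, f 0 = 0 → f 1 = 1 →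
      (∀ x ∈ Set.Ioo (0:ℝ) 1, f x = Ψinv (Ψ x + a * (x - b))) →
      0 < Dynamics.coverEntropy f (Set.Icc (0:ℝ) 1) := by
  obtain ⟨hb0, hb1⟩ := hb
  -- Ψinv is strictly antitone
  have hanti : StrictAnti Ψinv := by
    intro y1 y2 h
    rcases lt_trichotomy (Ψinv y2) (Ψinv y1) with h' | h' | h'
    · exact h'
    · exfalso
      have : y2 = y1 := by
        rw [← (hinv2 y2).2, ← (hinv2 y1).2, h']
      linarith
    · exfalso
      have := hΨanti (hinv2 y1).1 (hinv2 y2).1 h'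
      rw [(hinv2 y1).2, (hinv2 y2).2] at this
      linarith
  -- Ψinv is continuous
  have hΨinvcont : Continuous Ψinv := by
    set g : ℝ → ℝ := fun y => Ψinv (-y) with hgdef
    have hgmono : StrictMono g := fun y1 y2 h => hanti (neg_lt_neg h)
    have hgrange : Set.range g = Set.Ioo (0:ℝ) 1 := by
      ext z
      constructor
      · rintro ⟨y, rfl⟩
        exact (hinv2 _).1
      · intro hz
        refine ⟨-Ψ z, ?_⟩
        simp only [g, neg_neg]
        exact hinv1 z hz
    have hgcont : Continuous g := by
      rw [continuous_iff_continuousAt]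
      intro y
      apply StrictMonoOn.continuousAt_of_image_mem_nhds (hgmono.strictMonoOn Set.univ)
        Filter.univ_mem
      rw [Set.image_univ, hgrange]
      exact isOpen_Ioo.mem_nhds (hinv2 _).1
    have : Ψinv = fun y => g (-y) := by
      funext y
      simp [g]
    rw [this]
    exact hgcont.comp continuous_neg
  -- symmetry of Ψinv
  have hsyminv : ∀ y : ℝ, Ψinv (-y) = 1 - Ψinv y := by
    intro y
    have hm := (hinv2 y).1
    have h2 : (1 - Ψinv y) ∈ Set.Ioo (0:ℝ) 1 := ⟨by linarith [hm.2], by linarith [hm.1]⟩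
    have h1 : Ψ (1 - Ψinv y) = -y := by rw [hΨsym _ hm, (hinv2 y).2]
    calc Ψinv (-y) = Ψinv (Ψ (1 - Ψinv y)) := by rw [h1]
    _ = 1 - Ψinv y := hinv1 _ h2
  -- parameters
  set b' : ℝ := min b (1-b) with hb'def
  have hb'0 : 0 < b' := lt_min hb0 (by linarith)
  have hb'2 : b' < 1/2 := by
    rcases lt_or_gt_of_ne hbne with h | h
    · exact lt_of_le_of_lt (min_le_left _ _) h
    · exact lt_of_le_of_lt (min_le_right _ _) (by linarith)
  set ε : ℝ := min b' (1 - 2*b') / 2 with hεdef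
  have hε0 : 0 < ε := by
    have : 0 < min b' (1 - 2*b') := lt_min hb'0 (by linarith)
    positivity
  have hεb' : ε < b' := by
    have h1 : ε ≤ b' / 2 := by
      rw [hεdef]
      have := min_le_left b' (1 - 2*b')
      linarith
    linarith
  have hε2b' : ε < 1 - 2*b' := by
    have h1 : ε ≤ (1 - 2*b') / 2 := by
      rw [hεdef]
      have := min_le_right b' (1 - 2*b')
      linarith
    linarith
  set d : ℝ := min (b' - ε) (1 - ε - 2*b') with hddef
  have hd : 0 < d := lt_min (by linarith) (by linarith)
  refine ⟨max 1 ((2 * Ψ ε + 1)/d), lt_of_lt_of_le one_pos (le_max_left _ _), ?_⟩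
  intro a ha f hf0 hf1 hf
  have ha0 : 0 < a := lt_of_lt_of_le one_pos ((le_max_left _ _).trans (le_of_lt ha))
  have had : 2 * Ψ ε + 1 < a * d := by
    have h1 : (2 * Ψ ε + 1)/d < a := lt_of_le_of_lt (le_max_right _ _) ha
    have := (div_lt_iff₀ hd).1 h1
    linarith
  have ha1 : 2 * Ψ ε < a * (b' - ε) := by
    have h1 : a * d ≤ a * (b' - ε) :=
      mul_le_mul_of_nonneg_left (min_le_left _ _) (le_of_lt ha0)
    linarith
  have ha2 : 2 * Ψ ε < a * (1 - ε - 2*b') := by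
    have h1 : a * d ≤ a * (1 - ε - 2*b') :=
      mul_le_mul_of_nonneg_left (min_le_right _ _) (le_of_lt ha0)
    linarith
  rcases lt_or_gt_of_ne hbne with hblt | hbgt
  · -- case b < 1/2
    have hb'eq : b' = b := min_eq_left (by linarith)
    rw [hb'eq] at hεb' ha1 ha2
    obtain ⟨p, q, δ, h0δ, hδε, hεp, hpq, hq1, hIIc, hJIc, hIJc⟩ :=
      foReL_construction hΨcont hΨanti hΨsym hinv1 hinv2 hΨinvcont hb0 hblt hε0 hεb'
        (by linarith) ha0 ha1 ha2 f hf
    refine horseshoe_entropy (I := Set.Icc p q) (J := Set.Icc δ ε) (γ := p - ε)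
      (by linarith) ?_ ?_ ?_ ?_ ?_ hIIc hJIc hIJc
    · exact fun z hz => ⟨by linarith [hz.1], by linarith [hz.2]⟩
    · exact fun z hz => ⟨by linarith [hz.1], by linarith [hz.2]⟩
    · exact Set.nonempty_Icc.2 hpq
    · exact Set.nonempty_Icc.2 hδε
    · intro x hx y hy
      have : p - ε ≤ x - y := by
        obtain ⟨hx1, _⟩ := hx
        obtain ⟨_, hy2⟩ := hy
        linarith
      exact this.trans (le_abs_self _)
  · -- case b > 1/2
    have hb'eq : b' = 1 - b := min_eq_right (by linarith)
    set g : ℝ → ℝ := fun y => 1 - f (1 - y) with hgdef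
    have hg : ∀ x ∈ Set.Ioo (0:ℝ) 1, g x = Ψinv (Ψ x + a * (x - b')) := by
      intro x hx
      have hx' : 1 - x ∈ Set.Ioo (0:ℝ) 1 := ⟨by linarith [hx.2], by linarith [hx.1]⟩
      show 1 - f (1 - x) = _
      rw [hf _ hx', hΨsym x hx]
      have heq : -Ψ x + a * (1 - x - b) = -(Ψ x + a * (x - b')) := by
        rw [hb'eq]; ring
      rw [heq, hsyminv]
      ring
    obtain ⟨p, q, δ, h0δ, hδε, hεp, hpq, hq1, hIIc, hJIc, hIJc⟩ :=
      foReL_construction hΨcont hΨanti hΨsym hinv1 hinv2 hΨinvcont hb'0 hb'2 hε0 hεb'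
        hε2b' ha0 ha1 ha2 g hg
    have htrans : ∀ s t u v : ℝ, Set.Icc u v ⊆ g '' Set.Icc s t →
        Set.Icc (1-v) (1-u) ⊆ f '' Set.Icc (1-t) (1-s) := by
      intro s t u v h z hz
      have hzm : 1 - z ∈ Set.Icc u v := ⟨by linarith [hz.2], by linarith [hz.1]⟩
      obtain ⟨w, hw, hgw⟩ := h hzm
      refine ⟨1 - w, ⟨by linarith [hw.2], by linarith [hw.1]⟩, ?_⟩
      have : 1 - f (1 - w) = 1 - z := hgw
      linarith
    refine horseshoe_entropy (I := Set.Icc (1-q) (1-p)) (J := Set.Icc (1-ε) (1-δ))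
      (γ := p - ε) (by linarith) ?_ ?_ ?_ ?_ ?_
      (htrans p q p q hIIc) (htrans p q δ ε hJIc) (htrans δ ε p q hIJc)
    · exact fun z hz => ⟨by linarith [hz.1], by linarith [hz.2]⟩
    · exact fun z hz => ⟨by linarith [hz.1], by linarith [hz.2]⟩
    · exact Set.nonempty_Icc.2 (by linarith)
    · exact Set.nonempty_Icc.2 (by linarith)
    · intro x hx y hy
      have : p - ε ≤ y - x := by
        obtain ⟨_, hx2⟩ := hx
        obtain ⟨hy1, _⟩ := hy
        linarith
      calc p - ε ≤ y - x := this
      _ = -(x - y) := by ring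
      _ ≤ |x - y| := neg_le_abs _
end
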